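/- arXiv:2104.00838 — 6 statements merged into one kernel-verified Lean document; each statement's English description precedes it below -/
import Mathlib

section
/- Let p be a prime number and let n ≥ 1. Then for every matrix L ∈ Ψ(p-1) (i.e., every n×n matrix of nonnegative integers all of whose row sums and column sums equal p-1), the coefficient C_L of the monomial x^L in (det X)^{p-1} is nonzero. -/
/-- The coefficient `C_L` of the monomial `x^L = ∏ x_{ij}^{l_{ij}}` in `(det X)^m`,
where `X` is the `n × n` matrix of indeterminates `x_{ij}`. -/
noncomputable def coeffC (n m : ℕ) (L : Matrix (Fin n) (Fin n) ℕ) : ℤ :=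
  MvPolynomial.coeff
    (Finsupp.equivFunOnFinite.symm fun p : Fin n × Fin n => L p.1 p.2)
    ((Matrix.det (Matrix.of fun i j : Fin n =>
      (MvPolynomial.X (i, j) : MvPolynomial (Fin n × Fin n) ℤ))) ^ m)

open Matrix MvPolynomial Equiv Finset

namespace Glynn

noncomputable def rho (p : ℕ) (k : ℕ) : ZMod p := (k.factorial : ZMod p)⁻¹

noncomputable def Emat {n : ℕ} (σ : Perm (Fin n)) : (Fin n × Fin n) →₀ ℕ :=
  ∑ j : Fin n, Finsupp.single (σ j, j) 1

noncomputable def eps (p : ℕ) {n : ℕ} (σ : Perm (Fin n)) : ZMod p :=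
  ((Perm.sign σ : ℤ) : ZMod p)

noncomputable def cc (p n : ℕ) (φ : Fin n × Fin n → ℕ) : ZMod p :=
  (-1) ^ n * ∏ q, rho p (φ q)

def SS (p n : ℕ) : Finset (Fin n × Fin n → ℕ) :=
  (Fintype.piFinset fun _ => range p).filter fun φ =>
    (∀ i, ∑ j, φ (i, j) = p - 1) ∧ (∀ j, ∑ i, φ (i, j) = p - 1)

noncomputable def G (p n : ℕ) : MvPolynomial (Fin n × Fin n) (ZMod p) :=
  ∑ φ ∈ SS p n, monomial (Finsupp.equivFunOnFinite.symm φ) (cc p n φ)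

noncomputable def DX (p n : ℕ) : MvPolynomial (Fin n × Fin n) (ZMod p) :=
  det (of fun i j => X (i, j))

lemma Emat_apply {n : ℕ} (σ : Perm (Fin n)) (a b : Fin n) :
    Emat σ (a, b) = if σ b = a then 1 else 0 := by
  classical
  rw [Emat, Finsupp.finset_sum_apply]
  rw [Finset.sum_eq_single b]
  · simp [Finsupp.single_apply, Prod.ext_iff, eq_comm]
  · intro c _ hc
    simp [Finsupp.single_apply, Prod.ext_iff, hc]
  · simp

lemma Emat_injective {n : ℕ} : Function.Injective (Emat (n := n)) := by
  intro σ τ h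
  apply Equiv.ext
  intro b
  have h2 := congrArg (fun f : (Fin n × Fin n) →₀ ℕ => f (σ b, b)) h
  rw [Emat_apply, Emat_apply, if_pos rfl] at h2
  by_cases hc : τ b = σ b
  · exact hc.symm
  · rw [if_neg hc] at h2; exact absurd h2 one_ne_zero

lemma prod_X_single {n : ℕ} {p : ℕ} (s : Finset (Fin n)) (f : Fin n → Fin n × Fin n) :
    (∏ i ∈ s, (X (f i) : MvPolynomial (Fin n × Fin n) (ZMod p))) =
      monomial (∑ i ∈ s, Finsupp.single (f i) 1) 1 := by
  classical
  induction s using Finset.induction_on with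
  | empty => simp [monomial_zero']
  | @insert a s ha ih =>
      rw [Finset.prod_insert ha, Finset.sum_insert ha, ih, X,
        monomial_mul, one_mul]

lemma detX_eq (p n : ℕ) :
    DX p n = ∑ σ : Perm (Fin n), monomial (Emat σ) (eps p σ) := by
  classical
  rw [DX, det_apply]
  refine Finset.sum_congr rfl fun σ _ => ?_
  have h1 : (∏ i : Fin n, (of fun i j => (X (i, j) : MvPolynomial (Fin n × Fin n) (ZMod p))) (σ i) i)
      = monomial (Emat σ) 1 := by
    rw [Emat, ← prod_X_single]
    rfl
  rw [h1, Units.smul_def, zsmul_eq_mul, eps]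
  rw [← map_intCast (C : ZMod p →+* MvPolynomial (Fin n × Fin n) (ZMod p)), C_mul_monomial, mul_one]


lemma eps_pow (p : ℕ) [Fact p.Prime] {n : ℕ} (σ : Perm (Fin n)) :
    (eps p σ) ^ p = eps p σ := by
  rw [eps]
  rcases Int.units_eq_one_or (Perm.sign σ) with h | h <;> rw [h]
  · simp
  · push_cast
    exact neg_one_pow_char (ZMod p) p

lemma detX_pow (p n : ℕ) [Fact p.Prime] :
    DX p n ^ p = ∑ σ : Perm (Fin n), monomial (p • Emat σ) (eps p σ) := by
  rw [detX_eq, sum_pow_char]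
  refine Finset.sum_congr rfl fun σ _ => ?_
  rw [monomial_pow, eps_pow]

lemma mul_G (p n : ℕ) [Fact p.Prime] :
    DX p n * G p n = ∑ σ : Perm (Fin n), ∑ φ ∈ SS p n,
      monomial (Emat σ + Finsupp.equivFunOnFinite.symm φ) (eps p σ * cc p n φ) := by
  rw [detX_eq, G, Finset.sum_mul_sum]
  exact Finset.sum_congr rfl fun σ _ => Finset.sum_congr rfl fun φ _ => monomial_mul

lemma coeff_mul_G (p n : ℕ) [Fact p.Prime] (d : (Fin n × Fin n) →₀ ℕ) :
    coeff d (DX p n * G p n) = ∑ σ : Perm (Fin n), ∑ φ ∈ SS p n,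
      (if Emat σ + Finsupp.equivFunOnFinite.symm φ = d then eps p σ * cc p n φ else 0) := by
  classical
  rw [mul_G, coeff_sum]
  refine Finset.sum_congr rfl fun σ _ => ?_
  rw [coeff_sum]
  exact Finset.sum_congr rfl fun φ _ => coeff_monomial _ _ _

lemma coeff_pow (p n : ℕ) [Fact p.Prime] (d : (Fin n × Fin n) →₀ ℕ) :
    coeff d (DX p n ^ p) = ∑ σ : Perm (Fin n),
      (if p • Emat σ = d then eps p σ else 0) := by
  classical
  rw [detX_pow, coeff_sum]
  exact Finset.sum_congr rfl fun σ _ => coeff_monomial _ _ _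


lemma rho_zero (p : ℕ) : rho p 0 = 1 := by simp [rho]

lemma fact_ne_zero (p : ℕ) [Fact p.Prime] {k : ℕ} (h : k < p) :
    ((k.factorial : ZMod p)) ≠ 0 := by
  rw [Ne, ZMod.natCast_eq_zero_iff]
  intro hdvd
  exact absurd ((Nat.Prime.dvd_factorial (Fact.out)).mp hdvd) (not_le.mpr h)

lemma rho_ne_zero (p : ℕ) [Fact p.Prime] {k : ℕ} (h : k < p) : rho p k ≠ 0 :=
  inv_ne_zero (fact_ne_zero p h)

lemma rho_pred (p : ℕ) [Fact p.Prime] {k : ℕ} (h1 : 1 ≤ k) (h2 : k < p) :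
    rho p (k - 1) = (k : ZMod p) * rho p k := by
  have hk : (k : ZMod p) ≠ 0 := by
    rw [Ne, ZMod.natCast_eq_zero_iff]
    intro hdvd
    have := Nat.le_of_dvd (by omega) hdvd
    omega
  have hfac : (k.factorial : ZMod p) = (k : ZMod p) * ((k-1).factorial : ZMod p) := by
    rw [← Nat.cast_mul, Nat.mul_factorial_pred (by omega)]
  rw [rho, rho, hfac, mul_inv, ← mul_assoc, mul_inv_cancel₀ hk, one_mul]

lemma rho_pm1 (p : ℕ) [Fact p.Prime] : rho p (p - 1) = -1 := by
  rw [rho, ZMod.wilsons_lemma, inv_neg, inv_one]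

lemma mem_SS (p n : ℕ) (φ : Fin n × Fin n → ℕ) :
    φ ∈ SS p n ↔ (∀ q, φ q < p) ∧ (∀ i, ∑ j, φ (i, j) = p - 1) ∧
      (∀ j, ∑ i, φ (i, j) = p - 1) := by
  rw [SS, Finset.mem_filter, Fintype.mem_piFinset]
  simp [Finset.mem_range, and_assoc]

lemma Emat_row {n : ℕ} (σ : Perm (Fin n)) (i : Fin n) :
    ∑ j, Emat σ (i, j) = 1 := by
  classical
  rw [Finset.sum_eq_single (σ.symm i)]
  · rw [Emat_apply, if_pos (by simp)]
  · intro b _ hb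
    rw [Emat_apply, if_neg (fun h => hb (by rw [← h]; simp))]
  · simp

lemma Emat_col {n : ℕ} (σ : Perm (Fin n)) (j : Fin n) :
    ∑ i, Emat σ (i, j) = 1 := by
  classical
  rw [Finset.sum_eq_single (σ j)]
  · rw [Emat_apply, if_pos rfl]
  · intro a _ ha
    rw [Emat_apply, if_neg (fun h => ha h.symm)]
  · simp

/-- the coefficient identity in the trivial (non-doubly-stochastic) case. -/
lemma coeff_eq_easy (p n : ℕ) [Fact p.Prime] (d : (Fin n × Fin n) →₀ ℕ)
    (hd : ¬ ((∀ i, ∑ j, d (i, j) = p) ∧ (∀ j, ∑ i, d (i, j) = p))) :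
    coeff d (DX p n * G p n) = coeff d (DX p n ^ p) := by
  classical
  have hp1 : 1 ≤ p := (Fact.out : p.Prime).one_lt.le
  rw [coeff_mul_G, coeff_pow]
  rw [Finset.sum_eq_zero, Finset.sum_eq_zero]
  · intro σ _
    rw [if_neg]
    intro heq
    apply hd
    constructor
    · intro i
      have : ∀ j, d (i, j) = p * Emat σ (i, j) := fun j => by
        rw [← heq]; simp
      simp only [this, ← Finset.mul_sum, Emat_row, mul_one]
    · intro j
      have : ∀ i, d (i, j) = p * Emat σ (i, j) := fun i => by
        rw [← heq]; simp
      simp only [this, ← Finset.mul_sum, Emat_col, mul_one]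
  · intro σ _
    rw [Finset.sum_eq_zero]
    intro φ hφ
    rw [if_neg]
    intro heq
    obtain ⟨-, hrow, hcol⟩ := (mem_SS p n φ).mp hφ
    apply hd
    constructor
    · intro i
      have hall : ∀ j, d (i, j) = Emat σ (i, j) + φ (i, j) := fun j => by
        rw [← heq]; simp
      simp only [hall, Finset.sum_add_distrib, Emat_row, hrow]
      omega
    · intro j
      have hall : ∀ i, d (i, j) = Emat σ (i, j) + φ (i, j) := fun i => by
        rw [← heq]; simp
      simp only [hall, Finset.sum_add_distrib, Emat_col, hcol]
      omega


noncomputable def Bmat (p n : ℕ) (d : (Fin n × Fin n) →₀ ℕ) : Matrix (Fin n) (Fin n) (ZMod p) :=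
  Matrix.of fun r i => if d (r, i) = 0 then 0 else
    rho p (d (r, i) - 1) * ∏ r' ∈ Finset.univ.erase r, rho p (d (r', i))

lemma inner_sum (p n : ℕ) [Fact p.Prime] (d : (Fin n × Fin n) →₀ ℕ)
    (hd : (∀ i, ∑ j, d (i, j) = p) ∧ (∀ j, ∑ i, d (i, j) = p)) (σ : Perm (Fin n)) :
    ∑ φ ∈ SS p n, (if Emat σ + Finsupp.equivFunOnFinite.symm φ = d
        then eps p σ * cc p n φ else 0)
      = eps p σ * ((-1) ^ n * ∏ i, Bmat p n d (σ i) i) := by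
  classical
  by_cases hσ : ∀ i, d (σ i, i) ≠ 0
  · set φ₀ : Fin n × Fin n → ℕ := fun q => d q - Emat σ q with hφ₀
    have hEle : ∀ q, Emat σ q ≤ d q := by
      rintro ⟨a, b⟩
      rw [Emat_apply]
      by_cases h : σ b = a
      · rw [if_pos h, ← h]
        exact Nat.one_le_iff_ne_zero.mpr (hσ b)
      · rw [if_neg h]; exact Nat.zero_le _
    have hpt : ∀ q, Emat σ q + φ₀ q = d q := fun q => by
      have := hEle q; simp only [hφ₀]; omega
    have hadd : Emat σ + Finsupp.equivFunOnFinite.symm φ₀ = d := by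
      ext q
      have : (Emat σ + Finsupp.equivFunOnFinite.symm φ₀) q = Emat σ q + φ₀ q := rfl
      rw [this, hpt]
    have hrow0 : ∀ i, ∑ j, φ₀ (i, j) = p - 1 := by
      intro i
      have h1 : ∑ j, (Emat σ (i, j) + φ₀ (i, j)) = p := by
        simp only [hpt]; exact hd.1 i
      rw [Finset.sum_add_distrib, Emat_row] at h1
      omega
    have hcol0 : ∀ j, ∑ i, φ₀ (i, j) = p - 1 := by
      intro j
      have h1 : ∑ i, (Emat σ (i, j) + φ₀ (i, j)) = p := by
        simp only [hpt]; exact hd.2 j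
      rw [Finset.sum_add_distrib, Emat_col] at h1
      omega
    have hmem : φ₀ ∈ SS p n := by
      rw [mem_SS]
      refine ⟨fun q => ?_, hrow0, hcol0⟩
      have hle : φ₀ q ≤ ∑ j, φ₀ (q.1, j) := by
        have : φ₀ (q.1, q.2) ≤ ∑ j, φ₀ (q.1, j) :=
          Finset.single_le_sum (f := fun j => φ₀ (q.1, j))
            (fun j _ => Nat.zero_le _) (Finset.mem_univ q.2)
        simpa using this
      have := hrow0 q.1
      have hp2 : 2 ≤ p := (Fact.out : p.Prime).two_le
      omega
    rw [Finset.sum_eq_single_of_mem φ₀ hmem]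
    · rw [if_pos hadd]
      congr 1
      rw [cc]
      congr 1
      have hgrp : (∏ q : Fin n × Fin n, rho p (φ₀ q))
          = ∏ i : Fin n, ∏ r : Fin n, rho p (φ₀ (r, i)) := by
        rw [Fintype.prod_prod_type]
        exact Finset.prod_comm
      rw [hgrp]
      refine Finset.prod_congr rfl fun i _ => ?_
      have hsplit : (∏ r : Fin n, rho p (φ₀ (r, i)))
          = rho p (φ₀ (σ i, i)) * ∏ r' ∈ Finset.univ.erase (σ i), rho p (φ₀ (r', i)) :=
        (Finset.mul_prod_erase _ _ (Finset.mem_univ (σ i))).symm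
      rw [hsplit, Bmat]
      have h1 : φ₀ (σ i, i) = d (σ i, i) - 1 := by
        simp only [hφ₀, Emat_apply, eq_self_iff_true, if_true]
      have h2 : ∀ r' ∈ Finset.univ.erase (σ i), rho p (φ₀ (r', i)) = rho p (d (r', i)) := by
        intro r' hr'
        have hne : σ i ≠ r' := (Finset.mem_erase.mp hr').1.symm
        simp only [hφ₀, Emat_apply, if_neg hne]
        rw [Nat.sub_zero]
      rw [Finset.prod_congr rfl h2, h1]
      simp only [Matrix.of_apply]
      rw [if_neg (hσ i)]
    · intro φ hφ hne
      rw [if_neg]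
      intro heq
      apply hne
      funext q
      have h1 : Emat σ q + φ q = d q := by rw [← heq]; rfl
      have := hEle q
      simp only [hφ₀]
      omega
  · push_neg at hσ
    obtain ⟨i0, h0⟩ := hσ
    rw [Finset.sum_eq_zero, Finset.prod_eq_zero (Finset.mem_univ i0)]
    · ring
    · rw [Bmat]; simp only [Matrix.of_apply]; rw [if_pos h0]
    · intro φ hφ
      rw [if_neg]
      intro heq
      have h1 : Emat σ (σ i0, i0) + φ (σ i0, i0) = d (σ i0, i0) := by rw [← heq]; rfl
      rw [Emat_apply, if_pos rfl, h0] at h1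
      omega


lemma sum_eps_prod (p n : ℕ) [Fact p.Prime] (d : (Fin n × Fin n) →₀ ℕ) :
    ∑ σ : Perm (Fin n), eps p σ * ((-1) ^ n * ∏ i, Bmat p n d (σ i) i)
      = (-1) ^ n * (Bmat p n d).det := by
  rw [det_apply, Finset.mul_sum]
  refine Finset.sum_congr rfl fun σ _ => ?_
  rw [Units.smul_def, zsmul_eq_mul, eps]
  ring

lemma main_det (p n : ℕ) [Fact p.Prime] (d : (Fin n × Fin n) →₀ ℕ)
    (hd : (∀ i, ∑ j, d (i, j) = p) ∧ (∀ j, ∑ i, d (i, j) = p)) :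
    (-1) ^ n * (Bmat p n d).det
      = ∑ σ : Perm (Fin n), (if p • Emat σ = d then eps p σ else 0) := by
  classical
  have hp2 : 2 ≤ p := (Fact.out : p.Prime).two_le
  have hentry : ∀ a b, d (a, b) ≤ p := by
    intro a b
    calc d (a, b) ≤ ∑ j, d (a, j) :=
          Finset.single_le_sum (f := fun j => d (a, j))
            (fun j _ => Nat.zero_le _) (Finset.mem_univ b)
      _ = p := hd.1 a
  by_cases hex : ∃ τ : Perm (Fin n), d = p • Emat τ
  · obtain ⟨τ, hτ⟩ := hex
    have dval : ∀ a b, d (a, b) = p * (if τ b = a then 1 else 0) := by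
      intro a b
      rw [hτ, Finsupp.smul_apply, Emat_apply, smul_eq_mul]
    have hB : Bmat p n d = -(Perm.permMatrix (ZMod p) τ⁻¹) := by
      ext r i
      have hcond : (τ⁻¹ r = i) ↔ (τ i = r) := by
        constructor
        · intro hh; rw [← hh]; simp
        · intro hh; rw [← hh]; simp
      rw [Bmat]
      simp only [Matrix.of_apply, Matrix.neg_apply, Perm.permMatrix,
        PEquiv.toMatrix_apply, Equiv.toPEquiv_apply, Option.mem_def,
        Option.some.injEq]
      by_cases h : τ i = r
      · have hdr : d (r, i) = p := by rw [dval, if_pos h, mul_one]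
        rw [if_neg (by omega : ¬ d (r, i) = 0)]
        have hprod : (∏ r' ∈ Finset.univ.erase r, rho p (d (r', i))) = 1 := by
          apply Finset.prod_eq_one
          intro r' hr'
          have hz : d (r', i) = 0 := by
            rw [dval, if_neg, mul_zero]
            rw [h]; exact fun hh => (Finset.mem_erase.mp hr').1 hh.symm
          rw [hz, rho_zero]
        rw [hprod, hdr, rho_pm1, mul_one, if_pos (hcond.mpr h)]
      · have hdr : d (r, i) = 0 := by rw [dval, if_neg h, mul_zero]
        rw [if_pos hdr, if_neg (fun hh => h (hcond.mp hh)), neg_zero]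
    rw [hB, Matrix.det_neg, Matrix.det_permutation, Perm.sign_inv]
    rw [Finset.sum_eq_single_of_mem τ (Finset.mem_univ τ)]
    · rw [if_pos hτ.symm, Fintype.card_fin, eps, ← mul_assoc, ← pow_add]
      rw [Even.neg_one_pow ⟨n, rfl⟩, one_mul]
    · intro σ _ hne
      rw [if_neg]
      intro heq
      apply hne
      apply Emat_injective
      ext q
      have h1 : (p • Emat σ) q = (p • Emat τ) q := by
        rw [heq.trans hτ]
      rw [Finsupp.smul_apply, Finsupp.smul_apply, smul_eq_mul, smul_eq_mul] at h1
      exact Nat.eq_of_mul_eq_mul_left (by omega) h1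
  · rw [Finset.sum_eq_zero]
    swap
    · intro σ _
      exact if_neg fun heq => hex ⟨σ, heq.symm⟩
    suffices hdet : (Bmat p n d).det = 0 by rw [hdet, mul_zero]
    set w : Fin n → ZMod p := fun r => if ∃ i, d (r, i) = p then 0 else 1 with hw
    have hfree : ∃ r, ¬∃ i, d (r, i) = p := by
      by_contra hall
      push_neg at hall
      choose gg hgg using hall
      have hinj : Function.Injective gg := by
        intro r r' hrr
        by_contra hne
        have h1 : d (r, gg r) + d (r', gg r) ≤ ∑ i, d (i, gg r) := by
          rw [← Finset.add_sum_erase _ _ (Finset.mem_univ r)]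
          refine Nat.add_le_add_left ?_ _
          exact Finset.single_le_sum (f := fun i => d (i, gg r))
            (fun x _ => Nat.zero_le _)
            (Finset.mem_erase.mpr ⟨fun hc => hne hc.symm, Finset.mem_univ r'⟩)
        have h2 : d (r', gg r) = p := by rw [hrr]; exact hgg r'
        rw [hgg r, h2, hd.2 (gg r)] at h1
        omega
      let g : Perm (Fin n) := Equiv.ofBijective gg (Finite.injective_iff_bijective.mp hinj)
      have hgapp : ∀ a, g a = gg a := fun a => rfl
      apply hex
      refine ⟨g.symm, ?_⟩
      ext q
      obtain ⟨a, b⟩ := q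
      rw [Finsupp.smul_apply, Emat_apply, smul_eq_mul]
      by_cases h : g.symm b = a
      · rw [if_pos h, mul_one]
        have hab : gg a = b := by rw [← hgapp, ← h, g.apply_symm_apply]
        rw [← hab]
        exact hgg a
      · rw [if_neg h, mul_zero]
        have hbne : gg a ≠ b := by
          intro hc
          apply h
          rw [← hc, ← hgapp, g.symm_apply_apply]
        have h1 : d (a, gg a) + d (a, b) ≤ ∑ j, d (a, j) := by
          rw [← Finset.add_sum_erase _ _ (Finset.mem_univ (gg a))]
          refine Nat.add_le_add_left ?_ _
          exact Finset.single_le_sum (f := fun j => d (a, j))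
            (fun x _ => Nat.zero_le _)
            (Finset.mem_erase.mpr ⟨fun hc => hbne hc.symm, Finset.mem_univ b⟩)
        rw [hgg a, hd.1 a] at h1
        omega
    obtain ⟨r0, hr0⟩ := hfree
    have hw0 : w ≠ 0 := by
      intro hweq
      have := congrFun hweq r0
      rw [hw] at this
      simp only [if_neg hr0, Pi.zero_apply] at this
      exact one_ne_zero this
    have hvec : w ᵥ* (Bmat p n d) = 0 := by
      funext i
      have hvm : (w ᵥ* (Bmat p n d)) i = ∑ r, w r * Bmat p n d r i := rfl
      rw [hvm, Pi.zero_apply]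
      by_cases hc : ∃ a, d (a, i) = p
      · obtain ⟨a, ha⟩ := hc
        apply Finset.sum_eq_zero
        intro r _
        by_cases hra : r = a
        · have hwa : w a = 0 := by rw [hw]; exact if_pos ⟨i, ha⟩
          rw [hra, hwa, zero_mul]
        · have hri : d (r, i) = 0 := by
            have h1 : d (a, i) + d (r, i) ≤ ∑ x, d (x, i) := by
              rw [← Finset.add_sum_erase _ _ (Finset.mem_univ a)]
              refine Nat.add_le_add_left ?_ _
              exact Finset.single_le_sum (f := fun x => d (x, i))
                (fun x _ => Nat.zero_le _)
                (Finset.mem_erase.mpr ⟨hra, Finset.mem_univ r⟩)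
            rw [ha, hd.2 i] at h1
            omega
          rw [Bmat]
          simp only [Matrix.of_apply]
          rw [if_pos hri, mul_zero]
      · push_neg at hc
        have hlt : ∀ r, d (r, i) < p := fun r => lt_of_le_of_ne (hentry r i) (hc r)
        have hBr : ∀ r, Bmat p n d r i
            = (d (r, i) : ZMod p) * ∏ r', rho p (d (r', i)) := by
          intro r
          rw [Bmat]
          simp only [Matrix.of_apply]
          by_cases h0 : d (r, i) = 0
          · rw [if_pos h0, h0, Nat.cast_zero, zero_mul]
          · rw [if_neg h0, rho_pred p (by omega) (hlt r), mul_assoc,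
              Finset.mul_prod_erase Finset.univ (fun x => rho p (d (x, i)))
                (Finset.mem_univ r)]
        have hterm : ∀ r, w r * Bmat p n d r i
            = (d (r, i) : ZMod p) * ∏ r', rho p (d (r', i)) := by
          intro r
          rw [hBr r]
          by_cases hfr : ∃ b, d (r, b) = p
          · obtain ⟨b, hb⟩ := hfr
            have hbne : b ≠ i := fun hc2 => (hc r) (hc2 ▸ hb)
            have hri : d (r, i) = 0 := by
              have h1 : d (r, b) + d (r, i) ≤ ∑ j, d (r, j) := by
                rw [← Finset.add_sum_erase _ _ (Finset.mem_univ b)]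
                refine Nat.add_le_add_left ?_ _
                exact Finset.single_le_sum (f := fun j => d (r, j))
                  (fun x _ => Nat.zero_le _)
                  (Finset.mem_erase.mpr ⟨fun hcc => hbne hcc.symm, Finset.mem_univ i⟩)
              rw [hb, hd.1 r] at h1
              omega
            have hw1 : w r = 0 := by rw [hw]; exact if_pos ⟨b, hb⟩
            rw [hw1, hri, Nat.cast_zero, zero_mul, zero_mul]
          · have hw1 : w r = 1 := by rw [hw]; exact if_neg hfr
            rw [hw1, one_mul]
        rw [Finset.sum_congr rfl fun r _ => hterm r, ← Finset.sum_mul]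
        have : (∑ r, (d (r, i) : ZMod p)) = 0 := by
          rw [← Nat.cast_sum, hd.2 i, ZMod.natCast_self]
        rw [this, zero_mul]
    exact Matrix.exists_vecMul_eq_zero_iff.mp ⟨w, hw0, hvec⟩


lemma coeff_eq (p n : ℕ) [Fact p.Prime] (d : (Fin n × Fin n) →₀ ℕ) :
    coeff d (DX p n * G p n) = coeff d (DX p n ^ p) := by
  by_cases hd : (∀ i, ∑ j, d (i, j) = p) ∧ (∀ j, ∑ i, d (i, j) = p)
  · rw [coeff_mul_G, coeff_pow,
      Finset.sum_congr rfl (fun σ _ => inner_sum p n d hd σ),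
      sum_eps_prod, main_det p n d hd]
  · exact coeff_eq_easy p n d hd

lemma DX_ne_zero (p n : ℕ) [Fact p.Prime] : DX p n ≠ 0 := by
  classical
  intro h0
  have h1 : coeff (Emat (1 : Perm (Fin n))) (DX p n) = 1 := by
    rw [detX_eq, coeff_sum]
    rw [Finset.sum_eq_single_of_mem (1 : Perm (Fin n)) (Finset.mem_univ _)]
    · rw [coeff_monomial, if_pos rfl, eps]
      simp
    · intro σ _ hne
      rw [coeff_monomial, if_neg]
      exact fun hc => hne (Emat_injective hc)
  rw [h0] at h1
  simp at h1

lemma G_eq (p n : ℕ) [Fact p.Prime] : G p n = DX p n ^ (p - 1) := by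
  have hp1 : 1 ≤ p := (Fact.out : p.Prime).one_lt.le
  apply mul_left_cancel₀ (DX_ne_zero p n)
  have h1 : DX p n * G p n = DX p n ^ p := by
    apply MvPolynomial.ext
    intro d
    exact coeff_eq p n d
  rw [h1, ← pow_sub_one_mul (show p ≠ 0 by omega) (DX p n), mul_comm]

theorem key (p n : ℕ) [Fact p.Prime] (L : Matrix (Fin n) (Fin n) ℕ)
    (hrow : ∀ i, ∑ j, L i j = p - 1)
    (hcol : ∀ j, ∑ i, L i j = p - 1) :
    coeff (Finsupp.equivFunOnFinite.symm fun q : Fin n × Fin n => L q.1 q.2)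
      (DX p n ^ (p - 1)) ≠ 0 := by
  classical
  have hp2 : 2 ≤ p := (Fact.out : p.Prime).two_le
  set Lf : Fin n × Fin n → ℕ := fun q => L q.1 q.2 with hLf
  have hlt : ∀ q, Lf q < p := by
    intro q
    have h1 : Lf q ≤ ∑ j, L q.1 j :=
      Finset.single_le_sum (f := fun j => L q.1 j)
        (fun x _ => Nat.zero_le _) (Finset.mem_univ q.2)
    have := hrow q.1
    omega
  have hmem : Lf ∈ SS p n := by
    rw [mem_SS]
    exact ⟨hlt, fun i => hrow i, fun j => hcol j⟩
  rw [← G_eq, G, coeff_sum]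
  rw [Finset.sum_eq_single_of_mem Lf hmem]
  · rw [coeff_monomial, if_pos rfl, cc]
    apply mul_ne_zero
    · exact pow_ne_zero _ (neg_ne_zero.mpr one_ne_zero)
    · rw [Finset.prod_ne_zero_iff]
      exact fun q _ => rho_ne_zero p (hlt q)
  · intro φ _ hne
    rw [coeff_monomial, if_neg]
    intro hc
    exact hne (Finsupp.equivFunOnFinite.symm.injective hc)

end Glynn

theorem glynn_nonzero (p n : ℕ) (hp : p.Prime) (hn : 1 ≤ n)
    (L : Matrix (Fin n) (Fin n) ℕ)
    (hrow : ∀ i, ∑ j, L i j = p - 1)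
    (hcol : ∀ j, ∑ i, L i j = p - 1) :
    coeffC n (p - 1) L ≠ 0 := by
  haveI : Fact p.Prime := ⟨hp⟩
  intro h0
  apply Glynn.key p n L hrow hcol
  have hmap : MvPolynomial.coeff
      (Finsupp.equivFunOnFinite.symm fun q : Fin n × Fin n => L q.1 q.2)
      (Glynn.DX p n ^ (p - 1))
      = ((coeffC n (p - 1) L : ℤ) : ZMod p) := by
    rw [coeffC]
    have h2 := MvPolynomial.coeff_map (Int.castRingHom (ZMod p))
      ((Matrix.det (Matrix.of fun i j : Fin n =>
        (MvPolynomial.X (i, j) : MvPolynomial (Fin n × Fin n) ℤ))) ^ (p - 1))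
      (Finsupp.equivFunOnFinite.symm fun q : Fin n × Fin n => L q.1 q.2)
    simp only [Int.coe_castRingHom] at h2
    rw [← h2]
    congr 1
    rw [map_pow]
    congr 1
    rw [Glynn.DX, RingHom.map_det]
    congr 1
    ext i j
    simp [Matrix.map_apply, MvPolynomial.map_X]
  rw [hmap, h0, Int.cast_zero]
end

section
/- Let p be a prime number and let n ≥ 1. Then for every matrix L = (l_{ij}) ∈ Ψ(p-1), one has L! · C_L ≡ (-1)^n (mod p), where L! = ∏_{1≤i,j≤n} l_{ij}! and C_L is the coefficient of x^L in (det X)^{p-1}. -/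
open MvPolynomial Finset

namespace Glynn

variable {n : ℕ}

/-- matrix of indeterminates -/
noncomputable def Xmat (n : ℕ) : Matrix (Fin n) (Fin n) (MvPolynomial (Fin n × Fin n) ℤ) :=
  Matrix.of fun i j => X (i, j)

lemma pderiv_prod_zero {σ : Type*} [DecidableEq σ] (v : σ) {ι : Type*} (s : Finset ι)
    (f : ι → MvPolynomial σ ℤ) (h : ∀ i ∈ s, pderiv v (f i) = 0) :
    pderiv v (∏ i ∈ s, f i) = 0 := by
  classical
  induction s using Finset.induction_on with
  | empty => simp
  | insert a s' hx ih =>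
      rw [Finset.prod_insert hx, pderiv_mul, h a (Finset.mem_insert_self a s'),
        ih fun i hi => h i (Finset.mem_insert_of_mem hi)]
      simp

lemma sum_X_mul_pderiv_det (a b : Fin n) (hab : a ≠ b) :
    ∑ j, (X (b, j) : MvPolynomial (Fin n × Fin n) ℤ) * pderiv (a, j) (Xmat n).det = 0 := by
  classical
  have hprod : ∀ (σ : Equiv.Perm (Fin n)) (j : Fin n),
      pderiv ((a, j) : Fin n × Fin n) (∏ i, (X (σ i, i) : MvPolynomial (Fin n × Fin n) ℤ))
        = if σ j = a then ∏ i ∈ Finset.univ.erase j, (X (σ i, i) : MvPolynomial (Fin n × Fin n) ℤ)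
          else 0 := by
    intro σ j
    rw [← Finset.mul_prod_erase _ _ (Finset.mem_univ j), pderiv_mul,
      pderiv_prod_zero _ _ _ (fun i hi => by
        apply pderiv_X_of_ne
        intro hc
        exact (Finset.mem_erase.mp hi).1 (congrArg Prod.snd hc)),
      pderiv_X]
    by_cases h : σ j = a
    · rw [h]; simp
    · have : ((σ j, j) : Fin n × Fin n) ≠ (a, j) := by
        simp [Prod.ext_iff, h]
      rw [Pi.single_eq_of_ne this]
      simp [h]
  have main : ∑ j, (X (b, j) : MvPolynomial (Fin n × Fin n) ℤ) * pderiv (a, j) (Xmat n).det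
      = ((Xmat n).updateRow a ((Xmat n) b)).det := by
    rw [Matrix.det_apply, Matrix.det_apply]
    simp only [map_sum, Finset.mul_sum]
    rw [Finset.sum_comm]
    refine Finset.sum_congr rfl fun σ _ => ?_
    have hXmat : ∀ i j : Fin n, Xmat n i j = X (i, j) := fun i j => rfl
    simp only [Units.smul_def, Derivation.map_smul, mul_smul_comm, ← Finset.smul_sum]
    congr 1
    have hcond : ∀ j : Fin n, (σ j = a) = (j = σ.symm a) := by
      intro j
      simp [Equiv.apply_eq_iff_eq_symm_apply]
    simp only [hXmat, hprod, mul_ite, mul_zero, hcond]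
    rw [Finset.sum_ite_eq' Finset.univ (σ.symm a)
      (fun j => (X (b, j) : MvPolynomial (Fin n × Fin n) ℤ) * ∏ i ∈ Finset.univ.erase j, X (σ i, i))]
    simp only [Finset.mem_univ, if_true]
    rw [← Finset.mul_prod_erase (Finset.univ)
      (fun i => ((Xmat n).updateRow a ((Xmat n) b)) (σ i) i) (Finset.mem_univ (σ.symm a))]
    congr 1
    · rw [Matrix.updateRow_apply]
      simp [hXmat]
    · refine Finset.prod_congr rfl fun i hi => ?_
      rw [Matrix.updateRow_apply, if_neg, hXmat]
      intro hc
      exact (Finset.mem_erase.mp hi).1 (by rw [← hc]; simp)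
  rw [main]
  exact Matrix.det_updateRow_eq_zero hab.symm

lemma sum_X_mul_pderiv_pow (a b : Fin n) (hab : a ≠ b) (m : ℕ) :
    ∑ j, (X (b, j) : MvPolynomial (Fin n × Fin n) ℤ) * pderiv (a, j) ((Xmat n).det ^ m) = 0 := by
  classical
  set D : Derivation ℤ (MvPolynomial (Fin n × Fin n) ℤ) (MvPolynomial (Fin n × Fin n) ℤ) :=
    ∑ j, (X (b, j) : MvPolynomial (Fin n × Fin n) ℤ) • pderiv (a, j) with hD
  have happ : ∀ q, D q = ∑ j, (X (b, j) : MvPolynomial (Fin n × Fin n) ℤ) * pderiv (a, j) q := by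
    intro q
    rw [hD]
    have : ∀ (s : Finset (Fin n)), ((∑ j ∈ s, (X (b, j) : MvPolynomial (Fin n × Fin n) ℤ) • pderiv (a, j) :
        Derivation ℤ (MvPolynomial (Fin n × Fin n) ℤ) (MvPolynomial (Fin n × Fin n) ℤ)) q)
        = ∑ j ∈ s, (X (b, j) : MvPolynomial (Fin n × Fin n) ℤ) * pderiv (a, j) q := by
      intro s
      induction s using Finset.induction_on with
      | empty => simp
      | insert c s' hx ih =>
          rw [Finset.sum_insert hx, Finset.sum_insert hx, Derivation.add_apply, ih,
            Derivation.smul_apply, smul_eq_mul]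
    exact this Finset.univ
  have hDdet : D ((Xmat n).det) = 0 := by
    rw [happ]; exact sum_X_mul_pderiv_det a b hab
  have := D.leibniz_pow ((Xmat n).det) (n := m)
  rw [hDdet] at this
  rw [← happ, this]
  simp

lemma coeff_pderiv {σ' : Type*} [DecidableEq σ'] (v : σ') (q : MvPolynomial σ' ℤ) (N : σ' →₀ ℕ) :
    coeff N (pderiv v q) = ((N v : ℤ) + 1) * coeff (N + Finsupp.single v 1) q := by
  induction q using MvPolynomial.induction_on' with
  | monomial s a =>
      rw [pderiv_monomial, coeff_monomial, coeff_monomial]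
      by_cases h : s = N + Finsupp.single v 1
      · have h1 : s - Finsupp.single v 1 = N := by
          subst h; ext t; simp [Finsupp.single_apply]
        have h2 : s v = N v + 1 := by subst h; simp
        rw [if_pos h1, if_pos h, h2]
        push_cast; ring
      · rw [if_neg h]
        by_cases h3 : s v = 0
        · by_cases h4 : s - Finsupp.single v 1 = N <;> simp [h4, h3]
        · have h4 : s - Finsupp.single v 1 ≠ N := by
            intro hc
            apply h
            ext t
            have := DFunLike.congr_fun hc t
            simp only [Finsupp.coe_tsub, Pi.sub_apply, Finsupp.single_apply] at this ⊢
            by_cases ht : t = v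
            · subst ht; simp at this ⊢; omega
            · simp [ht, Ne.symm ht] at this ⊢; omega
          simp [h4]
  | add p q hp hq => rw [map_add, coeff_add, coeff_add, hp, hq]; ring

lemma rel_C (a b : Fin n) (hab : a ≠ b) (m : ℕ) (N : (Fin n × Fin n) →₀ ℕ) :
    ∑ j, (if ((b, j) : Fin n × Fin n) ∈ N.support then
      ((N (a, j) : ℤ) + 1) * coeff (N - Finsupp.single (b, j) 1 + Finsupp.single (a, j) 1)
        ((Xmat n).det ^ m) else 0) = 0 := by
  classical
  have h0 := congrArg (coeff N) (sum_X_mul_pderiv_pow a b hab m)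
  rw [MvPolynomial.coeff_sum, MvPolynomial.coeff_zero] at h0
  have hterm : ∀ j : Fin n, coeff N (X (b, j) * pderiv (a, j) ((Xmat n).det ^ m))
      = (if ((b, j) : Fin n × Fin n) ∈ N.support then
        ((N (a, j) : ℤ) + 1) * coeff (N - Finsupp.single (b, j) 1 + Finsupp.single (a, j) 1)
          ((Xmat n).det ^ m) else 0) := by
    intro j
    rw [mul_comm (X (b,j)), coeff_mul_X']
    by_cases hb : ((b, j) : Fin n × Fin n) ∈ N.support
    · rw [if_pos hb, if_pos hb, coeff_pderiv]
      congr 2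
      rw [Finsupp.tsub_apply, Finsupp.single_apply, if_neg, Nat.sub_zero]
      intro h
      exact hab (congrArg Prod.fst h).symm
    · rw [if_neg hb, if_neg hb]
  calc ∑ j : Fin n, (if ((b, j) : Fin n × Fin n) ∈ N.support then
        ((N (a, j) : ℤ) + 1) * coeff (N - Finsupp.single (b, j) 1 + Finsupp.single (a, j) 1)
          ((Xmat n).det ^ m) else 0)
      = ∑ j : Fin n, coeff N (X (b, j) * pderiv (a, j) ((Xmat n).det ^ m)) :=
        Finset.sum_congr rfl fun j _ => (hterm j).symm
    _ = 0 := h0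

noncomputable def fct (d : (Fin n × Fin n) →₀ ℕ) : ℕ := ∏ s : Fin n × Fin n, (d s).factorial

lemma fct_move {u v : Fin n × Fin n} (huv : u ≠ v) (d : (Fin n × Fin n) →₀ ℕ) (hv : 1 ≤ d v) :
    d v * fct (d - Finsupp.single v 1 + Finsupp.single u 1) = (d u + 1) * fct d := by
  classical
  set d' := d - Finsupp.single v 1 + Finsupp.single u 1 with hd'
  have happ : ∀ s, d' s = if s = u then d s + 1 else if s = v then d s - 1 else d s := by
    intro s
    rw [hd']
    simp only [Finsupp.add_apply, Finsupp.tsub_apply, Finsupp.single_apply]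
    split_ifs <;> first | omega | (exfalso; subst_vars; simp_all)
  have hvmem : v ∈ Finset.univ.erase u := Finset.mem_erase.mpr ⟨Ne.symm huv, Finset.mem_univ v⟩
  have expand : ∀ e : (Fin n × Fin n) →₀ ℕ, fct e = (e u).factorial * ((e v).factorial *
      ∏ s ∈ (Finset.univ.erase u).erase v, (e s).factorial) := by
    intro e
    rw [fct, ← Finset.mul_prod_erase Finset.univ _ (Finset.mem_univ u),
      ← Finset.mul_prod_erase _ _ hvmem]
  rw [expand, expand]
  have hP : ∏ s ∈ (Finset.univ.erase u).erase v, (d' s).factorial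
      = ∏ s ∈ (Finset.univ.erase u).erase v, (d s).factorial := by
    refine Finset.prod_congr rfl fun s hs => ?_
    have h1 := (Finset.mem_erase.mp hs).1
    have h2 := (Finset.mem_erase.mp (Finset.mem_erase.mp hs).2).1
    rw [happ, if_neg h2, if_neg h1]
  rw [hP, happ, happ, if_pos rfl, if_neg (Ne.symm huv), if_pos rfl,
    Nat.factorial_succ]
  have h2 : d v * (d v - 1).factorial = (d v).factorial := Nat.mul_factorial_pred (by omega)
  calc d v * ((d u + 1) * (d u).factorial * ((d v - 1).factorial *
        ∏ s ∈ (Finset.univ.erase u).erase v, (d s).factorial))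
      = (d u + 1) * ((d u).factorial * ((d v * (d v - 1).factorial) *
        ∏ s ∈ (Finset.univ.erase u).erase v, (d s).factorial)) := by ring
    _ = _ := by rw [h2]

lemma rel_g (a b : Fin n) (hab : a ≠ b) (m : ℕ) (N : (Fin n × Fin n) →₀ ℕ) :
    ∑ j, (N (b, j) : ℤ) * ((fct (N - Finsupp.single (b, j) 1 + Finsupp.single (a, j) 1) : ℤ)
      * coeff (N - Finsupp.single (b, j) 1 + Finsupp.single (a, j) 1) ((Xmat n).det ^ m)) = 0 := by
  classical
  have h := rel_C a b hab m N
  have hterm : ∀ j : Fin n,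
      (N (b, j) : ℤ) * ((fct (N - Finsupp.single (b, j) 1 + Finsupp.single (a, j) 1) : ℤ)
        * coeff (N - Finsupp.single (b, j) 1 + Finsupp.single (a, j) 1) ((Xmat n).det ^ m))
      = (fct N : ℤ) * (if ((b, j) : Fin n × Fin n) ∈ N.support then
          ((N (a, j) : ℤ) + 1) * coeff (N - Finsupp.single (b, j) 1 + Finsupp.single (a, j) 1)
            ((Xmat n).det ^ m) else 0) := by
    intro j
    by_cases hb : ((b, j) : Fin n × Fin n) ∈ N.support
    · rw [if_pos hb]
      have hv : 1 ≤ N ((b, j) : Fin n × Fin n) :=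
        Nat.one_le_iff_ne_zero.mpr (Finsupp.mem_support_iff.mp hb)
      have huv : ((a, j) : Fin n × Fin n) ≠ (b, j) := by
        intro hc; exact hab (congrArg Prod.fst hc)
      have key := fct_move huv N hv
      have keyZ : (N ((b, j) : Fin n × Fin n) : ℤ)
          * (fct (N - Finsupp.single (b, j) 1 + Finsupp.single (a, j) 1) : ℤ)
          = ((N ((a, j) : Fin n × Fin n) : ℤ) + 1) * (fct N : ℤ) := by
        exact_mod_cast congrArg (Nat.cast : ℕ → ℤ) key
      linear_combination (coeff (N - Finsupp.single (b, j) 1 + Finsupp.single (a, j) 1)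
        ((Xmat n).det ^ m)) * keyZ
    · rw [if_neg hb]
      have : N ((b, j) : Fin n × Fin n) = 0 := Finsupp.notMem_support_iff.mp hb
      rw [this]
      simp
  rw [Finset.sum_congr rfl fun j _ => hterm j, ← Finset.mul_sum, h, mul_zero]

noncomputable def diagE (n m : ℕ) : (Fin n × Fin n) →₀ ℕ :=
  Finsupp.equivFunOnFinite.symm fun s => if s.1 = s.2 then m else 0

lemma diagE_apply (m : ℕ) (s : Fin n × Fin n) : diagE n m s = if s.1 = s.2 then m else 0 := rfl

noncomputable def permE (σ : Equiv.Perm (Fin n)) : (Fin n × Fin n) →₀ ℕ :=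
  ∑ i, Finsupp.single ((σ i, i) : Fin n × Fin n) 1

lemma permE_apply (σ : Equiv.Perm (Fin n)) (s : Fin n × Fin n) :
    permE σ s = if σ s.2 = s.1 then 1 else 0 := by
  classical
  rw [permE, Finsupp.finset_sum_apply]
  rw [Finset.sum_eq_single s.2]
  · rw [Finsupp.single_apply]
    by_cases h : σ s.2 = s.1
    · rw [if_pos h, if_pos (by rw [h])]
    · rw [if_neg h, if_neg (by intro hc; exact h (congrArg Prod.fst hc))]
  · intro i _ hi
    rw [Finsupp.single_apply, if_neg (fun hc => hi (congrArg Prod.snd hc))]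
  · simp

lemma prod_X_perm (σ : Equiv.Perm (Fin n)) :
    (∏ i, (X ((σ i, i) : Fin n × Fin n) : MvPolynomial (Fin n × Fin n) ℤ))
      = monomial (permE σ) 1 := by
  classical
  rw [permE]
  induction (Finset.univ : Finset (Fin n)) using Finset.induction_on with
  | empty => simp [monomial_zero']
  | insert c s' hx ih =>
      rw [Finset.prod_insert hx, Finset.sum_insert hx, ih,
        ← pow_one (X ((σ c, c) : Fin n × Fin n) : MvPolynomial (Fin n × Fin n) ℤ),
        X_pow_eq_monomial, monomial_mul, mul_one]

lemma coeff_diag_det_pow (m : ℕ) : coeff (diagE n m) ((Xmat n).det ^ m) = 1 := by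
  classical
  induction m with
  | zero =>
      have h0 : diagE n 0 = 0 := by ext s; rw [diagE_apply]; simp
      rw [h0, pow_zero]
      simp
  | succ m ih =>
      rw [pow_succ, mul_comm]
      set q := (Xmat n).det ^ m with hq
      rw [Matrix.det_apply, Finset.sum_mul, MvPolynomial.coeff_sum]
      have hterm : ∀ σ : Equiv.Perm (Fin n),
          coeff (diagE n (m+1)) ((Equiv.Perm.sign σ • ∏ i, (Xmat n) (σ i) i) * q)
          = if σ = 1 then coeff (diagE n m) q else 0 := by
        intro σ
        have hXmat : ∀ i j : Fin n, Xmat n i j = X (i, j) := fun i j => rfl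
        simp only [hXmat]
        rw [prod_X_perm, Units.smul_def, smul_mul_assoc, MvPolynomial.coeff_smul,
          coeff_monomial_mul']
        by_cases hσ : σ = 1
        · subst hσ
          have hle : permE (1 : Equiv.Perm (Fin n)) ≤ diagE n (m+1) := by
            rw [Finsupp.le_def]
            intro s
            rw [permE_apply, diagE_apply]
            by_cases h : s.1 = s.2
            · simp [h]
            · simp [h, Ne.symm h]
          have hsub : diagE n (m+1) - permE (1 : Equiv.Perm (Fin n)) = diagE n m := by
            ext s
            rw [Finsupp.tsub_apply, permE_apply, diagE_apply, diagE_apply]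
            by_cases h : s.1 = s.2
            · simp [h]
            · simp [h, Ne.symm h]
          rw [if_pos rfl, if_pos hle, hsub, one_mul]
          simp
        · have hnle : ¬ permE σ ≤ diagE n (m+1) := by
            intro hle
            obtain ⟨i, hi⟩ : ∃ i, σ i ≠ i := by
              by_contra hc
              push_neg at hc
              exact hσ (Equiv.ext hc)
            have h1 := (Finsupp.le_def.mp hle) ((σ i, i) : Fin n × Fin n)
            rw [permE_apply, diagE_apply] at h1
            dsimp only at h1
            rw [if_pos rfl, if_neg hi] at h1
            omega
          rw [if_neg hσ, if_neg hnle, smul_zero]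
      rw [Finset.sum_congr rfl fun σ _ => hterm σ, Finset.sum_ite_eq' Finset.univ 1
        (fun _ => coeff (diagE n m) q)]
      simp [ih]


lemma adjust_apply (d : (Fin n × Fin n) →₀ ℕ) (u v s : Fin n × Fin n) :
    ((d - Finsupp.single v 1 + Finsupp.single u 1 : (Fin n × Fin n) →₀ ℕ)) s
      = d s - (if s = v then 1 else 0) + (if s = u then 1 else 0) := by
  rw [Finsupp.add_apply, Finsupp.tsub_apply, Finsupp.single_apply, Finsupp.single_apply]
  by_cases h1 : s = v
  · rw [if_pos h1.symm, if_pos h1]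
    by_cases h2 : s = u
    · rw [if_pos h2.symm, if_pos h2]
    · rw [if_neg (fun hc => h2 hc.symm), if_neg h2]
  · rw [if_neg (fun hc => h1 hc.symm), if_neg h1]
    by_cases h2 : s = u
    · rw [if_pos h2.symm, if_pos h2]
    · rw [if_neg (fun hc => h2 hc.symm), if_neg h2]

lemma sum_shift (f : Fin n → ℕ) {c c' : Fin n} (hcc : c ≠ c') (h : 1 ≤ f c') :
    ∑ x, (f x + (if x = c then 1 else 0) - (if x = c' then 1 else 0)) = ∑ x, f x := by
  classical
  rw [Finset.sum_tsub_distrib _ (fun i _ => by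
    by_cases h1 : i = c'
    · rw [if_pos h1, h1, if_neg (fun hc : c' = c => hcc hc.symm)]
      omega
    · rw [if_neg h1]
      exact Nat.zero_le _)]
  rw [Finset.sum_add_distrib, Finset.sum_ite_eq' Finset.univ c (fun _ => 1),
    Finset.sum_ite_eq' Finset.univ c' (fun _ => 1)]
  simp

lemma sum_diag_split (e : (Fin n × Fin n) →₀ ℕ) :
    (∑ s ∈ Finset.univ.filter (fun s : Fin n × Fin n => s.1 ≠ s.2), e s) + (∑ i, e (i, i))
      = ∑ s : Fin n × Fin n, e s := by
  classical
  rw [← Finset.sum_filter_add_sum_filter_not Finset.univ (fun s : Fin n × Fin n => s.1 ≠ s.2) e]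
  congr 1
  rw [Finset.sum_filter]
  rw [Fintype.sum_prod_type]
  refine (Finset.sum_congr rfl fun i _ => ?_).symm
  have : ∀ j : Fin n, (if ¬ (i : Fin n) ≠ j then e (i, j) else 0) = (if i = j then e (i, j) else 0) := by
    intro j
    by_cases h : i = j <;> simp [h]
  rw [Finset.sum_congr rfl fun j _ => this j, Finset.sum_ite_eq Finset.univ i (fun j => e (i, j))]
  simp

lemma total_eq (e : (Fin n × Fin n) →₀ ℕ) (m : ℕ) (hrow : ∀ i, ∑ j, e (i, j) = m) :
    ∑ s : Fin n × Fin n, e s = n * m := by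
  rw [Fintype.sum_prod_type, Finset.sum_congr rfl fun i _ => hrow i]
  simp [Finset.card_univ, mul_comm]


lemma filter_sum_add (T : Finset (Fin n × Fin n)) (e : (Fin n × Fin n) →₀ ℕ)
    (u : Fin n × Fin n) (c : ℕ) :
    ∑ s ∈ T, (e + Finsupp.single u c : (Fin n × Fin n) →₀ ℕ) s
      = (∑ s ∈ T, e s) + (if u ∈ T then c else 0) := by
  classical
  simp only [Finsupp.add_apply, Finsupp.single_apply]
  rw [Finset.sum_add_distrib, Finset.sum_ite_eq T u (fun _ => c)]

lemma filter_sum_sub (T : Finset (Fin n × Fin n)) (e : (Fin n × Fin n) →₀ ℕ)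
    (v : Fin n × Fin n) (h : 1 ≤ e v) :
    ∑ s ∈ T, (e - Finsupp.single v 1 : (Fin n × Fin n) →₀ ℕ) s
      = (∑ s ∈ T, e s) - (if v ∈ T then 1 else 0) := by
  classical
  simp only [Finsupp.tsub_apply, Finsupp.single_apply]
  rw [Finset.sum_tsub_distrib T (fun s _ => by
    by_cases h1 : v = s
    · rw [if_pos h1, ← h1]; exact h
    · rw [if_neg h1]; exact Nat.zero_le _)]
  rw [Finset.sum_ite_eq T v (fun _ => 1)]

lemma row_set_sum (e : (Fin n × Fin n) →₀ ℕ) (i : Fin n) :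
    ∑ s ∈ Finset.univ.filter (fun s : Fin n × Fin n => s.1 = i), e s = ∑ x, e (i, x) := by
  classical
  rw [Finset.sum_filter, Fintype.sum_prod_type]
  have hin : ∀ i' : Fin n, (∑ x, if (i' : Fin n) = i then e (i', x) else 0)
      = if i' = i then ∑ x, e (i, x) else 0 := by
    intro i'
    by_cases h : i' = i
    · subst h; simp
    · simp [h]
  rw [Finset.sum_congr rfl fun i' _ => hin i', Finset.sum_ite_eq' Finset.univ i
    (fun _ => ∑ x, e (i, x))]
  simp

lemma col_set_sum (e : (Fin n × Fin n) →₀ ℕ) (j : Fin n) :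
    ∑ s ∈ Finset.univ.filter (fun s : Fin n × Fin n => s.2 = j), e s = ∑ x, e (x, j) := by
  classical
  rw [Finset.sum_filter, Fintype.sum_prod_type]
  have hin : ∀ i' : Fin n, (∑ x, if (x : Fin n) = j then e (i', x) else 0) = e (i', j) := by
    intro i'
    rw [Finset.sum_ite_eq' Finset.univ j (fun x => e (i', x))]
    simp
  rw [Finset.sum_congr rfl fun i' _ => hin i']

lemma two_le_sum (T : Finset (Fin n × Fin n)) (e : (Fin n × Fin n) →₀ ℕ)
    {u v : Fin n × Fin n} (hu : u ∈ T) (hv : v ∈ T) (huv : u ≠ v) :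
    e u + e v ≤ ∑ s ∈ T, e s := by
  classical
  rw [← Finset.add_sum_erase T e hu]
  have hv' : v ∈ T.erase u := Finset.mem_erase.mpr ⟨fun hc => huv hc.symm, hv⟩
  have := Finset.single_le_sum (fun (s : Fin n × Fin n) (_ : s ∈ T.erase u) => Nat.zero_le (e s)) hv'
  omega


lemma main_g (p : ℕ) [hp : Fact p.Prime] (d : (Fin n × Fin n) →₀ ℕ)
    (hrow : ∀ i, ∑ j, d (i, j) = p - 1) (hcol : ∀ j, ∑ i, d (i, j) = p - 1) :
    (fct d : ZMod p) * ((coeff d ((Xmat n).det ^ (p - 1)) : ℤ) : ZMod p) = (-1) ^ n := by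
  classical
  set m := p - 1 with hm
  have hm1 : 1 ≤ m := by have := hp.out.two_le; omega
  suffices H : ∀ k (d : (Fin n × Fin n) →₀ ℕ), (∀ i, ∑ j, d (i, j) = m) →
      (∀ j, ∑ i, d (i, j) = m) →
      (∑ s ∈ Finset.univ.filter (fun s : Fin n × Fin n => s.1 ≠ s.2), d s = k) →
      (fct d : ZMod p) * ((coeff d ((Xmat n).det ^ m) : ℤ) : ZMod p) = (-1) ^ n by
    exact H _ d hrow hcol rfl
  intro k
  induction k using Nat.strong_induction_on with
  | _ k IH =>
  intro d hrow hcol hoff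
  rcases Nat.eq_zero_or_pos k with hk | hk
  · -- base case : d is diagonal
    subst hk
    have hzero : ∀ s ∈ Finset.univ.filter (fun s : Fin n × Fin n => s.1 ≠ s.2), d s = 0 :=
      (Finset.sum_eq_zero_iff).mp hoff
    have hdeq : d = diagE n m := by
      ext s
      rcases s with ⟨i, j⟩
      rw [diagE_apply]
      by_cases h : i = j
      · subst h
        simp only [if_pos rfl]
        have := hrow i
        rwa [Finset.sum_eq_single i (fun j' _ hj' => hzero (i, j')
          (Finset.mem_filter.mpr ⟨Finset.mem_univ _, fun hc => hj' hc.symm⟩)) (by simp)] at this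
      · rw [if_neg h]
        exact hzero (i, j) (Finset.mem_filter.mpr ⟨Finset.mem_univ _, h⟩)
    rw [hdeq, coeff_diag_det_pow]
    have hfct : fct (diagE n m) = (m.factorial) ^ n := by
      rw [fct, Fintype.prod_prod_type]
      have hinner : ∀ i : Fin n, (∏ j, ((diagE n m) (i, j)).factorial) = m.factorial := by
        intro i
        have hval : ∀ j : Fin n, ((diagE n m) (i, j)).factorial
            = if j = i then m.factorial else 1 := by
          intro j
          rw [diagE_apply]
          by_cases h : i = j
          · rw [if_pos h, if_pos h.symm]
          · rw [if_neg h, if_neg (fun hc : j = i => h hc.symm)]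
            exact Nat.factorial_zero
        rw [Finset.prod_congr rfl fun j _ => hval j,
          Finset.prod_ite_eq' Finset.univ i (fun _ => m.factorial)]
        simp
      rw [Finset.prod_congr rfl fun i _ => hinner i, Finset.prod_const]
      simp
    rw [hfct]
    push_cast
    rw [hm, ZMod.wilsons_lemma]
    ring
  · -- inductive step
    have hne : (∑ s ∈ Finset.univ.filter (fun s : Fin n × Fin n => s.1 ≠ s.2), d s) ≠ 0 := by
      omega
    obtain ⟨s0, hs0mem, hs0⟩ := Finset.exists_ne_zero_of_sum_ne_zero hne
    obtain ⟨a, j1⟩ := s0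
    have ha : a ≠ j1 := (Finset.mem_filter.mp hs0mem).2
    have hd1 : 1 ≤ d ((a, j1) : Fin n × Fin n) := Nat.one_le_iff_ne_zero.mpr hs0
    set N : (Fin n × Fin n) →₀ ℕ :=
      d - Finsupp.single ((a, j1) : Fin n × Fin n) 1 + Finsupp.single ((j1, j1) : Fin n × Fin n) 1
      with hN
    set E : Fin n → ((Fin n × Fin n) →₀ ℕ) := fun j =>
      N - Finsupp.single ((j1, j) : Fin n × Fin n) 1 + Finsupp.single ((a, j) : Fin n × Fin n) 1
      with hE
    -- pointwise values of N
    have hNapp : ∀ s : Fin n × Fin n, N s = d s - (if s = ((a, j1) : Fin n × Fin n) then 1 else 0)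
        + (if s = ((j1, j1) : Fin n × Fin n) then 1 else 0) := fun s => adjust_apply d _ _ s
    have hNB : N ((j1, j1) : Fin n × Fin n) = d ((j1, j1) : Fin n × Fin n) + 1 := by
      rw [hNapp, if_neg (fun hc : ((j1, j1) : Fin n × Fin n) = (a, j1) =>
        ha (congrArg Prod.fst hc).symm), if_pos rfl]
      omega
    have hNC : ∀ j : Fin n, j ≠ j1 → N ((j1, j) : Fin n × Fin n) = d ((j1, j) : Fin n × Fin n) := by
      intro j hj
      rw [hNapp, if_neg (fun hc : ((j1, j) : Fin n × Fin n) = (a, j1) =>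
          ha (congrArg Prod.fst hc).symm),
        if_neg (fun hc : ((j1, j) : Fin n × Fin n) = (j1, j1) => hj (congrArg Prod.snd hc))]
      omega
    -- generic sums over a finset of pairs
    have hSN : ∀ T : Finset (Fin n × Fin n), ∑ s ∈ T, N s
        = (∑ s ∈ T, d s) - (if ((a, j1) : Fin n × Fin n) ∈ T then 1 else 0)
          + (if ((j1, j1) : Fin n × Fin n) ∈ T then 1 else 0) := by
      intro T
      rw [hN, filter_sum_add, filter_sum_sub T d _ hd1]
    have hSE : ∀ j : Fin n, j ≠ j1 → 1 ≤ d ((j1, j) : Fin n × Fin n) →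
        ∀ T : Finset (Fin n × Fin n), ∑ s ∈ T, (E j) s
        = (∑ s ∈ T, d s) - (if ((a, j1) : Fin n × Fin n) ∈ T then 1 else 0)
          + (if ((j1, j1) : Fin n × Fin n) ∈ T then 1 else 0)
          - (if ((j1, j) : Fin n × Fin n) ∈ T then 1 else 0)
          + (if ((a, j) : Fin n × Fin n) ∈ T then 1 else 0) := by
      intro j hj hdj T
      rw [hE]
      rw [filter_sum_add, filter_sum_sub T N _ (by rw [hNC j hj]; exact hdj), hSN]
    have hEj1 : E j1 = d := by
      ext s
      rw [hE]
      rw [adjust_apply N _ _ s, hNapp]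
      by_cases h1 : s = ((a, j1) : Fin n × Fin n)
      · have h2 : s ≠ ((j1, j1) : Fin n × Fin n) := by
          rw [h1]; exact fun hc => ha (congrArg Prod.fst hc)
        have hds : 1 ≤ d s := by rw [h1]; exact hd1
        rw [if_pos h1, if_neg h2]
        omega
      · by_cases h2 : s = ((j1, j1) : Fin n × Fin n)
        · rw [if_pos h2, if_neg h1]
          omega
        · rw [if_neg h1, if_neg h2]
          omega
    have hErow : ∀ j : Fin n, j ≠ j1 → 1 ≤ d ((j1, j) : Fin n × Fin n) →
        ∀ i, ∑ x, (E j) (i, x) = m := by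
      intro j hj hdj i
      rw [← row_set_sum (E j) i, hSE j hj hdj, row_set_sum d i, hrow i]
      simp only [Finset.mem_filter, Finset.mem_univ, true_and]
      by_cases h1 : a = i <;> by_cases h2 : j1 = i <;> simp [h1, h2] <;> omega
    have hEcol : ∀ j : Fin n, j ≠ j1 → 1 ≤ d ((j1, j) : Fin n × Fin n) →
        ∀ y, ∑ x, (E j) (x, y) = m := by
      intro j hj hdj y
      rw [← col_set_sum (E j) y, hSE j hj hdj, col_set_sum d y, hcol y]
      simp only [Finset.mem_filter, Finset.mem_univ, true_and]
      by_cases h1 : j1 = y <;> by_cases h2 : j = y <;> simp [h1, h2] <;> omega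
    have hEoff : ∀ j : Fin n, j ≠ j1 → 1 ≤ d ((j1, j) : Fin n × Fin n) →
        (∑ s ∈ Finset.univ.filter (fun s : Fin n × Fin n => s.1 ≠ s.2), (E j) s) < k := by
      intro j hj hdj
      have hmemA : ((a, j1) : Fin n × Fin n)
          ∈ Finset.univ.filter (fun s : Fin n × Fin n => s.1 ≠ s.2) :=
        Finset.mem_filter.mpr ⟨Finset.mem_univ _, ha⟩
      have hmemC : ((j1, j) : Fin n × Fin n)
          ∈ Finset.univ.filter (fun s : Fin n × Fin n => s.1 ≠ s.2) :=
        Finset.mem_filter.mpr ⟨Finset.mem_univ _, Ne.symm hj⟩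
      have hAC : ((a, j1) : Fin n × Fin n) ≠ (j1, j) := fun hc => ha (congrArg Prod.fst hc)
      have hk2 : 2 ≤ k := by
        have h2 := two_le_sum _ d hmemA hmemC hAC
        rw [hoff] at h2
        omega
      rw [hSE j hj hdj, hoff]
      rw [if_pos hmemA, if_pos hmemC,
        if_neg (fun hc : ((j1, j1) : Fin n × Fin n)
          ∈ Finset.univ.filter (fun s : Fin n × Fin n => s.1 ≠ s.2) =>
          (Finset.mem_filter.mp hc).2 rfl)]
      by_cases hDmem : ((a, j) : Fin n × Fin n)
          ∈ Finset.univ.filter (fun s : Fin n × Fin n => s.1 ≠ s.2)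
      · rw [if_pos hDmem]; omega
      · rw [if_neg hDmem]; omega
    have hIH : ∀ j : Fin n, j ≠ j1 → 1 ≤ d ((j1, j) : Fin n × Fin n) →
        (fct (E j) : ZMod p) * ((coeff (E j) ((Xmat n).det ^ m) : ℤ) : ZMod p) = (-1) ^ n := by
      intro j hj hdj
      exact IH _ (hEoff j hj hdj) (E j) (hErow j hj hdj) (hEcol j hj hdj) rfl
    have hrel := rel_g a j1 ha m N
    have hrelZ : ∑ j, (N ((j1, j) : Fin n × Fin n) : ZMod p) *
        ((fct (E j) : ZMod p) * ((coeff (E j) ((Xmat n).det ^ m) : ℤ) : ZMod p)) = 0 := by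
      have h1 := congrArg (fun z : ℤ => ((z : ZMod p))) hrel
      push_cast at h1
      exact h1
    have hsplit := Finset.add_sum_erase Finset.univ
      (fun j => (N ((j1, j) : Fin n × Fin n) : ZMod p) *
        ((fct (E j) : ZMod p) * ((coeff (E j) ((Xmat n).det ^ m) : ℤ) : ZMod p)))
      (Finset.mem_univ j1)
    rw [hrelZ] at hsplit
    beta_reduce at hsplit
    rw [hEj1, hNB] at hsplit
    have hterm2 : ∑ j ∈ Finset.univ.erase j1, (N ((j1, j) : Fin n × Fin n) : ZMod p) *
        ((fct (E j) : ZMod p) * ((coeff (E j) ((Xmat n).det ^ m) : ℤ) : ZMod p))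
        = ((∑ j ∈ Finset.univ.erase j1, d ((j1, j) : Fin n × Fin n) : ℕ) : ZMod p) * (-1) ^ n := by
      have hterm : ∀ j ∈ Finset.univ.erase j1,
          (N ((j1, j) : Fin n × Fin n) : ZMod p) *
            ((fct (E j) : ZMod p) * ((coeff (E j) ((Xmat n).det ^ m) : ℤ) : ZMod p))
          = (d ((j1, j) : Fin n × Fin n) : ZMod p) * (-1) ^ n := by
        intro j hjmem
        have hj : j ≠ j1 := (Finset.mem_erase.mp hjmem).1
        rw [hNC j hj]
        by_cases hdj : d ((j1, j) : Fin n × Fin n) = 0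
        · rw [hdj]; simp
        · rw [hIH j hj (Nat.one_le_iff_ne_zero.mpr hdj)]
      rw [Finset.sum_congr rfl hterm, ← Finset.sum_mul, Nat.cast_sum]
    rw [hterm2] at hsplit
    have hsplitrow : d ((j1, j1) : Fin n × Fin n)
        + ∑ j ∈ Finset.univ.erase j1, d ((j1, j) : Fin n × Fin n) = m := by
      have h0 := hrow j1
      rw [← Finset.add_sum_erase Finset.univ (fun j => d ((j1, j) : Fin n × Fin n))
        (Finset.mem_univ j1)] at h0
      exact h0
    have hcastp : ((d ((j1, j1) : Fin n × Fin n) + 1 : ℕ) : ZMod p)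
        + ((∑ j ∈ Finset.univ.erase j1, d ((j1, j) : Fin n × Fin n) : ℕ) : ZMod p) = 0 := by
      rw [← Nat.cast_add, show d ((j1, j1) : Fin n × Fin n) + 1
        + ∑ j ∈ Finset.univ.erase j1, d ((j1, j) : Fin n × Fin n) = p by omega]
      exact ZMod.natCast_self p
    have key : ((d ((j1, j1) : Fin n × Fin n) + 1 : ℕ) : ZMod p) *
        ((fct d : ZMod p) * ((coeff d ((Xmat n).det ^ m) : ℤ) : ZMod p) - (-1) ^ n) = 0 := by
      push_cast at hsplit hcastp ⊢
      linear_combination hsplit - (-1 : ZMod p) ^ n * hcastp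
    have hble : d ((j1, j1) : Fin n × Fin n) + 1 ≤ m := by
      have hmemA : ((a, j1) : Fin n × Fin n)
          ∈ Finset.univ.filter (fun s : Fin n × Fin n => s.2 = j1) := by simp
      have hmemB : ((j1, j1) : Fin n × Fin n)
          ∈ Finset.univ.filter (fun s : Fin n × Fin n => s.2 = j1) := by simp
      have hAB : ((a, j1) : Fin n × Fin n) ≠ (j1, j1) := fun hc => ha (congrArg Prod.fst hc)
      have h2 := two_le_sum _ d hmemA hmemB hAB
      rw [col_set_sum d j1, hcol j1] at h2
      omega
    have hc0 : ((d ((j1, j1) : Fin n × Fin n) + 1 : ℕ) : ZMod p) ≠ 0 := by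
      rw [Ne, ZMod.natCast_eq_zero_iff]
      intro hdvd
      have hple := Nat.le_of_dvd (by omega) hdvd
      omega
    rcases mul_eq_zero.mp key with h | h
    · exact absurd h hc0
    · exact sub_eq_zero.mp h


end Glynn

theorem glynn_congruence (p n : ℕ) (hp : p.Prime) (hn : 1 ≤ n)
    (L : Matrix (Fin n) (Fin n) ℕ)
    (hrow : ∀ i, ∑ j, L i j = p - 1)
    (hcol : ∀ j, ∑ i, L i j = p - 1) :
    ((∏ i, ∏ j, (L i j).factorial : ℕ) : ℤ) * coeffC n (p - 1) L
      ≡ (-1) ^ n [ZMOD p] := by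
  haveI : Fact p.Prime := ⟨hp⟩
  set d : (Fin n × Fin n) →₀ ℕ :=
    Finsupp.equivFunOnFinite.symm (fun s : Fin n × Fin n => L s.1 s.2) with hd
  have h1 : coeffC n (p - 1) L = MvPolynomial.coeff d ((Glynn.Xmat n).det ^ (p - 1)) := rfl
  have h2 : (∏ i, ∏ j, (L i j).factorial) = Glynn.fct d := by
    rw [Glynn.fct, Fintype.prod_prod_type]
    rfl
  have hrow' : ∀ i, ∑ j, d (i, j) = p - 1 := fun i => hrow i
  have hcol' : ∀ j, ∑ i, d (i, j) = p - 1 := fun j => hcol j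
  have hmain := Glynn.main_g (n := n) p d hrow' hcol'
  rw [← ZMod.intCast_eq_intCast_iff, Int.cast_mul, Int.cast_pow, Int.cast_neg, Int.cast_one,
    h1, h2, Int.cast_natCast]
  exact hmain
end

section
/- Let n ≥ 3 and let m be a natural number (m ≥ 1) such that there is no prime p with m = p - 1 (equivalently, m + 1 is not prime). Then there exists a matrix L ∈ Ψ(m) with C_L = 0, i.e., the coefficient of the monomial x^L in (det X)^m vanishes. -/
namespace ZC
open Equiv Finset MvPolynomial

variable {N : ℕ}

def z0 : Fin (N+3) := ⟨0, by omega⟩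
def z1 : Fin (N+3) := ⟨1, by omega⟩
def z2 : Fin (N+3) := ⟨2, by omega⟩

@[simp] lemma z0_ne_z1 : (z0 : Fin (N+3)) ≠ z1 := by simp [z0, z1, Fin.ext_iff]
@[simp] lemma z0_ne_z2 : (z0 : Fin (N+3)) ≠ z2 := by simp [z0, z2, Fin.ext_iff]
@[simp] lemma z1_ne_z2 : (z1 : Fin (N+3)) ≠ z2 := by simp [z1, z2, Fin.ext_iff]
@[simp] lemma z1_ne_z0 : (z1 : Fin (N+3)) ≠ z0 := by simp [z0, z1, Fin.ext_iff]
@[simp] lemma z2_ne_z0 : (z2 : Fin (N+3)) ≠ z0 := by simp [z0, z2, Fin.ext_iff]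
@[simp] lemma z2_ne_z1 : (z2 : Fin (N+3)) ≠ z1 := by simp [z1, z2, Fin.ext_iff]

def pt0 : Perm (Fin (N+3)) := Equiv.swap z1 z2
def pt1 : Perm (Fin (N+3)) := Equiv.swap z0 z2
def pt2 : Perm (Fin (N+3)) := Equiv.swap z0 z1
def pr1 : Perm (Fin (N+3)) := pt1 * pt2
def pr2 : Perm (Fin (N+3)) := pt2 * pt1

@[simp] lemma pt0_z0 : (pt0 : Perm (Fin (N+3))) z0 = z0 :=
  Equiv.swap_apply_of_ne_of_ne z0_ne_z1 z0_ne_z2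
@[simp] lemma pt0_z1 : (pt0 : Perm (Fin (N+3))) z1 = z2 := Equiv.swap_apply_left _ _
@[simp] lemma pt0_z2 : (pt0 : Perm (Fin (N+3))) z2 = z1 := Equiv.swap_apply_right _ _
@[simp] lemma pt1_z0 : (pt1 : Perm (Fin (N+3))) z0 = z2 := Equiv.swap_apply_left _ _
@[simp] lemma pt1_z1 : (pt1 : Perm (Fin (N+3))) z1 = z1 :=
  Equiv.swap_apply_of_ne_of_ne z1_ne_z0 z1_ne_z2
@[simp] lemma pt1_z2 : (pt1 : Perm (Fin (N+3))) z2 = z0 := Equiv.swap_apply_right _ _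
@[simp] lemma pt2_z0 : (pt2 : Perm (Fin (N+3))) z0 = z1 := Equiv.swap_apply_left _ _
@[simp] lemma pt2_z1 : (pt2 : Perm (Fin (N+3))) z1 = z0 := Equiv.swap_apply_right _ _
@[simp] lemma pt2_z2 : (pt2 : Perm (Fin (N+3))) z2 = z2 :=
  Equiv.swap_apply_of_ne_of_ne z2_ne_z0 z2_ne_z1
@[simp] lemma pr1_z0 : (pr1 : Perm (Fin (N+3))) z0 = z1 := by
  simp [pr1, Equiv.Perm.mul_apply]
@[simp] lemma pr1_z1 : (pr1 : Perm (Fin (N+3))) z1 = z2 := by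
  simp [pr1, Equiv.Perm.mul_apply]
@[simp] lemma pr1_z2 : (pr1 : Perm (Fin (N+3))) z2 = z0 := by
  simp [pr1, Equiv.Perm.mul_apply]
@[simp] lemma pr2_z0 : (pr2 : Perm (Fin (N+3))) z0 = z2 := by
  simp [pr2, Equiv.Perm.mul_apply]
@[simp] lemma pr2_z1 : (pr2 : Perm (Fin (N+3))) z1 = z0 := by
  simp [pr2, Equiv.Perm.mul_apply]
@[simp] lemma pr2_z2 : (pr2 : Perm (Fin (N+3))) z2 = z1 := by
  simp [pr2, Equiv.Perm.mul_apply]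

lemma hx_ne (x : Fin (N+3)) (hx : ¬ x.val < 3) :
    x ≠ z0 ∧ x ≠ z1 ∧ x ≠ z2 := by
  refine ⟨?_, ?_, ?_⟩ <;> (intro h; subst h; simp [z0, z1, z2] at hx)

lemma pt0_fix (x : Fin (N+3)) (hx : ¬ x.val < 3) : pt0 x = x := by
  obtain ⟨h0, h1, h2⟩ := hx_ne x hx
  exact Equiv.swap_apply_of_ne_of_ne h1 h2
lemma pt1_fix (x : Fin (N+3)) (hx : ¬ x.val < 3) : pt1 x = x := by
  obtain ⟨h0, h1, h2⟩ := hx_ne x hx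
  exact Equiv.swap_apply_of_ne_of_ne h0 h2
lemma pt2_fix (x : Fin (N+3)) (hx : ¬ x.val < 3) : pt2 x = x := by
  obtain ⟨h0, h1, h2⟩ := hx_ne x hx
  exact Equiv.swap_apply_of_ne_of_ne h0 h1
lemma pr1_fix (x : Fin (N+3)) (hx : ¬ x.val < 3) : pr1 x = x := by
  simp [pr1, Equiv.Perm.mul_apply, pt1_fix x hx, pt2_fix x hx]
lemma pr2_fix (x : Fin (N+3)) (hx : ¬ x.val < 3) : pr2 x = x := by
  simp [pr2, Equiv.Perm.mul_apply, pt1_fix x hx, pt2_fix x hx]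

@[simp] lemma one_ne_pr1 : (1 : Perm (Fin (N+3))) ≠ pr1 := by
  intro h
  have h0 := congrArg (fun e : Perm (Fin (N+3)) => e z0) h
  simp at h0
@[simp] lemma one_ne_pr1' : pr1 ≠ (1 : Perm (Fin (N+3))) := Ne.symm one_ne_pr1
@[simp] lemma one_ne_pr2 : (1 : Perm (Fin (N+3))) ≠ pr2 := by
  intro h
  have h0 := congrArg (fun e : Perm (Fin (N+3)) => e z0) h
  simp at h0
@[simp] lemma one_ne_pr2' : pr2 ≠ (1 : Perm (Fin (N+3))) := Ne.symm one_ne_pr2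
@[simp] lemma one_ne_pt0 : (1 : Perm (Fin (N+3))) ≠ pt0 := by
  intro h
  have h0 := congrArg (fun e : Perm (Fin (N+3)) => e z1) h
  simp at h0
@[simp] lemma one_ne_pt0' : pt0 ≠ (1 : Perm (Fin (N+3))) := Ne.symm one_ne_pt0
@[simp] lemma one_ne_pt1 : (1 : Perm (Fin (N+3))) ≠ pt1 := by
  intro h
  have h0 := congrArg (fun e : Perm (Fin (N+3)) => e z0) h
  simp at h0
@[simp] lemma one_ne_pt1' : pt1 ≠ (1 : Perm (Fin (N+3))) := Ne.symm one_ne_pt1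
@[simp] lemma one_ne_pt2 : (1 : Perm (Fin (N+3))) ≠ pt2 := by
  intro h
  have h0 := congrArg (fun e : Perm (Fin (N+3)) => e z0) h
  simp at h0
@[simp] lemma one_ne_pt2' : pt2 ≠ (1 : Perm (Fin (N+3))) := Ne.symm one_ne_pt2
@[simp] lemma pr1_ne_pr2 : (pr1 : Perm (Fin (N+3))) ≠ pr2 := by
  intro h
  have h0 := congrArg (fun e : Perm (Fin (N+3)) => e z0) h
  simp at h0
@[simp] lemma pr1_ne_pr2' : pr2 ≠ (pr1 : Perm (Fin (N+3))) := Ne.symm pr1_ne_pr2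
@[simp] lemma pr1_ne_pt0 : (pr1 : Perm (Fin (N+3))) ≠ pt0 := by
  intro h
  have h0 := congrArg (fun e : Perm (Fin (N+3)) => e z0) h
  simp at h0
@[simp] lemma pr1_ne_pt0' : pt0 ≠ (pr1 : Perm (Fin (N+3))) := Ne.symm pr1_ne_pt0
@[simp] lemma pr1_ne_pt1 : (pr1 : Perm (Fin (N+3))) ≠ pt1 := by
  intro h
  have h0 := congrArg (fun e : Perm (Fin (N+3)) => e z0) h
  simp at h0
@[simp] lemma pr1_ne_pt1' : pt1 ≠ (pr1 : Perm (Fin (N+3))) := Ne.symm pr1_ne_pt1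
@[simp] lemma pr1_ne_pt2 : (pr1 : Perm (Fin (N+3))) ≠ pt2 := by
  intro h
  have h0 := congrArg (fun e : Perm (Fin (N+3)) => e z1) h
  simp at h0
@[simp] lemma pr1_ne_pt2' : pt2 ≠ (pr1 : Perm (Fin (N+3))) := Ne.symm pr1_ne_pt2
@[simp] lemma pr2_ne_pt0 : (pr2 : Perm (Fin (N+3))) ≠ pt0 := by
  intro h
  have h0 := congrArg (fun e : Perm (Fin (N+3)) => e z0) h
  simp at h0
@[simp] lemma pr2_ne_pt0' : pt0 ≠ (pr2 : Perm (Fin (N+3))) := Ne.symm pr2_ne_pt0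
@[simp] lemma pr2_ne_pt1 : (pr2 : Perm (Fin (N+3))) ≠ pt1 := by
  intro h
  have h0 := congrArg (fun e : Perm (Fin (N+3)) => e z1) h
  simp at h0
@[simp] lemma pr2_ne_pt1' : pt1 ≠ (pr2 : Perm (Fin (N+3))) := Ne.symm pr2_ne_pt1
@[simp] lemma pr2_ne_pt2 : (pr2 : Perm (Fin (N+3))) ≠ pt2 := by
  intro h
  have h0 := congrArg (fun e : Perm (Fin (N+3)) => e z0) h
  simp at h0
@[simp] lemma pr2_ne_pt2' : pt2 ≠ (pr2 : Perm (Fin (N+3))) := Ne.symm pr2_ne_pt2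
@[simp] lemma pt0_ne_pt1 : (pt0 : Perm (Fin (N+3))) ≠ pt1 := by
  intro h
  have h0 := congrArg (fun e : Perm (Fin (N+3)) => e z0) h
  simp at h0
@[simp] lemma pt0_ne_pt1' : pt1 ≠ (pt0 : Perm (Fin (N+3))) := Ne.symm pt0_ne_pt1
@[simp] lemma pt0_ne_pt2 : (pt0 : Perm (Fin (N+3))) ≠ pt2 := by
  intro h
  have h0 := congrArg (fun e : Perm (Fin (N+3)) => e z0) h
  simp at h0
@[simp] lemma pt0_ne_pt2' : pt2 ≠ (pt0 : Perm (Fin (N+3))) := Ne.symm pt0_ne_pt2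
@[simp] lemma pt1_ne_pt2 : (pt1 : Perm (Fin (N+3))) ≠ pt2 := by
  intro h
  have h0 := congrArg (fun e : Perm (Fin (N+3)) => e z0) h
  simp at h0
@[simp] lemma pt1_ne_pt2' : pt2 ≠ (pt1 : Perm (Fin (N+3))) := Ne.symm pt1_ne_pt2

def sixSet : Finset (Perm (Fin (N+3))) := {1, pr1, pr2, pt0, pt1, pt2}

@[simp] lemma z0_lt : (z0 : Fin (N+3)).val < 3 := by simp [z0]
@[simp] lemma z1_lt : (z1 : Fin (N+3)).val < 3 := by simp [z1]
@[simp] lemma z2_lt : (z2 : Fin (N+3)).val < 3 := by simp [z2]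

lemma tri (y : Fin (N+3)) (hy : y.val < 3) : y = z0 ∨ y = z1 ∨ y = z2 := by
  have : y.val = 0 ∨ y.val = 1 ∨ y.val = 2 := by omega
  rcases this with h|h|h
  · exact Or.inl (Fin.ext h)
  · exact Or.inr (Or.inl (Fin.ext h))
  · exact Or.inr (Or.inr (Fin.ext h))

lemma perm_eq_of (σ τ : Perm (Fin (N+3))) (hfσ : ∀ x : Fin (N+3), ¬ x.val < 3 → σ x = x)
    (hfτ : ∀ x : Fin (N+3), ¬ x.val < 3 → τ x = x)
    (h0 : σ z0 = τ z0) (h1 : σ z1 = τ z1) (h2 : σ z2 = τ z2) : σ = τ := by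
  apply Equiv.ext
  intro x
  by_cases hx : x.val < 3
  · rcases tri x hx with rfl|rfl|rfl <;> assumption
  · rw [hfσ x hx, hfτ x hx]

lemma one_fix : ∀ x : Fin (N+3), ¬ x.val < 3 → (1 : Perm (Fin (N+3))) x = x :=
  fun _ _ => rfl

lemma mem_six (σ : Perm (Fin (N+3))) (hfix : ∀ x : Fin (N+3), ¬ x.val < 3 → σ x = x)
    (hblk : ∀ x : Fin (N+3), x.val < 3 → (σ x).val < 3) : σ ∈ sixSet := by
  have inj := σ.injective
  rcases tri (σ z0) (hblk z0 z0_lt) with h0|h0|h0 <;>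
    rcases tri (σ z1) (hblk z1 z1_lt) with h1|h1|h1 <;>
    rcases tri (σ z2) (hblk z2 z2_lt) with h2|h2|h2 <;>
    first
      | (exact absurd (inj (h1.trans h0.symm)) (by simp))
      | (exact absurd (inj (h2.trans h0.symm)) (by simp))
      | (exact absurd (inj (h2.trans h1.symm)) (by simp))
      | (refine mem_insert.2 (Or.inl (perm_eq_of σ 1 hfix one_fix ?_ ?_ ?_)) <;> simpa)
      | (refine mem_insert.2 (Or.inr (mem_insert.2 (Or.inl
            (perm_eq_of σ pr1 hfix pr1_fix ?_ ?_ ?_)))) <;> simpa)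
      | (refine mem_insert.2 (Or.inr (mem_insert.2 (Or.inr (mem_insert.2 (Or.inl
            (perm_eq_of σ pr2 hfix pr2_fix ?_ ?_ ?_)))))) <;> simpa)
      | (refine mem_insert.2 (Or.inr (mem_insert.2 (Or.inr (mem_insert.2 (Or.inr (mem_insert.2 (Or.inl
            (perm_eq_of σ pt0 hfix pt0_fix ?_ ?_ ?_)))))))) <;> simpa)
      | (refine mem_insert.2 (Or.inr (mem_insert.2 (Or.inr (mem_insert.2 (Or.inr (mem_insert.2 (Or.inr (mem_insert.2 (Or.inl
            (perm_eq_of σ pt1 hfix pt1_fix ?_ ?_ ?_)))))))))) <;> simpa)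
      | (refine mem_insert.2 (Or.inr (mem_insert.2 (Or.inr (mem_insert.2 (Or.inr (mem_insert.2 (Or.inr (mem_insert.2 (Or.inr (mem_singleton.2
            (perm_eq_of σ pt2 hfix pt2_fix ?_ ?_ ?_))))))))))) <;> simpa)


noncomputable def eP (σ : Perm (Fin (N+3))) : (Fin (N+3) × Fin (N+3)) →₀ ℕ :=
  ∑ j, Finsupp.single (σ j, j) 1

noncomputable def EE (k : Perm (Fin (N+3)) → ℕ) : (Fin (N+3) × Fin (N+3)) →₀ ℕ :=
  ∑ σ, k σ • eP σ

lemma eP_apply (σ : Perm (Fin (N+3))) (i j : Fin (N+3)) :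
    eP σ (i, j) = if σ j = i then 1 else 0 := by
  rw [eP, Finsupp.finset_sum_apply]
  rw [Finset.sum_eq_single j]
  · rw [Finsupp.single_apply]
    by_cases h : σ j = i
    · simp [h]
    · simp [h, Prod.ext_iff]
  · intro b _ hb
    rw [Finsupp.single_apply, if_neg]
    simp [Prod.ext_iff, hb]
  · simp

lemma EE_apply (k : Perm (Fin (N+3)) → ℕ) (i j : Fin (N+3)) :
    EE k (i, j) = ∑ σ : Perm (Fin (N+3)), if σ j = i then k σ else 0 := by
  rw [EE, Finsupp.finset_sum_apply]
  refine Finset.sum_congr rfl fun σ _ => ?_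
  rw [Finsupp.smul_apply, eP_apply]
  by_cases h : σ j = i <;> simp [h]

lemma EE_row (k : Perm (Fin (N+3)) → ℕ) (i : Fin (N+3)) :
    ∑ j, EE k (i, j) = ∑ σ : Perm (Fin (N+3)), k σ := by
  simp_rw [EE_apply]
  rw [Finset.sum_comm]
  refine Finset.sum_congr rfl fun σ _ => ?_
  rw [← Equiv.sum_comp σ.symm (fun x => if σ x = i then k σ else 0)]
  simp

lemma EE_col (k : Perm (Fin (N+3)) → ℕ) (j : Fin (N+3)) :
    ∑ i, EE k (i, j) = ∑ σ : Perm (Fin (N+3)), k σ := by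
  simp_rw [EE_apply]
  rw [Finset.sum_comm]
  refine Finset.sum_congr rfl fun σ _ => ?_
  simp


lemma prod_monomial {β : Type*} (s : Finset β) (d : β → ((Fin (N+3) × Fin (N+3)) →₀ ℕ))
    (c : β → ℤ) :
    (∏ b ∈ s, (MvPolynomial.monomial (d b) (c b) : MvPolynomial (Fin (N+3) × Fin (N+3)) ℤ))
      = MvPolynomial.monomial (∑ b ∈ s, d b) (∏ b ∈ s, c b) := by
  induction s using Finset.cons_induction with
  | empty => simp [MvPolynomial.monomial_zero']
  | cons a s ha ih =>
      rw [Finset.prod_cons, ih, MvPolynomial.monomial_mul, Finset.sum_cons, Finset.prod_cons]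

lemma det_pow_coeff (m : ℕ) (L : (Fin (N+3) × Fin (N+3)) →₀ ℕ) :
    MvPolynomial.coeff L
      ((Matrix.det (Matrix.of fun i j : Fin (N+3) =>
        (MvPolynomial.X (i, j) : MvPolynomial (Fin (N+3) × Fin (N+3)) ℤ))) ^ m)
    = ∑ k ∈ Finset.piAntidiag (Finset.univ : Finset (Perm (Fin (N+3)))) m,
        if EE k = L then
          (Nat.multinomial Finset.univ k : ℤ) *
            ∏ σ : Perm (Fin (N+3)), ((Equiv.Perm.sign σ : ℤ) ^ (k σ))
        else 0 := by
  have hdet : (Matrix.det (Matrix.of fun i j : Fin (N+3) =>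
        (MvPolynomial.X (i, j) : MvPolynomial (Fin (N+3) × Fin (N+3)) ℤ)))
      = ∑ σ : Perm (Fin (N+3)),
          MvPolynomial.monomial (eP σ) ((Equiv.Perm.sign σ : ℤ)) := by
    rw [Matrix.det_apply]
    refine Finset.sum_congr rfl fun σ _ => ?_
    have : (∏ i, (Matrix.of fun i j : Fin (N+3) =>
        (MvPolynomial.X (i, j) : MvPolynomial (Fin (N+3) × Fin (N+3)) ℤ)) (σ i) i)
        = MvPolynomial.monomial (eP σ) 1 := by
      rw [show (∏ i, (Matrix.of fun i j : Fin (N+3) =>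
        (MvPolynomial.X (i, j) : MvPolynomial (Fin (N+3) × Fin (N+3)) ℤ)) (σ i) i)
        = ∏ i, MvPolynomial.monomial (Finsupp.single (σ i, i) 1) 1 from
          Finset.prod_congr rfl fun i _ => by
            rw [Matrix.of_apply, ← MvPolynomial.X_pow_eq_monomial, pow_one],
        prod_monomial]
      simp [eP]
    rw [this, MvPolynomial.smul_monomial]
    congr 1
    simp [Units.smul_def]
  rw [hdet, Finset.sum_pow_eq_sum_piAntidiag, MvPolynomial.coeff_sum]
  refine Finset.sum_congr rfl fun k hk => ?_
  have hmono : (∏ σ : Perm (Fin (N+3)),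
        (MvPolynomial.monomial (eP σ) ((Equiv.Perm.sign σ : ℤ)) : MvPolynomial _ ℤ) ^ (k σ))
      = MvPolynomial.monomial (EE k) (∏ σ : Perm (Fin (N+3)), (Equiv.Perm.sign σ : ℤ) ^ (k σ)) := by
    have h1 : (∏ σ : Perm (Fin (N+3)),
        (MvPolynomial.monomial (eP σ) ((Equiv.Perm.sign σ : ℤ)) : MvPolynomial _ ℤ) ^ (k σ))
        = ∏ σ : Perm (Fin (N+3)),
          (MvPolynomial.monomial (k σ • eP σ) ((Equiv.Perm.sign σ : ℤ) ^ (k σ)) : MvPolynomial _ ℤ) :=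
      Finset.prod_congr rfl fun σ _ => MvPolynomial.monomial_pow
    rw [h1, prod_monomial]
    rfl
  rw [hmono]
  rw [show ((Nat.multinomial Finset.univ k : ℕ) : MvPolynomial (Fin (N+3) × Fin (N+3)) ℤ)
      = MvPolynomial.C ((Nat.multinomial Finset.univ k : ℕ) : ℤ) from (map_natCast MvPolynomial.C _).symm,
    MvPolynomial.C_mul_monomial, MvPolynomial.coeff_monomial]



def v0 (p q : ℕ) : Perm (Fin (N+3)) → ℕ := fun σ =>
  if σ = pr1 then p else if σ = pr2 then q else if σ = pt0 then 1
    else if σ = pt1 then p*q+p+q+1 else if σ = pt2 then 1 else 0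

def v1 (p q : ℕ) : Perm (Fin (N+3)) → ℕ := fun σ =>
  if σ = 1 then 1 else if σ = pr1 then p+1 else if σ = pr2 then q+1
    else if σ = pt1 then p*q+p+q else 0

variable {p q : ℕ}

@[simp] lemma v0_one : v0 (N := N) p q 1 = 0 := by simp [v0]
@[simp] lemma v0_pr1 : v0 (N := N) p q pr1 = p := by simp [v0]
@[simp] lemma v0_pr2 : v0 (N := N) p q pr2 = q := by simp [v0]
@[simp] lemma v0_pt0 : v0 (N := N) p q pt0 = 1 := by simp [v0]
@[simp] lemma v0_pt1 : v0 (N := N) p q pt1 = p*q+p+q+1 := by simp [v0]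
@[simp] lemma v0_pt2 : v0 (N := N) p q pt2 = 1 := by simp [v0]
@[simp] lemma v1_one : v1 (N := N) p q 1 = 1 := by simp [v1]
@[simp] lemma v1_pr1 : v1 (N := N) p q pr1 = p+1 := by simp [v1]
@[simp] lemma v1_pr2 : v1 (N := N) p q pr2 = q+1 := by simp [v1]
@[simp] lemma v1_pt0 : v1 (N := N) p q pt0 = 0 := by simp [v1]
@[simp] lemma v1_pt1 : v1 (N := N) p q pt1 = p*q+p+q := by simp [v1]
@[simp] lemma v1_pt2 : v1 (N := N) p q pt2 = 0 := by simp [v1]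

lemma not_mem_sixSet {σ : Perm (Fin (N+3))} (h : σ ∉ sixSet) :
    σ ≠ 1 ∧ σ ≠ pr1 ∧ σ ≠ pr2 ∧ σ ≠ pt0 ∧ σ ≠ pt1 ∧ σ ≠ pt2 := by
  simp only [sixSet, Finset.mem_insert, Finset.mem_singleton, not_or] at h
  exact h

lemma v0_off {σ : Perm (Fin (N+3))} (h : σ ∉ sixSet) : v0 p q σ = 0 := by
  obtain ⟨h1, h2, h3, h4, h5, h6⟩ := not_mem_sixSet h
  simp [v0, h1, h2, h3, h4, h5, h6]

lemma v1_off {σ : Perm (Fin (N+3))} (h : σ ∉ sixSet) : v1 p q σ = 0 := by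
  obtain ⟨h1, h2, h3, h4, h5, h6⟩ := not_mem_sixSet h
  simp [v1, h1, h2, h3, h4, h5, h6]

lemma sum_sixSet {M : Type*} [AddCommMonoid M] (g : Perm (Fin (N+3)) → M) :
    ∑ σ ∈ sixSet, g σ = g 1 + (g pr1 + (g pr2 + (g pt0 + (g pt1 + g pt2)))) := by
  rw [sixSet, Finset.sum_insert (by simp), Finset.sum_insert (by simp),
    Finset.sum_insert (by simp), Finset.sum_insert (by simp), Finset.sum_insert (by simp),
    Finset.sum_singleton]

lemma prod_sixSet {M : Type*} [CommMonoid M] (g : Perm (Fin (N+3)) → M) :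
    ∏ σ ∈ sixSet, g σ = g 1 * (g pr1 * (g pr2 * (g pt0 * (g pt1 * g pt2)))) := by
  rw [sixSet, Finset.prod_insert (by simp), Finset.prod_insert (by simp),
    Finset.prod_insert (by simp), Finset.prod_insert (by simp), Finset.prod_insert (by simp),
    Finset.prod_singleton]

lemma sum_univ_six {M : Type*} [AddCommMonoid M] (g : Perm (Fin (N+3)) → M)
    (hoff : ∀ σ ∉ sixSet, g σ = 0) :
    ∑ σ : Perm (Fin (N+3)), g σ = g 1 + (g pr1 + (g pr2 + (g pt0 + (g pt1 + g pt2)))) := by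
  rw [← Finset.sum_subset (Finset.subset_univ sixSet) (fun x _ hx => hoff x hx), sum_sixSet]

lemma prod_univ_six {M : Type*} [CommMonoid M] (g : Perm (Fin (N+3)) → M)
    (hoff : ∀ σ ∉ sixSet, g σ = 1) :
    ∏ σ : Perm (Fin (N+3)), g σ = g 1 * (g pr1 * (g pr2 * (g pt0 * (g pt1 * g pt2)))) := by
  rw [← Finset.prod_subset (Finset.subset_univ sixSet) (fun x _ hx => hoff x hx), prod_sixSet]


lemma sum_v0 : ∑ σ : Perm (Fin (N+3)), v0 p q σ = p*q+2*p+2*q+3 := by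
  rw [sum_univ_six _ (fun σ h => v0_off h)]
  simp; ring

lemma sum_v1 : ∑ σ : Perm (Fin (N+3)), v1 p q σ = p*q+2*p+2*q+3 := by
  rw [sum_univ_six _ (fun σ h => v1_off h)]
  simp; ring

section EEvals

variable {k : Perm (Fin (N+3)) → ℕ} (hoff : ∀ σ ∉ sixSet (N := N), k σ = 0)

include hoff

lemma EE_z0z0 : EE k (z0, z0) = k 1 + k pt0 := by
  rw [EE_apply, sum_univ_six _ (fun σ h => by simp [hoff σ h])]
  simp

lemma EE_z1z1 : EE k (z1, z1) = k 1 + k pt1 := by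
  rw [EE_apply, sum_univ_six _ (fun σ h => by simp [hoff σ h])]
  simp

lemma EE_z2z2 : EE k (z2, z2) = k 1 + k pt2 := by
  rw [EE_apply, sum_univ_six _ (fun σ h => by simp [hoff σ h])]
  simp

lemma EE_z1z0 : EE k (z1, z0) = k pr1 + k pt2 := by
  rw [EE_apply, sum_univ_six _ (fun σ h => by simp [hoff σ h])]
  simp

lemma EE_z2z0 : EE k (z2, z0) = k pr2 + k pt1 := by
  rw [EE_apply, sum_univ_six _ (fun σ h => by simp [hoff σ h])]
  simp

lemma EE_outside_col {i j : Fin (N+3)} (hj : ¬ j.val < 3) (hij : i ≠ j) :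
    EE k (i, j) = 0 := by
  rw [EE_apply, sum_univ_six _ (fun σ h => by simp [hoff σ h])]
  rw [pt0_fix j hj, pt1_fix j hj, pt2_fix j hj, pr1_fix j hj, pr2_fix j hj]
  simp [hij.symm, Equiv.Perm.one_apply]

lemma EE_block_col {i j : Fin (N+3)} (hj : j.val < 3) (hi : ¬ i.val < 3) :
    EE k (i, j) = 0 := by
  rw [EE_apply, sum_univ_six _ (fun σ h => by simp [hoff σ h])]
  rcases tri j hj with rfl|rfl|rfl <;>
    · simp only [Equiv.Perm.one_apply, pt0_z0, pt1_z0, pt2_z0, pr1_z0, pr2_z0,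
        pt0_z1, pt1_z1, pt2_z1, pr1_z1, pr2_z1, pt0_z2, pt1_z2, pt2_z2, pr1_z2, pr2_z2]
      have h0 : z0 ≠ i := fun h => hi (h ▸ z0_lt)
      have h1 : z1 ≠ i := fun h => hi (h ▸ z1_lt)
      have h2 : z2 ≠ i := fun h => hi (h ▸ z2_lt)
      simp [h0, h1, h2]

end EEvals


@[simp] lemma sgn_pt0 : ((Equiv.Perm.sign (pt0 : Perm (Fin (N+3)))) : ℤ) = -1 := by
  rw [pt0, Equiv.Perm.sign_swap z1_ne_z2]; rfl
@[simp] lemma sgn_pt1 : ((Equiv.Perm.sign (pt1 : Perm (Fin (N+3)))) : ℤ) = -1 := by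
  rw [pt1, Equiv.Perm.sign_swap z0_ne_z2]; rfl
@[simp] lemma sgn_pt2 : ((Equiv.Perm.sign (pt2 : Perm (Fin (N+3)))) : ℤ) = -1 := by
  rw [pt2, Equiv.Perm.sign_swap z0_ne_z1]; rfl
@[simp] lemma sgn_pr1 : ((Equiv.Perm.sign (pr1 : Perm (Fin (N+3)))) : ℤ) = 1 := by
  rw [pr1, map_mul]; push_cast [sgn_pt1, sgn_pt2]
@[simp] lemma sgn_pr2 : ((Equiv.Perm.sign (pr2 : Perm (Fin (N+3)))) : ℤ) = 1 := by
  rw [pr2, map_mul]; push_cast [sgn_pt1, sgn_pt2]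

lemma prodsign {k : Perm (Fin (N+3)) → ℕ} (hoff : ∀ σ ∉ sixSet (N := N), k σ = 0) :
    ∏ σ : Perm (Fin (N+3)), ((Equiv.Perm.sign σ : ℤ) ^ (k σ))
      = (-1) ^ (k pt0 + k pt1 + k pt2) := by
  rw [prod_univ_six _ (fun σ h => by rw [hoff σ h, pow_zero])]
  simp [pow_add]
  ring


lemma multinomial_eq :
    Nat.multinomial Finset.univ (v0 (N := N) p q)
      = Nat.multinomial Finset.univ (v1 (N := N) p q) := by
  have e0 := Nat.multinomial_spec (Finset.univ : Finset (Perm (Fin (N+3)))) (v0 p q)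
  have e1 := Nat.multinomial_spec (Finset.univ : Finset (Perm (Fin (N+3)))) (v1 p q)
  rw [sum_v0] at e0
  rw [sum_v1] at e1
  have hp0 : (∏ σ : Perm (Fin (N+3)), (v0 p q σ).factorial)
      = p.factorial * q.factorial * (p*q+p+q+1).factorial := by
    rw [prod_univ_six _ (fun σ h => by rw [v0_off h]; rfl)]
    simp only [v0_one, v0_pr1, v0_pr2, v0_pt0, v0_pt1, v0_pt2,
      Nat.factorial_zero, Nat.factorial_one]
    ring
  have hp1 : (∏ σ : Perm (Fin (N+3)), (v1 p q σ).factorial)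
      = (p+1).factorial * (q+1).factorial * (p*q+p+q).factorial := by
    rw [prod_univ_six _ (fun σ h => by rw [v1_off h]; rfl)]
    simp only [v1_one, v1_pr1, v1_pr2, v1_pt0, v1_pt1, v1_pt2,
      Nat.factorial_zero, Nat.factorial_one]
    ring
  rw [hp0] at e0
  rw [hp1] at e1
  have hfac : p.factorial * q.factorial * (p*q+p+q+1).factorial
      = (p+1).factorial * (q+1).factorial * (p*q+p+q).factorial := by
    rw [Nat.factorial_succ (p*q+p+q), Nat.factorial_succ p, Nat.factorial_succ q]
    ring
  have hpos : 0 < p.factorial * q.factorial * (p*q+p+q+1).factorial :=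
    Nat.mul_pos (Nat.mul_pos p.factorial_pos q.factorial_pos) (Nat.factorial_pos _)
  apply Nat.eq_of_mul_eq_mul_left hpos
  rw [e0, hfac, e1]


lemma EE_add (f g : Perm (Fin (N+3)) → ℕ) :
    EE (fun σ => f σ + g σ) = EE f + EE g := by
  rw [EE, EE, EE, ← Finset.sum_add_distrib]
  exact Finset.sum_congr rfl fun σ _ => add_smul _ _ _

def ind0 : Perm (Fin (N+3)) → ℕ := fun σ =>
  if σ = pt0 then 1 else if σ = pt1 then 1 else if σ = pt2 then 1 else 0
def ind1 : Perm (Fin (N+3)) → ℕ := fun σ =>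
  if σ = 1 then 1 else if σ = pr1 then 1 else if σ = pr2 then 1 else 0
def vcom (p q : ℕ) : Perm (Fin (N+3)) → ℕ := fun σ =>
  if σ = pr1 then p else if σ = pr2 then q else if σ = pt1 then p*q+p+q else 0

lemma v0_decomp : v0 (N := N) p q = fun σ => vcom p q σ + ind0 σ := by
  funext σ
  simp only [v0, vcom, ind0]
  split_ifs <;> simp_all

lemma v1_decomp : v1 (N := N) p q = fun σ => vcom p q σ + ind1 σ := by
  funext σ
  simp only [v1, vcom, ind1]
  split_ifs <;> simp_all

lemma ind0_off {σ : Perm (Fin (N+3))} (h : σ ∉ sixSet) : ind0 σ = 0 := by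
  obtain ⟨h1, h2, h3, h4, h5, h6⟩ := not_mem_sixSet h
  simp [ind0, h4, h5, h6]

lemma ind1_off {σ : Perm (Fin (N+3))} (h : σ ∉ sixSet) : ind1 σ = 0 := by
  obtain ⟨h1, h2, h3, h4, h5, h6⟩ := not_mem_sixSet h
  simp [ind1, h1, h2, h3]

lemma EE_ind0 : EE (ind0 (N := N)) = eP pt0 + eP pt1 + eP pt2 := by
  rw [EE, sum_univ_six (fun σ => ind0 σ • eP σ) (fun σ h => by show ind0 σ • eP σ = 0; rw [ind0_off h, zero_smul])]
  have e1 : ind0 (N := N) 1 = 0 := by simp [ind0]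
  have e2 : ind0 (N := N) pr1 = 0 := by simp [ind0]
  have e3 : ind0 (N := N) pr2 = 0 := by simp [ind0]
  have e4 : ind0 (N := N) pt0 = 1 := by simp [ind0]
  have e5 : ind0 (N := N) pt1 = 1 := by simp [ind0]
  have e6 : ind0 (N := N) pt2 = 1 := by simp [ind0]
  rw [e1, e2, e3, e4, e5, e6]
  simp only [zero_smul, one_smul, zero_add]
  abel

lemma EE_ind1 : EE (ind1 (N := N)) = eP 1 + eP pr1 + eP pr2 := by
  rw [EE, sum_univ_six (fun σ => ind1 σ • eP σ) (fun σ h => by show ind1 σ • eP σ = 0; rw [ind1_off h, zero_smul])]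
  have e1 : ind1 (N := N) 1 = 1 := by simp [ind1]
  have e2 : ind1 (N := N) pr1 = 1 := by simp [ind1]
  have e3 : ind1 (N := N) pr2 = 1 := by simp [ind1]
  have e4 : ind1 (N := N) pt0 = 0 := by simp [ind1]
  have e5 : ind1 (N := N) pt1 = 0 := by simp [ind1]
  have e6 : ind1 (N := N) pt2 = 0 := by simp [ind1]
  rw [e1, e2, e3, e4, e5, e6]
  simp only [zero_smul, one_smul, add_zero]
  abel

lemma eP_rel : eP (pt0 : Perm (Fin (N+3))) + eP pt1 + eP pt2 = eP 1 + eP pr1 + eP pr2 := by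
  simp only [eP, ← Finset.sum_add_distrib]
  refine Finset.sum_congr rfl fun j _ => ?_
  by_cases hj : j.val < 3
  · rcases tri j hj with rfl|rfl|rfl <;>
      simp only [pt0_z0, pt1_z0, pt2_z0, pr1_z0, pr2_z0, pt0_z1, pt1_z1, pt2_z1, pr1_z1,
        pr2_z1, pt0_z2, pt1_z2, pt2_z2, pr1_z2, pr2_z2, Equiv.Perm.one_apply] <;> abel
  · rw [pt0_fix j hj, pt1_fix j hj, pt2_fix j hj, pr1_fix j hj, pr2_fix j hj,
      Equiv.Perm.one_apply]

lemma EE_v1_eq_v0 : EE (v1 (N := N) p q) = EE (v0 p q) := by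
  rw [v0_decomp, v1_decomp, EE_add, EE_add, EE_ind0, EE_ind1, eP_rel]


lemma v0_hoff : ∀ σ ∉ sixSet (N := N), v0 p q σ = 0 := fun _ h => v0_off h

lemma k_unique (k : Perm (Fin (N+3)) → ℕ) (hoff : ∀ σ ∉ sixSet (N := N), k σ = 0)
    (hE : EE k = EE (v0 p q)) : k = v0 p q ∨ k = v1 p q := by
  have h00 := DFunLike.congr_fun hE (z0, z0)
  rw [EE_z0z0 hoff, EE_z0z0 v0_hoff] at h00
  have h11 := DFunLike.congr_fun hE (z1, z1)
  rw [EE_z1z1 hoff, EE_z1z1 v0_hoff] at h11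
  have h22 := DFunLike.congr_fun hE (z2, z2)
  rw [EE_z2z2 hoff, EE_z2z2 v0_hoff] at h22
  have h10 := DFunLike.congr_fun hE (z1, z0)
  rw [EE_z1z0 hoff, EE_z1z0 v0_hoff] at h10
  have h20 := DFunLike.congr_fun hE (z2, z0)
  rw [EE_z2z0 hoff, EE_z2z0 v0_hoff] at h20
  simp only [v0_one, v0_pr1, v0_pr2, v0_pt0, v0_pt1, v0_pt2, zero_add, add_zero] at h00 h11 h22 h10 h20
  obtain ⟨A, hA⟩ : ∃ A, p*q = A := ⟨_, rfl⟩
  rw [hA] at h11 h20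
  have hk1 : k 1 = 0 ∨ k 1 = 1 := by omega
  rcases hk1 with h|h
  · left; funext σ
    by_cases hσ : σ ∈ sixSet
    · simp only [sixSet, Finset.mem_insert, Finset.mem_singleton] at hσ
      rcases hσ with rfl|rfl|rfl|rfl|rfl|rfl <;>
        simp only [v0_one, v0_pr1, v0_pr2, v0_pt0, v0_pt1, v0_pt2] <;>
        first | (rw [hA]; omega) | omega
    · rw [hoff σ hσ, v0_off hσ]
  · right; funext σ
    by_cases hσ : σ ∈ sixSet
    · simp only [sixSet, Finset.mem_insert, Finset.mem_singleton] at hσ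
      rcases hσ with rfl|rfl|rfl|rfl|rfl|rfl <;>
        simp only [v1_one, v1_pr1, v1_pr2, v1_pt0, v1_pt1, v1_pt2] <;>
        first | (rw [hA]; omega) | omega
    · rw [hoff σ hσ, v1_off hσ]


lemma k_off (k : Perm (Fin (N+3)) → ℕ) (hE : EE k = EE (v0 p q)) :
    ∀ σ ∉ sixSet (N := N), k σ = 0 := by
  intro σ hσ
  by_contra hk
  apply hσ
  have hge : ∀ x : Fin (N+3), k σ ≤ EE k (σ x, x) := by
    intro x
    rw [EE_apply]
    have := Finset.single_le_sum (f := fun σ' : Perm (Fin (N+3)) =>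
      if σ' x = σ x then k σ' else 0) (fun i _ => Nat.zero_le _) (Finset.mem_univ σ)
    simpa using this
  refine mem_six σ ?_ ?_
  · intro x hx
    by_contra hne
    have h0 : EE (v0 p q) (σ x, x) = 0 := EE_outside_col v0_hoff hx hne
    have := hge x
    rw [hE, h0] at this
    omega
  · intro x hx
    by_contra hne
    have h0 : EE (v0 p q) (σ x, x) = 0 := EE_block_col v0_hoff hx hne
    have := hge x
    rw [hE, h0] at this
    omega

lemma v0_ne_v1 : v0 (N := N) p q ≠ v1 p q := by
  intro h
  have := congrFun h 1
  simp at this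

lemma sum_zero (p q : ℕ) :
    (∑ k ∈ Finset.piAntidiag (Finset.univ : Finset (Perm (Fin (N+3)))) (p*q+2*p+2*q+3),
      if EE k = EE (v0 (N := N) p q) then (Nat.multinomial Finset.univ k : ℤ) *
        ∏ σ : Perm (Fin (N+3)), ((Equiv.Perm.sign σ : ℤ) ^ (k σ)) else 0) = 0 := by
  rw [← Finset.sum_filter_of_ne (p := fun k => k = v0 p q ∨ k = v1 p q)
    (fun k hk hne => ?_)]
  · have hset : (Finset.piAntidiag (Finset.univ : Finset (Perm (Fin (N+3))))
        (p*q+2*p+2*q+3)).filter (fun k => k = v0 p q ∨ k = v1 p q)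
        = {v0 p q, v1 p q} := by
      apply Finset.ext
      intro k
      simp only [Finset.mem_filter, Finset.mem_insert, Finset.mem_singleton,
        Finset.mem_piAntidiag]
      constructor
      · rintro ⟨_, h⟩; exact h
      · rintro (rfl|rfl)
        · exact ⟨⟨sum_v0, fun _ _ => Finset.mem_univ _⟩, Or.inl rfl⟩
        · exact ⟨⟨sum_v1, fun _ _ => Finset.mem_univ _⟩, Or.inr rfl⟩
    rw [hset, Finset.sum_pair v0_ne_v1]
    rw [if_pos rfl, if_pos EE_v1_eq_v0]
    rw [prodsign v0_hoff, prodsign (fun σ h => v1_off h), ← multinomial_eq]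
    simp only [v0_pt0, v0_pt1, v0_pt2, v1_pt0, v1_pt1, v1_pt2]
    have hexp : (1 + (p*q+p+q+1) + 1) = (0 + (p*q+p+q) + 0) + 3 := by ring
    rw [hexp, pow_add]
    ring
  · -- nonzero term implies k = v0 ∨ k = v1
    by_cases hE : EE k = EE (v0 p q)
    · simp only [Finset.mem_piAntidiag] at hk
      exact k_unique k (k_off k hE) hE
    · exact absurd (if_neg hE) hne

end ZC

theorem exists_zero_coeff (n m : ℕ) (hn : 3 ≤ n) (hm : 1 ≤ m)
    (h : ¬ ∃ p : ℕ, p.Prime ∧ m = p - 1) :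
    ∃ L : Matrix (Fin n) (Fin n) ℕ,
      (∀ i, ∑ j, L i j = m) ∧ (∀ j, ∑ i, L i j = m) ∧ coeffC n m L = 0 := by
  have hnp : ¬ (m+1).Prime := fun hp => h ⟨m+1, hp, by omega⟩
  obtain ⟨c, hcdvd, hc2, hclt⟩ := Nat.exists_dvd_of_not_prime2 (by omega) hnp
  obtain ⟨d, hd⟩ := hcdvd
  have hd2 : 2 ≤ d := by
    by_contra h'
    push_neg at h'
    interval_cases d <;> omega
  obtain ⟨p, rfl⟩ : ∃ p, c = p+2 := ⟨c-2, by omega⟩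
  obtain ⟨q, rfl⟩ : ∃ q, d = q+2 := ⟨d-2, by omega⟩
  have hm' : m = p*q+2*p+2*q+3 := by
    have hexp : (p+2)*(q+2) = p*q+2*p+2*q+4 := by ring
    rw [hexp] at hd
    obtain ⟨A, hA⟩ : ∃ A, p*q = A := ⟨_, rfl⟩
    rw [hA] at hd ⊢
    omega
  subst hm'
  obtain ⟨N, rfl⟩ : ∃ N, n = N+3 := ⟨n-3, by omega⟩
  refine ⟨fun i j => ZC.EE (ZC.v0 p q) (i, j), ?_, ?_, ?_⟩
  · intro i
    rw [ZC.EE_row, ZC.sum_v0]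
  · intro j
    rw [ZC.EE_col, ZC.sum_v0]
  · have hLf : (Finsupp.equivFunOnFinite.symm
        fun pr : Fin (N+3) × Fin (N+3) => ZC.EE (ZC.v0 p q) (pr.1, pr.2))
        = ZC.EE (ZC.v0 p q) := by
      have : (fun pr : Fin (N+3) × Fin (N+3) => ZC.EE (ZC.v0 p q) (pr.1, pr.2))
          = ⇑(ZC.EE (ZC.v0 p q)) := by
        funext pr
        rfl
      rw [this, Finsupp.equivFunOnFinite_symm_coe]
    unfold coeffC
    rw [hLf, ZC.det_pow_coeff, ZC.sum_zero]
end

section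
/- If n is an odd number greater than 1, then the number of even Latin squares of order n equals the number of odd Latin squares of order n: els(n) = ols(n). -/
/-- `A : Fin n → Fin n → Fin n` is a Latin square if every row and every column
is a bijection of `Fin n` (each symbol occurs exactly once in each row and column). -/
def IsLatin {n : ℕ} (A : Fin n → Fin n → Fin n) : Prop :=
  (∀ i, Function.Bijective (A i)) ∧ (∀ j, Function.Bijective fun i => A i j)

/-- The sign of a Latin square: the product of the signs of its `n` row
permutations and its `n` column permutations. -/
noncomputable def latinSign {n : ℕ} (A : Fin n → Fin n → Fin n) (h : IsLatin A) : ℤˣ :=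
  (∏ i, Equiv.Perm.sign (Equiv.ofBijective (A i) (h.1 i))) *
  (∏ j, Equiv.Perm.sign (Equiv.ofBijective (fun i => A i j) (h.2 j)))

/-- The number of even Latin squares of order `n`. -/
noncomputable def els (n : ℕ) : ℕ :=
  Nat.card {A : Fin n → Fin n → Fin n // ∃ h : IsLatin A, latinSign A h = 1}

/-- The number of odd Latin squares of order `n`. -/
noncomputable def ols (n : ℕ) : ℕ :=
  Nat.card {A : Fin n → Fin n → Fin n // ∃ h : IsLatin A, latinSign A h = -1}

section Aux

variable {n : ℕ} [NeZero n]

/-- Swap the first two rows of a square. -/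
def swapRows (A : Fin n → Fin n → Fin n) : Fin n → Fin n → Fin n :=
  fun i j => A (Equiv.swap 0 1 i) j

lemma swapRows_isLatin {A : Fin n → Fin n → Fin n} (h : IsLatin A) :
    IsLatin (swapRows A) :=
  ⟨fun i => h.1 _, fun j => (h.2 j).comp (Equiv.swap 0 1).bijective⟩

lemma swapRows_swapRows (A : Fin n → Fin n → Fin n) : swapRows (swapRows A) = A := by
  funext i j
  simp [swapRows, Equiv.swap_apply_self]

lemma latinSign_swapRows (h01 : (0 : Fin n) ≠ 1) (hodd : Odd n)
    {A : Fin n → Fin n → Fin n} (h : IsLatin A) :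
    latinSign (swapRows A) (swapRows_isLatin h) = - latinSign A h := by
  unfold latinSign
  have hrow : (∏ i, Equiv.Perm.sign
        (Equiv.ofBijective (swapRows A i) ((swapRows_isLatin h).1 i))) =
      ∏ i, Equiv.Perm.sign (Equiv.ofBijective (A i) (h.1 i)) := by
    refine Fintype.prod_equiv (Equiv.swap 0 1) _ _ fun i => ?_
    congr 1
  have hcol : ∀ j, Equiv.ofBijective (fun i => swapRows A i j) ((swapRows_isLatin h).2 j) =
      (Equiv.ofBijective (fun i => A i j) (h.2 j)) * (Equiv.swap 0 1) :=
    fun j => Equiv.ext fun x => rfl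
  have hcolprod : (∏ j, Equiv.Perm.sign
        (Equiv.ofBijective (fun i => swapRows A i j) ((swapRows_isLatin h).2 j))) =
      ∏ j : Fin n, (Equiv.Perm.sign (Equiv.ofBijective (fun i => A i j) (h.2 j)) * (-1)) := by
    refine Finset.prod_congr rfl fun j _ => ?_
    rw [hcol j, map_mul, Equiv.Perm.sign_swap h01]
  rw [hrow, hcolprod, Finset.prod_mul_distrib]
  simp [hodd.neg_one_pow]

end Aux

theorem els_eq_ols_of_odd (n : ℕ) (hodd : Odd n) (hn : 1 < n) :
    els n = ols n := by
  haveI : NeZero n := ⟨by omega⟩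
  have h01 : (0 : Fin n) ≠ 1 := by
    intro he
    have := congrArg Fin.val he
    simp [Fin.val_one'] at this
    omega
  apply Nat.card_congr
  refine ⟨fun p => ⟨swapRows p.1, ?_⟩, fun p => ⟨swapRows p.1, ?_⟩, ?_, ?_⟩
  · obtain ⟨h, hs⟩ := p.2
    exact ⟨swapRows_isLatin h, by rw [latinSign_swapRows h01 hodd h, hs]⟩
  · obtain ⟨h, hs⟩ := p.2
    exact ⟨swapRows_isLatin h, by rw [latinSign_swapRows h01 hodd h, hs, neg_neg]⟩
  · intro p; ext1; exact swapRows_swapRows _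
  · intro p; ext1; exact swapRows_swapRows _
end

section
/- Let n ≥ 1 and let J_n denote the n×n all-ones matrix, which belongs to Ψ(n). Then the coefficient C_{J_n} of the monomial ∏_{i,j} x_{ij} in (det X)^n satisfies C_{J_n} = (-1)^{n(n-1)/2} (els(n) - ols(n)), where els(n) and ols(n) are the numbers of even and odd Latin squares of order n. -/
open Equiv Finset

namespace LatinAux

variable {n : ℕ}

lemma swap_commute {α : Type*} [DecidableEq α] {a b c d : α}
    (h1 : a ≠ c) (h2 : a ≠ d) (h3 : b ≠ c) (h4 : b ≠ d) :
    Commute (Equiv.swap a b) (Equiv.swap c d) := by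
  unfold Commute SemiconjBy
  ext x
  simp only [Equiv.Perm.mul_apply, Equiv.swap_apply_def]
  split_ifs <;> simp_all

def ltSet (n : ℕ) : Finset (Fin n × Fin n) := univ.filter (fun p => p.1 < p.2)

lemma ltSet_comm :
    (↑(ltSet n) : Set (Fin n × Fin n)).Pairwise fun p q =>
      Commute (Equiv.swap p p.swap) (Equiv.swap q q.swap) := by
  intro p hp q hq hpq
  simp only [ltSet, coe_filter, Set.mem_setOf_eq] at hp hq
  apply swap_commute
  · exact hpq
  · intro h; rw [h] at hp
    simp only [Prod.fst_swap, Prod.snd_swap] at hp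
    exact absurd (hp.2.trans hq.2) (lt_irrefl _)
  · intro h; rw [← h] at hq
    simp only [Prod.fst_swap, Prod.snd_swap] at hq
    exact absurd (hq.2.trans hp.2) (lt_irrefl _)
  · intro h
    exact hpq (Prod.swap_injective h)

lemma noncommProd_ltSet_apply (T : Finset (Fin n × Fin n)) (hT : ∀ p ∈ T, p.1 < p.2)
    (hc : (↑T : Set (Fin n × Fin n)).Pairwise fun p q =>
      Commute (Equiv.swap p p.swap) (Equiv.swap q q.swap)) (x : Fin n × Fin n) :
    (T.noncommProd (fun p => Equiv.swap p p.swap) hc) x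
      = if x ∈ T ∨ x.swap ∈ T then x.swap else x := by
  classical
  induction T using Finset.induction with
  | empty => simp
  | @insert p T hp ih =>
    rw [Finset.noncommProd_insert_of_notMem _ _ _ _ hp]
    have hT' : ∀ q ∈ T, q.1 < q.2 := fun q hq => hT q (Finset.mem_insert_of_mem hq)
    have hpS := hT p (Finset.mem_insert_self p T)
    rw [Equiv.Perm.mul_apply,
      ih hT' (hc.mono (Finset.coe_subset.mpr (Finset.subset_insert p T)))]
    by_cases hx : x ∈ T ∨ x.swap ∈ T
    · rw [if_pos hx, if_pos (by
        rcases hx with h|h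
        · exact Or.inl (Finset.mem_insert_of_mem h)
        · exact Or.inr (Finset.mem_insert_of_mem h))]
      apply Equiv.swap_apply_of_ne_of_ne
      · intro hsw
        rcases hx with h|h
        · have h1 := hT' x h
          have h2 : p.1 < p.2 := hpS
          rw [← hsw] at h2
          simp only [Prod.fst_swap, Prod.snd_swap] at h2
          exact absurd (h1.trans h2) (lt_irrefl _)
        · rw [hsw] at h; exact hp h
      · intro hsw
        have hxp : x = p := Prod.swap_injective hsw
        subst hxp
        rcases hx with h|h
        · exact hp h
        · have h1 := hT' _ h
          simp only [Prod.fst_swap, Prod.snd_swap] at h1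
          exact absurd (hpS.trans h1) (lt_irrefl _)
    · rw [if_neg hx]
      by_cases h1 : x = p
      · subst h1; simp [Equiv.swap_apply_left]
      · by_cases h2 : x = p.swap
        · subst h2; simp [Equiv.swap_apply_right, Prod.swap_swap]
        · rw [Equiv.swap_apply_of_ne_of_ne h1 h2, if_neg]
          push_neg at hx ⊢
          refine ⟨by simp [h1, hx.1], by
            simp only [Finset.mem_insert]
            push_neg
            refine ⟨fun h => h2 ?_, hx.2⟩
            rw [← h, Prod.swap_swap]⟩

lemma card_ltSet_two : (ltSet n).card * 2 = n * (n - 1) := by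
  classical
  have hbij : (ltSet n).card = (univ.filter (fun p : Fin n × Fin n => p.2 < p.1)).card := by
    apply Finset.card_nbij Prod.swap
    · intro p hp
      simp only [ltSet, Finset.mem_coe, Finset.mem_filter, Finset.mem_univ, true_and] at hp ⊢
      simpa using hp
    · intro p hp q hq h; exact Prod.swap_injective h
    · intro p hp
      refine ⟨p.swap, ?_, by simp⟩
      simp only [ltSet, Finset.mem_coe, Finset.mem_filter, Finset.mem_univ, true_and] at hp ⊢
      simpa using hp
  have hunion : (ltSet n) ∪ (univ.filter (fun p : Fin n × Fin n => p.2 < p.1))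
      = (univ : Finset (Fin n)).offDiag := by
    ext p
    simp only [ltSet, Finset.mem_union, Finset.mem_filter, Finset.mem_univ, true_and,
      Finset.mem_offDiag]
    constructor
    · rintro (h|h)
      · exact ne_of_lt h
      · exact (ne_of_lt h).symm
    · intro h; exact lt_or_gt_of_ne h
  have hdisj : Disjoint (ltSet n) (univ.filter (fun p : Fin n × Fin n => p.2 < p.1)) := by
    rw [Finset.disjoint_left]
    intro p hp hq
    simp only [ltSet, Finset.mem_filter, Finset.mem_univ, true_and] at hp hq
    exact absurd (hp.trans hq) (lt_irrefl _)
  have hcard := Finset.card_union_of_disjoint hdisj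
  rw [hunion, Finset.offDiag_card, ← hbij, Finset.card_univ, Fintype.card_fin] at hcard
  have hnn : n * (n - 1) = n * n - n := by
    cases n with
    | zero => simp
    | succ m => rw [Nat.succ_sub_one, Nat.mul_succ, Nat.add_sub_cancel]
  omega

lemma sign_prodComm_perm :
    Equiv.Perm.sign (Equiv.prodComm (Fin n) (Fin n)) = (-1) ^ (n * (n - 1) / 2) := by
  classical
  have hperm : (Equiv.prodComm (Fin n) (Fin n))
      = (ltSet n).noncommProd (fun p => Equiv.swap p p.swap) ltSet_comm := by
    refine Equiv.ext fun x => ?_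
    rw [noncommProd_ltSet_apply _ (fun p hp => by simpa [ltSet] using hp)]
    by_cases h : x ∈ ltSet n ∨ x.swap ∈ ltSet n
    · rw [if_pos h]; rfl
    · rw [if_neg h]
      push_neg at h
      rcases h with ⟨h1, h2⟩
      simp only [ltSet, Finset.mem_filter, Finset.mem_univ, true_and, not_lt] at h1 h2
      simp only [Prod.fst_swap, Prod.snd_swap] at h2
      have hx : x.1 = x.2 := le_antisymm h2 h1
      rcases x with ⟨a, b⟩
      cases hx
      rfl
  rw [hperm, Finset.map_noncommProd (ltSet n) _ ltSet_comm (Equiv.Perm.sign),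
    Finset.noncommProd_eq_prod]
  have hval : ∀ p ∈ ltSet n, Equiv.Perm.sign ((fun p : Fin n × Fin n => Equiv.swap p p.swap) p) = -1 := by
    intro p hp
    apply Equiv.Perm.sign_swap
    simp only [ltSet, Finset.mem_filter, Finset.mem_univ, true_and] at hp
    intro h
    have h1 : p.1 = p.2 := congrArg Prod.fst h
    rw [h1] at hp
    exact lt_irrefl _ hp
  rw [Finset.prod_congr rfl hval, Finset.prod_const]
  congr 1
  have := @card_ltSet_two n
  omega



variable {n : ℕ}

noncomputable def rowPerm (f : Fin n → Fin n) : Equiv.Perm (Fin n) :=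
  if h : Function.Bijective f then Equiv.ofBijective f h else 1

lemma rowPerm_coe {f : Fin n → Fin n} (h : Function.Bijective f) : ⇑(rowPerm f) = f := by
  rw [rowPerm, dif_pos h]; rfl

lemma rowPerm_perm (e : Equiv.Perm (Fin n)) : rowPerm ⇑e = e :=
  Equiv.coe_fn_injective (rowPerm_coe e.bijective)

lemma rowPerm_eq_ofBijective {f : Fin n → Fin n} (h : Function.Bijective f) :
    rowPerm f = Equiv.ofBijective f h := dif_pos h

noncomputable def rowSign (A : Fin n → Fin n → Fin n) : ℤˣ :=
  ∏ r, Equiv.Perm.sign (rowPerm (A r))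

noncomputable def colSign (A : Fin n → Fin n → Fin n) : ℤˣ :=
  ∏ c, Equiv.Perm.sign (rowPerm (fun r => A r c))

noncomputable def symSign (A : Fin n → Fin n → Fin n) : ℤˣ :=
  ∏ s, Equiv.Perm.sign (rowPerm (fun r => (rowPerm (A r)).symm s))

lemma sym_bijective {A : Fin n → Fin n → Fin n} (hA : IsLatin A) (s : Fin n) :
    Function.Bijective (fun r => (rowPerm (A r)).symm s) := by
  rw [Fintype.bijective_iff_injective_and_card]
  refine ⟨fun r r' h => ?_, rfl⟩
  simp only at h
  have hr : A r ((rowPerm (A r)).symm s) = s := by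
    have h := (rowPerm (A r)).apply_symm_apply s
    rwa [rowPerm_coe (hA.1 r)] at h
  have hr' : A r' ((rowPerm (A r')).symm s) = s := by
    have h := (rowPerm (A r')).apply_symm_apply s
    rwa [rowPerm_coe (hA.1 r')] at h
  rw [h] at hr
  exact (hA.2 _).1 (hr.trans hr'.symm)

/-- The key sign identity: for a Latin square,
row sign * column sign * symbol sign = (-1)^(n(n-1)/2). -/
lemma sign_identity {A : Fin n → Fin n → Fin n} (hA : IsLatin A) :
    rowSign A * colSign A * symSign A = (-1) ^ (n * (n - 1) / 2) := by
  classical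
  set σ : Fin n → Equiv.Perm (Fin n) := fun r => rowPerm (A r) with hσ
  set τ : Fin n → Equiv.Perm (Fin n) := fun c => rowPerm (fun r => A r c) with hτ
  set υ : Fin n → Equiv.Perm (Fin n) := fun s => rowPerm (fun r => (rowPerm (A r)).symm s) with hυ
  have key : (Equiv.prodCongrLeft υ : Equiv.Perm (Fin n × Fin n))
      = (Equiv.prodComm (Fin n) (Fin n) : Equiv.Perm (Fin n × Fin n))
        * (Equiv.prodCongrLeft τ : Equiv.Perm (Fin n × Fin n))
        * (Equiv.prodCongrRight σ : Equiv.Perm (Fin n × Fin n))⁻¹ := by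
    refine Equiv.ext fun x => ?_
    rcases x with ⟨r, s⟩
    have h1 : ((Equiv.prodCongrRight σ)⁻¹ (r, s)) = (r, (σ r)⁻¹ s) := by
      rw [Equiv.Perm.inv_def]
      rfl
    simp only [Equiv.Perm.mul_apply, h1]
    have h2 : (Equiv.prodCongrLeft τ) (r, (σ r)⁻¹ s) = (τ ((σ r)⁻¹ s) r, (σ r)⁻¹ s) := rfl
    rw [h2]
    have h3 : τ ((σ r)⁻¹ s) r = A r ((σ r)⁻¹ s) := by
      have := rowPerm_coe (hA.2 ((σ r)⁻¹ s))
      exact congrFun this r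
    have h4 : A r ((σ r)⁻¹ s) = s := by
      have h : (σ r) ((σ r)⁻¹ s) = s := (σ r).apply_symm_apply s
      rwa [show ⇑(σ r) = A r from rowPerm_coe (hA.1 r)] at h
    have h5 : (Equiv.prodCongrLeft υ) (r, s) = (υ s r, s) := rfl
    rw [h5, h3, h4]
    have h6 : υ s r = (σ r)⁻¹ s := congrFun (rowPerm_coe (sym_bijective hA s)) r
    show (υ s r, s) = Equiv.prodComm (Fin n) (Fin n) (s, (σ r)⁻¹ s)
    rw [h6]
    rfl
  have hsign := congrArg Equiv.Perm.sign key
  rw [map_mul, map_mul, map_inv, Equiv.Perm.sign_prodCongrLeft,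
    Equiv.Perm.sign_prodCongrLeft, Equiv.Perm.sign_prodCongrRight, sign_prodComm_perm] at hsign
  have hrow : rowSign A = ∏ k, Equiv.Perm.sign (σ k) := rfl
  have hcol : colSign A = ∏ k, Equiv.Perm.sign (τ k) := rfl
  have hsym : symSign A = ∏ k, Equiv.Perm.sign (υ k) := rfl
  rw [hrow, hcol, hsym, hsign]
  have hinv : (∏ k, Equiv.Perm.sign (σ k))⁻¹ = ∏ k, Equiv.Perm.sign (σ k) := by
    rw [inv_eq_iff_mul_eq_one, ← Finset.prod_mul_distrib]
    apply Finset.prod_eq_one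
    intro k _
    rcases Int.units_eq_one_or (Equiv.Perm.sign (σ k)) with h | h <;> rw [h] <;> rfl
  rw [hinv]
  generalize (∏ k, Equiv.Perm.sign (σ k)) = a
  generalize (∏ k, Equiv.Perm.sign (τ k)) = b
  generalize ((-1 : ℤˣ) ^ (n * (n - 1) / 2)) = c
  rcases Int.units_eq_one_or a with h | h <;>
    rcases Int.units_eq_one_or b with h' | h' <;> subst h <;> subst h' <;> simp


open scoped Classical in
noncomputable def latinSet (n : ℕ) : Finset (Fin n → Fin n → Fin n) :=
  univ.filter IsLatin

lemma mem_latinSet {A : Fin n → Fin n → Fin n} : A ∈ latinSet n ↔ IsLatin A := by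
  classical
  simp [latinSet]

lemma latinSign_eq {A : Fin n → Fin n → Fin n} (h : IsLatin A) :
    latinSign A h = rowSign A * colSign A := by
  unfold latinSign rowSign colSign
  congr 1
  · exact Finset.prod_congr rfl fun r _ => by rw [rowPerm_eq_ofBijective (h.1 r)]
  · exact Finset.prod_congr rfl fun c _ => by rw [rowPerm_eq_ofBijective (h.2 c)]

/-- transpose -/
def trA (A : Fin n → Fin n → Fin n) : Fin n → Fin n → Fin n := fun i j => A j i

lemma trA_latin {A : Fin n → Fin n → Fin n} (h : IsLatin A) : IsLatin (trA A) :=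
  ⟨h.2, h.1⟩

lemma rowSign_trA (A : Fin n → Fin n → Fin n) : rowSign (trA A) = colSign A := rfl

lemma colSign_trA (A : Fin n → Fin n → Fin n) : colSign (trA A) = rowSign A := rfl

/-- row-inverse -/
noncomputable def invA (A : Fin n → Fin n → Fin n) : Fin n → Fin n → Fin n :=
  fun r s => (rowPerm (A r)).symm s

lemma invA_latin {A : Fin n → Fin n → Fin n} (h : IsLatin A) : IsLatin (invA A) := by
  constructor
  · intro r
    exact (rowPerm (A r)).symm.bijective
  · intro s
    exact sym_bijective h s

lemma invA_invA {A : Fin n → Fin n → Fin n} (h : IsLatin A) : invA (invA A) = A := by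
  funext r s
  unfold invA
  rw [show rowPerm (fun s => (rowPerm (A r)).symm s) = (rowPerm (A r)).symm from
    rowPerm_perm (rowPerm (A r)).symm, Equiv.symm_symm, rowPerm_coe (h.1 r)]

lemma rowSign_invA {A : Fin n → Fin n → Fin n} (h : IsLatin A) : rowSign (invA A) = rowSign A := by
  unfold rowSign invA
  apply Finset.prod_congr rfl
  intro r _
  rw [show rowPerm (fun s => (rowPerm (A r)).symm s) = (rowPerm (A r)).symm from
    rowPerm_perm (rowPerm (A r)).symm]
  exact Equiv.Perm.sign_symm _

lemma colSign_invA (A : Fin n → Fin n → Fin n) : colSign (invA A) = symSign A := rfl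

lemma units_sq (u : ℤˣ) : u * u = 1 := by
  rcases Int.units_eq_one_or u with h | h <;> rw [h] <;> rfl

/-- the central sum identity -/
lemma sum_signs :
    ∑ A ∈ latinSet n, ((rowSign A * colSign A : ℤˣ) : ℤ)
      = (-1 : ℤ) ^ (n * (n - 1) / 2) * ∑ A ∈ latinSet n, ((rowSign A : ℤˣ) : ℤ) := by
  classical
  have step1 : ∑ A ∈ latinSet n, ((rowSign A * colSign A : ℤˣ) : ℤ)
      = ∑ A ∈ latinSet n, ((rowSign A * symSign A : ℤˣ) : ℤ) := by
    apply Finset.sum_nbij' (i := invA) (j := invA)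
    · intro A hA; exact mem_latinSet.mpr (invA_latin (mem_latinSet.mp hA))
    · intro A hA; exact mem_latinSet.mpr (invA_latin (mem_latinSet.mp hA))
    · intro A hA; exact invA_invA (mem_latinSet.mp hA)
    · intro A hA; exact invA_invA (mem_latinSet.mp hA)
    · intro A hA
      have hA' := mem_latinSet.mp hA
      rw [rowSign_invA hA', ← colSign_invA (invA A), invA_invA hA']
  have step2 : ∀ A ∈ latinSet n, ((rowSign A * symSign A : ℤˣ) : ℤ)
      = (-1 : ℤ) ^ (n * (n - 1) / 2) * ((colSign A : ℤˣ) : ℤ) := by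
    intro A hA
    have h := sign_identity (mem_latinSet.mp hA)
    have hu : rowSign A * symSign A = (-1) ^ (n * (n - 1) / 2) * colSign A := by
      rw [← h]
      generalize rowSign A = a; generalize colSign A = b; generalize symSign A = c
      rcases Int.units_eq_one_or a with h1 | h1 <;> rcases Int.units_eq_one_or b with h2 | h2 <;>
        subst h1 <;> subst h2 <;> simp
    rw [hu, Units.val_mul, Units.val_pow_eq_pow_val]
    norm_num
  have step3 : ∑ A ∈ latinSet n, ((colSign A : ℤˣ) : ℤ)
      = ∑ A ∈ latinSet n, ((rowSign A : ℤˣ) : ℤ) := by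
    apply Finset.sum_nbij' (i := trA) (j := trA)
    · intro A hA; exact mem_latinSet.mpr (trA_latin (mem_latinSet.mp hA))
    · intro A hA; exact mem_latinSet.mpr (trA_latin (mem_latinSet.mp hA))
    · intro A _; rfl
    · intro A _; rfl
    · intro A hA; rw [rowSign_trA]
  rw [step1, Finset.sum_congr rfl step2, ← Finset.mul_sum, step3]

/-- els - ols as a sum -/
lemma els_sub_ols :
    (els n : ℤ) - (ols n : ℤ) = ∑ A ∈ latinSet n, ((rowSign A * colSign A : ℤˣ) : ℤ) := by
  classical
  have hsplit := Finset.sum_filter_add_sum_filter_not (latinSet n)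
    (fun A => rowSign A * colSign A = 1) (fun A => ((rowSign A * colSign A : ℤˣ) : ℤ))
  have h1 : ∑ A ∈ (latinSet n).filter (fun A => rowSign A * colSign A = 1),
      ((rowSign A * colSign A : ℤˣ) : ℤ)
      = ((latinSet n).filter (fun A => rowSign A * colSign A = 1)).card := by
    rw [Finset.sum_congr rfl (fun A hA => ?_), Finset.sum_const, nsmul_eq_mul, mul_one]
    rw [(Finset.mem_filter.mp hA).2]
    rfl
  have h2 : ∑ A ∈ (latinSet n).filter (fun A => ¬rowSign A * colSign A = 1),
      ((rowSign A * colSign A : ℤˣ) : ℤ)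
      = -((latinSet n).filter (fun A => ¬rowSign A * colSign A = 1)).card := by
    rw [Finset.sum_congr rfl (fun A hA => ?_), Finset.sum_const, nsmul_eq_mul, mul_neg_one]
    have := (Finset.mem_filter.mp hA).2
    rcases Int.units_eq_one_or (rowSign A * colSign A) with h | h
    · exact absurd h this
    · rw [h]; rfl
  have hels : els n = ((latinSet n).filter (fun A => rowSign A * colSign A = 1)).card := by
    rw [els, Nat.card_eq_fintype_card]
    rw [Fintype.card_subtype]
    congr 1
    ext A
    simp only [Finset.mem_filter, Finset.mem_univ, true_and, mem_latinSet]
    constructor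
    · rintro ⟨h, he⟩; exact ⟨h, by rwa [latinSign_eq h] at he⟩
    · rintro ⟨h, he⟩; exact ⟨h, by rwa [latinSign_eq h]⟩
  have hols : ols n = ((latinSet n).filter (fun A => ¬rowSign A * colSign A = 1)).card := by
    rw [ols, Nat.card_eq_fintype_card]
    rw [Fintype.card_subtype]
    congr 1
    ext A
    simp only [Finset.mem_filter, Finset.mem_univ, true_and, mem_latinSet]
    constructor
    · rintro ⟨h, he⟩
      refine ⟨h, ?_⟩
      rw [latinSign_eq h] at he
      rw [he]
      decide
    · rintro ⟨h, he⟩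
      refine ⟨h, ?_⟩
      rw [latinSign_eq h]
      rcases Int.units_eq_one_or (rowSign A * colSign A) with h' | h'
      · exact absurd h' he
      · exact h'
  rw [hels, hols, ← hsplit, h1, h2]
  ring


lemma bij_iff_card (f : Fin n → Fin n) :
    (∀ a, (univ.filter fun k => f k = a).card = 1) ↔ Function.Bijective f := by
  classical
  constructor
  · intro h
    rw [Fintype.bijective_iff_injective_and_card]
    refine ⟨fun k k' hkk => ?_, rfl⟩
    have h1 := h (f k)
    have hk : k ∈ univ.filter fun j => f j = f k := by simp
    have hk' : k' ∈ univ.filter fun j => f j = f k := by simp [hkk]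
    exact Finset.card_le_one.mp (le_of_eq h1) k hk k' hk'
  · intro h a
    obtain ⟨k, hk, hu⟩ := (Function.bijective_iff_existsUnique f).mp h a
    rw [Finset.card_eq_one]
    refine ⟨k, ?_⟩
    ext j
    simp only [Finset.mem_filter, Finset.mem_univ, true_and, Finset.mem_singleton]
    exact ⟨fun hj => hu j hj, fun hj => hj ▸ hk⟩

lemma exponents_iff (g : Fin n → Equiv.Perm (Fin n)) :
    (∑ p : Fin n × Fin n, Finsupp.single ((g p.1) p.2, p.2) (1 : ℕ))
      = (Finsupp.equivFunOnFinite.symm fun _ : Fin n × Fin n => 1)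
    ↔ ∀ b, Function.Bijective (fun k => (g k) b) := by
  classical
  have hD : ∀ a b : Fin n, (∑ p : Fin n × Fin n, Finsupp.single ((g p.1) p.2, p.2) (1 : ℕ)) (a, b)
      = ((univ.filter fun k => (g k) b = a).card : ℕ) := by
    intro a b
    rw [Finset.sum_apply']
    rw [Fintype.sum_prod_type]
    have inner : ∀ k : Fin n, (∑ i : Fin n, (Finsupp.single ((g k) i, i) (1 : ℕ)) (a, b))
        = if (g k) b = a then 1 else 0 := by
      intro k
      rw [Finset.sum_eq_single b]
      · rw [Finsupp.single_apply]
        by_cases h : (g k) b = a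
        · rw [if_pos (by rw [h]), if_pos h]
        · rw [if_neg (by simp [Prod.ext_iff, h]), if_neg h]
      · intro i _ hib
        rw [Finsupp.single_apply, if_neg]
        intro hc
        exact hib (congrArg Prod.snd hc)
      · simp
    rw [Finset.sum_congr rfl (fun k _ => inner k), Finset.sum_boole, Nat.cast_id]
  constructor
  · intro h b
    rw [← bij_iff_card]
    intro a
    have := DFunLike.congr_fun h (a, b)
    rw [hD a b] at this
    exact_mod_cast this
  · intro h
    ext q
    rcases q with ⟨a, b⟩
    rw [hD a b, ((bij_iff_card _).mpr (h b)) a]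
    rfl

lemma coeffC_eq_sum : coeffC n n (fun _ _ => 1) = ∑ A ∈ latinSet n, ((rowSign A : ℤˣ) : ℤ) := by
  classical
  unfold coeffC
  rw [Matrix.det_apply']
  have hp : ∀ x : MvPolynomial (Fin n × Fin n) ℤ, x ^ n = ∏ _k : Fin n, x := fun x => by
    rw [Finset.prod_const, Finset.card_univ, Fintype.card_fin]
  rw [hp, Finset.prod_univ_sum, MvPolynomial.coeff_sum]
  have hterm : ∀ g : Fin n → Equiv.Perm (Fin n),
      MvPolynomial.coeff (Finsupp.equivFunOnFinite.symm fun _ : Fin n × Fin n => (1:ℕ))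
        (∏ k : Fin n, (((Equiv.Perm.sign (g k) : ℤ) : MvPolynomial (Fin n × Fin n) ℤ)
          * ∏ i : Fin n, (Matrix.of fun i j : Fin n =>
              (MvPolynomial.X (i, j) : MvPolynomial (Fin n × Fin n) ℤ)) ((g k) i) i))
      = (if (∀ b, Function.Bijective (fun k => (g k) b))
          then ∏ k : Fin n, ((Equiv.Perm.sign (g k) : ℤˣ) : ℤ) else 0) := by
    intro g
    have hof : ∀ k i : Fin n, (Matrix.of fun i j : Fin n =>
        (MvPolynomial.X (i, j) : MvPolynomial (Fin n × Fin n) ℤ)) ((g k) i) i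
        = MvPolynomial.X ((g k) i, i) := fun k i => rfl
    simp only [hof]
    rw [Finset.prod_mul_distrib]
    have hXprod : (∏ k : Fin n, ∏ i : Fin n, (MvPolynomial.X ((g k) i, i)
        : MvPolynomial (Fin n × Fin n) ℤ))
        = MvPolynomial.monomial (∑ p : Fin n × Fin n, Finsupp.single ((g p.1) p.2, p.2) 1) 1 := by
      rw [MvPolynomial.monomial_sum_one]
      rw [← Fintype.prod_prod_type']
      rfl
    rw [hXprod]
    have hcast : (∏ k : Fin n, ((Equiv.Perm.sign (g k) : ℤ) : MvPolynomial (Fin n × Fin n) ℤ))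
        = MvPolynomial.C (∏ k : Fin n, ((Equiv.Perm.sign (g k) : ℤˣ) : ℤ)) := by
      rw [map_prod]
      apply Finset.prod_congr rfl
      intro k _
      exact (eq_intCast (MvPolynomial.C : ℤ →+* MvPolynomial (Fin n × Fin n) ℤ) _).symm
    rw [hcast, MvPolynomial.coeff_C_mul, MvPolynomial.coeff_monomial]
    rw [show ((Finsupp.equivFunOnFinite.symm fun p : Fin n × Fin n => ((fun _ _ => 1 :
      Matrix (Fin n) (Fin n) ℕ) p.1 p.2)) : Finsupp (Fin n × Fin n) ℕ)
      = (Finsupp.equivFunOnFinite.symm fun _ : Fin n × Fin n => (1:ℕ)) from rfl]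
    by_cases h : (∀ b, Function.Bijective (fun k => (g k) b))
    · rw [if_pos h, if_pos ((exponents_iff g).mpr h), mul_one]
    · rw [if_neg h, if_neg (fun hc => h ((exponents_iff g).mp hc)), mul_zero]
  rw [Finset.sum_congr rfl (fun g _ => hterm g), Fintype.piFinset_univ, ← Finset.sum_filter]
  apply Finset.sum_nbij' (i := fun (g : Fin n → Equiv.Perm (Fin n)) => fun k i => (g k) i)
    (j := fun (A : Fin n → Fin n → Fin n) => fun k => rowPerm (A k))
  · intro g hg
    rw [Finset.mem_filter] at hg
    exact mem_latinSet.mpr ⟨fun k => (g k).bijective, hg.2⟩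
  · intro A hA
    have hA' := mem_latinSet.mp hA
    rw [Finset.mem_filter]
    refine ⟨Finset.mem_univ _, fun b => ?_⟩
    have : (fun k => (rowPerm (A k)) b) = fun k => A k b := by
      funext k
      rw [rowPerm_coe (hA'.1 k)]
    rw [this]
    exact hA'.2 b
  · intro g _
    funext k
    exact rowPerm_perm (g k)
  · intro A hA
    have hA' := mem_latinSet.mp hA
    funext k i
    rw [rowPerm_coe (hA'.1 k)]
  · intro g hg
    rw [Finset.mem_filter] at hg
    rw [show rowSign (fun k i => (g k) i) = ∏ k, Equiv.Perm.sign (g k) from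
      Finset.prod_congr rfl (fun k _ => by rw [show rowPerm (fun i => (g k) i) = g k from rowPerm_perm (g k)])]
    exact (map_prod (Units.coeHom ℤ) (fun k => Equiv.Perm.sign (g k)) univ).symm


end LatinAux

theorem coeff_allOnes_eq (n : ℕ) (hn : 1 ≤ n) :
    coeffC n n (fun _ _ => 1) = (-1) ^ (n * (n - 1) / 2) * ((els n : ℤ) - (ols n : ℤ)) := by
  rw [LatinAux.coeffC_eq_sum, LatinAux.els_sub_ols, LatinAux.sum_signs, ← mul_assoc,
    ← pow_add, Even.neg_one_pow ⟨n * (n - 1) / 2, by ring⟩, one_mul]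
end

section
/- Let n ≥ 3, let a, b ≥ 1 be natural numbers, and set m = (a+1)(b+1) - 1 = ab + a + b. Let L_n(a,b) be the n×n matrix whose upper-left 3×3 block is L_3(a,b) = [[ab+b-1, a, 1], [a, ab, b], [1, b, ab+a-1]], whose remaining diagonal entries (positions (4,4) through (n,n)) all equal m, and whose other entries are 0. Then L_n(a,b) ∈ Ψ(m) and C_{L_n(a,b)} = 0. -/
/-- The 3×3 matrix `L_3(a,b)`. -/
def L3 (a b : ℕ) : Matrix (Fin 3) (Fin 3) ℕ :=
  !![a * b + b - 1, a, 1;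
     a, a * b, b;
     1, b, a * b + a - 1]

/-- The n×n matrix `L_n(a,b)`: upper-left 3×3 block `L_3(a,b)`, remaining diagonal
entries equal to `m = ab + a + b`, and all other entries `0`. -/
def Lmat (n a b : ℕ) : Matrix (Fin n) (Fin n) ℕ := fun i j =>
  if h : (i : ℕ) < 3 ∧ (j : ℕ) < 3 then L3 a b ⟨i, h.1⟩ ⟨j, h.2⟩
  else if i = j then a * b + a + b else 0


open Equiv Finset MvPolynomial
open scoped Nat

/-! ### Setup : embedding permutations of `Fin 3` into `Perm (Fin n)` -/

variable {n : ℕ}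

def emb3 (hn : 3 ≤ n) : Fin 3 ≃ {x : Fin n // (x : ℕ) < 3} where
  toFun j := ⟨⟨j, by omega⟩, by simp⟩
  invFun s := ⟨s.1, s.2⟩
  left_inv j := by ext; simp
  right_inv s := by ext; simp

def EP (hn : 3 ≤ n) (τ : Perm (Fin 3)) : Perm (Fin n) :=
  τ.extendDomain (emb3 hn)

lemma EP_apply_lt (hn : 3 ≤ n) (τ : Perm (Fin 3)) (x : Fin n) (hx : (x : ℕ) < 3) :
    EP hn τ x = ⟨(τ ⟨x, hx⟩ : Fin 3), by omega⟩ := by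
  have := Equiv.Perm.extendDomain_apply_subtype τ (emb3 hn) (b := x) hx
  rw [EP, this]
  rfl

lemma EP_apply_ge (hn : 3 ≤ n) (τ : Perm (Fin 3)) (x : Fin n) (hx : ¬ (x : ℕ) < 3) :
    EP hn τ x = x :=
  Equiv.Perm.extendDomain_apply_not_subtype τ (emb3 hn) hx

lemma EP_inj (hn : 3 ≤ n) : Function.Injective (EP hn) :=
  Equiv.Perm.extendDomainHom_injective (emb3 hn)

@[simp] lemma EP_eq_iff (hn : 3 ≤ n) {τ τ' : Perm (Fin 3)} : EP hn τ = EP hn τ' ↔ τ = τ' :=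
  (EP_inj hn).eq_iff

lemma EP_sign (hn : 3 ≤ n) (τ : Perm (Fin 3)) : Equiv.Perm.sign (EP hn τ) = Equiv.Perm.sign τ :=
  Equiv.Perm.sign_extendDomain τ (emb3 hn)

lemma EP_surj (hn : 3 ≤ n) (σ : Perm (Fin n)) (hσ : ∀ x : Fin n, ¬ (x : ℕ) < 3 → σ x = x) :
    ∃ τ : Perm (Fin 3), σ = EP hn τ := by
  have h₁ : ∀ x : Fin n, (x : ℕ) < 3 ↔ ((σ x : Fin n) : ℕ) < 3 := by
    intro x
    constructor
    · intro hx
      by_contra h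
      have := hσ (σ x) h
      have hx2 : σ x = x := σ.injective this
      rw [hx2] at h; exact h hx
    · intro hx
      by_contra h
      rw [hσ x h] at hx; exact h hx
  refine ⟨(emb3 hn).symm.permCongr (σ.subtypePerm (fun x => (h₁ x).symm)), ?_⟩
  ext x
  by_cases hx : (x : ℕ) < 3
  · rw [EP_apply_lt hn _ x hx]
    simp [Equiv.permCongr_apply, emb3, Equiv.Perm.subtypePerm]
  · rw [EP_apply_ge hn _ x hx, hσ x hx]

/-- restriction of a sum over all permutations of `Fin n` to the six block permutations. -/
lemma sum_perm_eq {M : Type*} [AddCommMonoid M] (hn : 3 ≤ n) (f : Perm (Fin n) → M)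
    (hf : ∀ σ, (∀ τ, σ ≠ EP hn τ) → f σ = 0) :
    ∑ σ : Perm (Fin n), f σ = ∑ τ : Perm (Fin 3), f (EP hn τ) := by
  rw [← Finset.sum_image (g := EP hn) (f := f) (s := univ)
    (fun τ _ τ' _ h => EP_inj hn h)]
  refine (Finset.sum_subset (Finset.subset_univ _) ?_).symm
  intro σ _ hσ
  refine hf σ fun τ h => hσ ?_
  exact Finset.mem_image.2 ⟨τ, Finset.mem_univ τ, h.symm⟩

lemma prod_perm_eq {M : Type*} [CommMonoid M] (hn : 3 ≤ n) (f : Perm (Fin n) → M)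
    (hf : ∀ σ, (∀ τ, σ ≠ EP hn τ) → f σ = 1) :
    ∏ σ : Perm (Fin n), f σ = ∏ τ : Perm (Fin 3), f (EP hn τ) := by
  rw [← Finset.prod_image (g := EP hn) (f := f) (s := univ)
    (fun τ _ τ' _ h => EP_inj hn h)]
  refine (Finset.prod_subset (Finset.subset_univ _) ?_).symm
  intro σ _ hσ
  refine hf σ fun τ h => hσ ?_
  exact Finset.mem_image.2 ⟨τ, Finset.mem_univ τ, h.symm⟩

/-! ### the six permutations of `Fin 3` and the two weight functions -/

def τr : Perm (Fin 3) := Equiv.swap 0 1 * Equiv.swap 1 2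
def τr2 : Perm (Fin 3) := Equiv.swap 1 2 * Equiv.swap 0 1

lemma univ_perm3 : (univ : Finset (Perm (Fin 3))) =
    {1, τr, τr2, Equiv.swap 0 1, Equiv.swap 0 2, Equiv.swap 1 2} := by decide

lemma sum_perm3 {M : Type*} [AddCommMonoid M] (g : Perm (Fin 3) → M) :
    ∑ τ : Perm (Fin 3), g τ =
      g 1 + (g τr + (g τr2 + (g (Equiv.swap 0 1) + (g (Equiv.swap 0 2) +
        g (Equiv.swap 1 2))))) := by
  rw [univ_perm3, Finset.sum_insert (by decide), Finset.sum_insert (by decide),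
    Finset.sum_insert (by decide), Finset.sum_insert (by decide),
    Finset.sum_pair (by decide)]

lemma prod_perm3 {M : Type*} [CommMonoid M] (g : Perm (Fin 3) → M) :
    ∏ τ : Perm (Fin 3), g τ =
      g 1 * (g τr * (g τr2 * (g (Equiv.swap 0 1) * (g (Equiv.swap 0 2) *
        g (Equiv.swap 1 2))))) := by
  rw [univ_perm3, Finset.prod_insert (by decide), Finset.prod_insert (by decide),
    Finset.prod_insert (by decide), Finset.prod_insert (by decide),
    Finset.prod_pair (by decide)]

def w0 (a b : ℕ) : Perm (Fin 3) → ℕ := fun τ =>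
  if τ = 1 then a * b else if τ = τr then 1 else if τ = τr2 then 1
  else if τ = Equiv.swap 0 1 then a - 1 else if τ = Equiv.swap 1 2 then b - 1 else 0

def w1 (a b : ℕ) : Perm (Fin 3) → ℕ := fun τ =>
  if τ = 1 then a * b - 1 else if τ = Equiv.swap 0 1 then a
  else if τ = Equiv.swap 0 2 then 1 else if τ = Equiv.swap 1 2 then b else 0

@[simp] lemma w0_e (a b : ℕ) : w0 a b 1 = a * b := by simp [w0]
@[simp] lemma w0_r (a b : ℕ) : w0 a b τr = 1 := by
  simp [w0, show τr ≠ 1 from by decide]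
@[simp] lemma w0_r2 (a b : ℕ) : w0 a b τr2 = 1 := by
  simp [w0, show τr2 ≠ 1 from by decide, show τr2 ≠ τr from by decide]
@[simp] lemma w0_s01 (a b : ℕ) : w0 a b (Equiv.swap 0 1) = a - 1 := by
  simp [w0, show Equiv.swap (0:Fin 3) 1 ≠ 1 from by decide,
    show Equiv.swap (0:Fin 3) 1 ≠ τr from by decide,
    show Equiv.swap (0:Fin 3) 1 ≠ τr2 from by decide]
@[simp] lemma w0_s02 (a b : ℕ) : w0 a b (Equiv.swap 0 2) = 0 := by
  simp [w0, show Equiv.swap (0:Fin 3) 2 ≠ 1 from by decide,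
    show Equiv.swap (0:Fin 3) 2 ≠ τr from by decide,
    show Equiv.swap (0:Fin 3) 2 ≠ τr2 from by decide,
    show Equiv.swap (0:Fin 3) 2 ≠ Equiv.swap 0 1 from by decide,
    show Equiv.swap (0:Fin 3) 2 ≠ Equiv.swap 1 2 from by decide]
@[simp] lemma w0_s12 (a b : ℕ) : w0 a b (Equiv.swap 1 2) = b - 1 := by
  simp [w0, show Equiv.swap (1:Fin 3) 2 ≠ 1 from by decide,
    show Equiv.swap (1:Fin 3) 2 ≠ τr from by decide,
    show Equiv.swap (1:Fin 3) 2 ≠ τr2 from by decide,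
    show Equiv.swap (1:Fin 3) 2 ≠ Equiv.swap 0 1 from by decide]

@[simp] lemma w1_e (a b : ℕ) : w1 a b 1 = a * b - 1 := by simp [w1]
@[simp] lemma w1_r (a b : ℕ) : w1 a b τr = 0 := by
  simp [w1, show τr ≠ 1 from by decide,
    show τr ≠ Equiv.swap 0 1 from by decide,
    show τr ≠ Equiv.swap 0 2 from by decide,
    show τr ≠ Equiv.swap 1 2 from by decide]
@[simp] lemma w1_r2 (a b : ℕ) : w1 a b τr2 = 0 := by
  simp [w1, show τr2 ≠ 1 from by decide,
    show τr2 ≠ Equiv.swap 0 1 from by decide,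
    show τr2 ≠ Equiv.swap 0 2 from by decide,
    show τr2 ≠ Equiv.swap 1 2 from by decide]
@[simp] lemma w1_s01 (a b : ℕ) : w1 a b (Equiv.swap 0 1) = a := by
  simp [w1, show Equiv.swap (0:Fin 3) 1 ≠ 1 from by decide]
@[simp] lemma w1_s02 (a b : ℕ) : w1 a b (Equiv.swap 0 2) = 1 := by
  simp [w1, show Equiv.swap (0:Fin 3) 2 ≠ 1 from by decide,
    show Equiv.swap (0:Fin 3) 2 ≠ Equiv.swap 0 1 from by decide]
@[simp] lemma w1_s12 (a b : ℕ) : w1 a b (Equiv.swap 1 2) = b := by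
  simp [w1, show Equiv.swap (1:Fin 3) 2 ≠ 1 from by decide,
    show Equiv.swap (1:Fin 3) 2 ≠ Equiv.swap 0 1 from by decide,
    show Equiv.swap (1:Fin 3) 2 ≠ Equiv.swap 0 2 from by decide]

/-- lift of a weight function on `Perm (Fin 3)` to `Perm (Fin n)`. -/
def liftw (hn : 3 ≤ n) (w : Perm (Fin 3) → ℕ) (σ : Perm (Fin n)) : ℕ :=
  ∑ τ : Perm (Fin 3), if σ = EP hn τ then w τ else 0

@[simp] lemma liftw_EP (hn : 3 ≤ n) (w : Perm (Fin 3) → ℕ) (τ : Perm (Fin 3)) :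
    liftw hn w (EP hn τ) = w τ := by
  rw [liftw]
  rw [Finset.sum_eq_single τ]
  · simp
  · intro τ' _ hne
    rw [if_neg]
    intro h
    exact hne ((EP_inj hn h).symm)
  · simp

lemma liftw_of_ne (hn : 3 ≤ n) (w : Perm (Fin 3) → ℕ) (σ : Perm (Fin n))
    (h : ∀ τ, σ ≠ EP hn τ) : liftw hn w σ = 0 := by
  rw [liftw]
  exact Finset.sum_eq_zero fun τ _ => if_neg (h τ)

lemma L3_00 (a b : ℕ) : L3 a b 0 0 = a * b + b - 1 := rfl
lemma L3_01 (a b : ℕ) : L3 a b 0 1 = a := rfl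
lemma L3_02 (a b : ℕ) : L3 a b 0 2 = 1 := rfl
lemma L3_10 (a b : ℕ) : L3 a b 1 0 = a := rfl
lemma L3_11 (a b : ℕ) : L3 a b 1 1 = a * b := rfl
lemma L3_12 (a b : ℕ) : L3 a b 1 2 = b := rfl
lemma L3_20 (a b : ℕ) : L3 a b 2 0 = 1 := rfl
lemma L3_21 (a b : ℕ) : L3 a b 2 1 = b := rfl
lemma L3_22 (a b : ℕ) : L3 a b 2 2 = a * b + a - 1 := rfl

/-! ### solving the linear system on `Fin 3` -/

lemma solve3 (a b : ℕ) (ha : 1 ≤ a) (hb : 1 ≤ b) (g : Perm (Fin 3) → ℕ)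
    (hD : ∀ i j : Fin 3, ∑ τ : Perm (Fin 3), g τ * (if τ j = i then 1 else 0) = L3 a b i j) :
    g = w0 a b ∨ g = w1 a b := by
  have hfil : ∀ i j : Fin 3, ∑ τ : Perm (Fin 3), g τ * (if τ j = i then 1 else 0)
      = ∑ τ ∈ univ.filter (fun τ => τ j = i), g τ := by
    intro i j
    rw [Finset.sum_filter]
    exact Finset.sum_congr rfl fun τ _ => by split <;> simp
  have e00 := hD 0 0
  rw [hfil, show univ.filter (fun τ : Perm (Fin 3) => τ 0 = 0) = {1, Equiv.swap 1 2} from by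
    decide, Finset.sum_pair (by decide), L3_00] at e00
  have e01 := hD 0 1
  rw [hfil, show univ.filter (fun τ : Perm (Fin 3) => τ 1 = 0) = {τr2, Equiv.swap 0 1} from by
    decide, Finset.sum_pair (by decide), L3_01] at e01
  have e02 := hD 0 2
  rw [hfil, show univ.filter (fun τ : Perm (Fin 3) => τ 2 = 0) = {τr, Equiv.swap 0 2} from by
    decide, Finset.sum_pair (by decide), L3_02] at e02
  have e10 := hD 1 0
  rw [hfil, show univ.filter (fun τ : Perm (Fin 3) => τ 0 = 1) = {τr, Equiv.swap 0 1} from by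
    decide, Finset.sum_pair (by decide), L3_10] at e10
  have e11 := hD 1 1
  rw [hfil, show univ.filter (fun τ : Perm (Fin 3) => τ 1 = 1) = {1, Equiv.swap 0 2} from by
    decide, Finset.sum_pair (by decide), L3_11] at e11
  have e12 := hD 1 2
  rw [hfil, show univ.filter (fun τ : Perm (Fin 3) => τ 2 = 1) = {τr2, Equiv.swap 1 2} from by
    decide, Finset.sum_pair (by decide), L3_12] at e12
  have e20 := hD 2 0
  rw [hfil, show univ.filter (fun τ : Perm (Fin 3) => τ 0 = 2) = {τr2, Equiv.swap 0 2} from by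
    decide, Finset.sum_pair (by decide), L3_20] at e20
  have e21 := hD 2 1
  rw [hfil, show univ.filter (fun τ : Perm (Fin 3) => τ 1 = 2) = {τr, Equiv.swap 1 2} from by
    decide, Finset.sum_pair (by decide), L3_21] at e21
  have e22 := hD 2 2
  rw [hfil, show univ.filter (fun τ : Perm (Fin 3) => τ 2 = 2) = {1, Equiv.swap 0 1} from by
    decide, Finset.sum_pair (by decide), L3_22] at e22
  have hab : 1 ≤ a * b := Nat.one_le_iff_ne_zero.2 (by positivity)
  have key : (g 1 = a * b ∧ g τr = 1 ∧ g τr2 = 1 ∧ g (Equiv.swap 0 1) = a - 1 ∧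
        g (Equiv.swap 0 2) = 0 ∧ g (Equiv.swap 1 2) = b - 1) ∨
      (g 1 = a * b - 1 ∧ g τr = 0 ∧ g τr2 = 0 ∧ g (Equiv.swap 0 1) = a ∧
        g (Equiv.swap 0 2) = 1 ∧ g (Equiv.swap 1 2) = b) := by
    generalize hP : a * b = P at *
    omega
  have hsix : ∀ τ : Perm (Fin 3), τ = 1 ∨ τ = τr ∨ τ = τr2 ∨ τ = Equiv.swap 0 1 ∨
      τ = Equiv.swap 0 2 ∨ τ = Equiv.swap 1 2 := by decide
  rcases key with ⟨h1, h2, h3, h4, h5, h6⟩ | ⟨h1, h2, h3, h4, h5, h6⟩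
  · left
    funext τ
    rcases hsix τ with rfl | rfl | rfl | rfl | rfl | rfl <;> simp [h1, h2, h3, h4, h5, h6]
  · right
    funext τ
    rcases hsix τ with rfl | rfl | rfl | rfl | rfl | rfl <;> simp [h1, h2, h3, h4, h5, h6]

/-! ### reduction from `Fin n` to `Fin 3` -/

lemma ite_cond (hn : 3 ≤ n) (τ : Perm (Fin 3)) (x y : Fin n) (hx : (x : ℕ) < 3)
    (hy : (y : ℕ) < 3) : (EP hn τ x = y) ↔ τ ⟨x, hx⟩ = ⟨y, hy⟩ := by
  rw [EP_apply_lt hn τ x hx]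
  simp [Fin.ext_iff]

lemma sum_ite_block (hn : 3 ≤ n) (c : Perm (Fin n) → ℕ)
    (hvan : ∀ σ, (∀ τ, σ ≠ EP hn τ) → c σ = 0) (i j : Fin 3) :
    ∑ σ : Perm (Fin n),
        c σ * (if σ (⟨j, by omega⟩ : Fin n) = (⟨i, by omega⟩ : Fin n) then 1 else 0)
      = ∑ τ : Perm (Fin 3), c (EP hn τ) * (if τ j = i then 1 else 0) := by
  rw [sum_perm_eq hn _ (fun σ h => by rw [hvan σ h, zero_mul])]
  refine Finset.sum_congr rfl fun τ _ => ?_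
  congr 1
  rw [if_congr (ite_cond hn τ (⟨j, by omega⟩ : Fin n) (⟨i, by omega⟩ : Fin n)
    (by simpa using j.isLt) (by simpa using i.isLt)) rfl rfl]

lemma Lmat_block (a b : ℕ) (hn : 3 ≤ n) (i j : Fin 3) :
    Lmat n a b (⟨i, by omega⟩ : Fin n) (⟨j, by omega⟩ : Fin n) = L3 a b i j := by
  simp only [Lmat]
  rw [dif_pos ⟨by simpa using i.isLt, by simpa using j.isLt⟩]

lemma uniq (hn : 3 ≤ n) (a b : ℕ) (ha : 1 ≤ a) (hb : 1 ≤ b) (c : Perm (Fin n) → ℕ)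
    (hD : ∀ i j : Fin n,
      ∑ σ : Perm (Fin n), c σ * (if σ j = i then 1 else 0) = Lmat n a b i j) :
    c = liftw hn (w0 a b) ∨ c = liftw hn (w1 a b) := by
  have hvan : ∀ σ, (∀ τ, σ ≠ EP hn τ) → c σ = 0 := by
    intro σ hσ
    have hx : ¬ ∀ x : Fin n, ¬ (x : ℕ) < 3 → σ x = x := by
      intro h
      obtain ⟨τ, hτ⟩ := EP_surj hn σ h
      exact hσ τ hτ
    push_neg at hx
    obtain ⟨x, hx3, hxne⟩ := hx
    have h0 : Lmat n a b (σ x) x = 0 := by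
      simp only [Lmat]
      rw [dif_neg (fun h => by omega), if_neg hxne]
    have hsum0 := hD (σ x) x
    rw [h0] at hsum0
    have := (Finset.sum_eq_zero_iff.mp hsum0) σ (mem_univ σ)
    simpa using this
  have hD3 : ∀ i j : Fin 3,
      ∑ τ : Perm (Fin 3), c (EP hn τ) * (if τ j = i then 1 else 0) = L3 a b i j := by
    intro i j
    rw [← sum_ite_block hn c hvan i j, hD, Lmat_block a b hn i j]
  rcases solve3 a b ha hb _ hD3 with h | h
  · left
    funext σ
    by_cases hσ : ∃ τ, σ = EP hn τ
    · obtain ⟨τ, rfl⟩ := hσ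
      rw [liftw_EP]
      exact congrFun h τ
    · push_neg at hσ
      rw [hvan σ hσ, liftw_of_ne hn _ σ hσ]
  · right
    funext σ
    by_cases hσ : ∃ τ, σ = EP hn τ
    · obtain ⟨τ, rfl⟩ := hσ
      rw [liftw_EP]
      exact congrFun h τ
    · push_neg at hσ
      rw [hvan σ hσ, liftw_of_ne hn _ σ hσ]

/-! ### verification that the two weights give the matrix `Lmat` -/

lemma block_sum_w (a b : ℕ) (ha : 1 ≤ a) (hb : 1 ≤ b) (w : Perm (Fin 3) → ℕ)
    (hw : w = w0 a b ∨ w = w1 a b) (i j : Fin 3) :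
    ∑ τ ∈ univ.filter (fun τ : Perm (Fin 3) => τ j = i), w τ = L3 a b i j := by
  have hab : 1 ≤ a * b := Nat.one_le_iff_ne_zero.2 (by positivity)
  have h3 : ∀ k : Fin 3, k = 0 ∨ k = 1 ∨ k = 2 := by decide
  rcases hw with rfl | rfl <;> rcases h3 i with rfl | rfl | rfl <;> rcases h3 j with rfl | rfl | rfl
  · rw [show univ.filter (fun τ : Perm (Fin 3) => τ 0 = 0) = {1, Equiv.swap 1 2} from by decide,
      Finset.sum_pair (by decide), L3_00]
    simp only [w0_e, w0_r, w0_r2, w0_s01, w0_s02, w0_s12, w1_e, w1_r, w1_r2, w1_s01, w1_s02, w1_s12]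
    try first
    | omega
    | (generalize hP : a * b = P at hab ⊢; omega)
  · rw [show univ.filter (fun τ : Perm (Fin 3) => τ 1 = 0) = {τr2, Equiv.swap 0 1} from by decide,
      Finset.sum_pair (by decide), L3_01]
    simp only [w0_e, w0_r, w0_r2, w0_s01, w0_s02, w0_s12, w1_e, w1_r, w1_r2, w1_s01, w1_s02, w1_s12]
    try first
    | omega
    | (generalize hP : a * b = P at hab ⊢; omega)
  · rw [show univ.filter (fun τ : Perm (Fin 3) => τ 2 = 0) = {τr, Equiv.swap 0 2} from by decide,
      Finset.sum_pair (by decide), L3_02]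
    simp only [w0_e, w0_r, w0_r2, w0_s01, w0_s02, w0_s12, w1_e, w1_r, w1_r2, w1_s01, w1_s02, w1_s12]
    try first
    | omega
    | (generalize hP : a * b = P at hab ⊢; omega)
  · rw [show univ.filter (fun τ : Perm (Fin 3) => τ 0 = 1) = {τr, Equiv.swap 0 1} from by decide,
      Finset.sum_pair (by decide), L3_10]
    simp only [w0_e, w0_r, w0_r2, w0_s01, w0_s02, w0_s12, w1_e, w1_r, w1_r2, w1_s01, w1_s02, w1_s12]
    try first
    | omega
    | (generalize hP : a * b = P at hab ⊢; omega)
  · rw [show univ.filter (fun τ : Perm (Fin 3) => τ 1 = 1) = {1, Equiv.swap 0 2} from by decide,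
      Finset.sum_pair (by decide), L3_11]
    simp only [w0_e, w0_r, w0_r2, w0_s01, w0_s02, w0_s12, w1_e, w1_r, w1_r2, w1_s01, w1_s02, w1_s12]
    try first
    | omega
    | (generalize hP : a * b = P at hab ⊢; omega)
  · rw [show univ.filter (fun τ : Perm (Fin 3) => τ 2 = 1) = {τr2, Equiv.swap 1 2} from by decide,
      Finset.sum_pair (by decide), L3_12]
    simp only [w0_e, w0_r, w0_r2, w0_s01, w0_s02, w0_s12, w1_e, w1_r, w1_r2, w1_s01, w1_s02, w1_s12]
    try first
    | omega
    | (generalize hP : a * b = P at hab ⊢; omega)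
  · rw [show univ.filter (fun τ : Perm (Fin 3) => τ 0 = 2) = {τr2, Equiv.swap 0 2} from by decide,
      Finset.sum_pair (by decide), L3_20]
    simp only [w0_e, w0_r, w0_r2, w0_s01, w0_s02, w0_s12, w1_e, w1_r, w1_r2, w1_s01, w1_s02, w1_s12]
    try first
    | omega
    | (generalize hP : a * b = P at hab ⊢; omega)
  · rw [show univ.filter (fun τ : Perm (Fin 3) => τ 1 = 2) = {τr, Equiv.swap 1 2} from by decide,
      Finset.sum_pair (by decide), L3_21]
    simp only [w0_e, w0_r, w0_r2, w0_s01, w0_s02, w0_s12, w1_e, w1_r, w1_r2, w1_s01, w1_s02, w1_s12]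
    try first
    | omega
    | (generalize hP : a * b = P at hab ⊢; omega)
  · rw [show univ.filter (fun τ : Perm (Fin 3) => τ 2 = 2) = {1, Equiv.swap 0 1} from by decide,
      Finset.sum_pair (by decide), L3_22]
    simp only [w0_e, w0_r, w0_r2, w0_s01, w0_s02, w0_s12, w1_e, w1_r, w1_r2, w1_s01, w1_s02, w1_s12]
    try first
    | omega
    | (generalize hP : a * b = P at hab ⊢; omega)
  · rw [show univ.filter (fun τ : Perm (Fin 3) => τ 0 = 0) = {1, Equiv.swap 1 2} from by decide,
      Finset.sum_pair (by decide), L3_00]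
    simp only [w0_e, w0_r, w0_r2, w0_s01, w0_s02, w0_s12, w1_e, w1_r, w1_r2, w1_s01, w1_s02, w1_s12]
    try first
    | omega
    | (generalize hP : a * b = P at hab ⊢; omega)
  · rw [show univ.filter (fun τ : Perm (Fin 3) => τ 1 = 0) = {τr2, Equiv.swap 0 1} from by decide,
      Finset.sum_pair (by decide), L3_01]
    simp only [w0_e, w0_r, w0_r2, w0_s01, w0_s02, w0_s12, w1_e, w1_r, w1_r2, w1_s01, w1_s02, w1_s12]
    try first
    | omega
    | (generalize hP : a * b = P at hab ⊢; omega)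
  · rw [show univ.filter (fun τ : Perm (Fin 3) => τ 2 = 0) = {τr, Equiv.swap 0 2} from by decide,
      Finset.sum_pair (by decide), L3_02]
    simp only [w0_e, w0_r, w0_r2, w0_s01, w0_s02, w0_s12, w1_e, w1_r, w1_r2, w1_s01, w1_s02, w1_s12]
    try first
    | omega
    | (generalize hP : a * b = P at hab ⊢; omega)
  · rw [show univ.filter (fun τ : Perm (Fin 3) => τ 0 = 1) = {τr, Equiv.swap 0 1} from by decide,
      Finset.sum_pair (by decide), L3_10]
    simp only [w0_e, w0_r, w0_r2, w0_s01, w0_s02, w0_s12, w1_e, w1_r, w1_r2, w1_s01, w1_s02, w1_s12]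
    try first
    | omega
    | (generalize hP : a * b = P at hab ⊢; omega)
  · rw [show univ.filter (fun τ : Perm (Fin 3) => τ 1 = 1) = {1, Equiv.swap 0 2} from by decide,
      Finset.sum_pair (by decide), L3_11]
    simp only [w0_e, w0_r, w0_r2, w0_s01, w0_s02, w0_s12, w1_e, w1_r, w1_r2, w1_s01, w1_s02, w1_s12]
    try first
    | omega
    | (generalize hP : a * b = P at hab ⊢; omega)
  · rw [show univ.filter (fun τ : Perm (Fin 3) => τ 2 = 1) = {τr2, Equiv.swap 1 2} from by decide,
      Finset.sum_pair (by decide), L3_12]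
    simp only [w0_e, w0_r, w0_r2, w0_s01, w0_s02, w0_s12, w1_e, w1_r, w1_r2, w1_s01, w1_s02, w1_s12]
    try first
    | omega
    | (generalize hP : a * b = P at hab ⊢; omega)
  · rw [show univ.filter (fun τ : Perm (Fin 3) => τ 0 = 2) = {τr2, Equiv.swap 0 2} from by decide,
      Finset.sum_pair (by decide), L3_20]
    simp only [w0_e, w0_r, w0_r2, w0_s01, w0_s02, w0_s12, w1_e, w1_r, w1_r2, w1_s01, w1_s02, w1_s12]
    try first
    | omega
    | (generalize hP : a * b = P at hab ⊢; omega)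
  · rw [show univ.filter (fun τ : Perm (Fin 3) => τ 1 = 2) = {τr, Equiv.swap 1 2} from by decide,
      Finset.sum_pair (by decide), L3_21]
    simp only [w0_e, w0_r, w0_r2, w0_s01, w0_s02, w0_s12, w1_e, w1_r, w1_r2, w1_s01, w1_s02, w1_s12]
    try first
    | omega
    | (generalize hP : a * b = P at hab ⊢; omega)
  · rw [show univ.filter (fun τ : Perm (Fin 3) => τ 2 = 2) = {1, Equiv.swap 0 1} from by decide,
      Finset.sum_pair (by decide), L3_22]
    simp only [w0_e, w0_r, w0_r2, w0_s01, w0_s02, w0_s12, w1_e, w1_r, w1_r2, w1_s01, w1_s02, w1_s12]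
    try first
    | omega
    | (generalize hP : a * b = P at hab ⊢; omega)

lemma total_w (a b : ℕ) (ha : 1 ≤ a) (hb : 1 ≤ b) (w : Perm (Fin 3) → ℕ)
    (hw : w = w0 a b ∨ w = w1 a b) :
    ∑ τ : Perm (Fin 3), w τ = a * b + a + b := by
  have hab : 1 ≤ a * b := Nat.one_le_iff_ne_zero.2 (by positivity)
  rcases hw with rfl | rfl <;>
    rw [sum_perm3] <;>
    simp only [w0_e, w0_r, w0_r2, w0_s01, w0_s02, w0_s12,
      w1_e, w1_r, w1_r2, w1_s01, w1_s02, w1_s12] <;>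
    (generalize hP : a * b = P at hab ⊢; omega)

lemma sum_liftw (hn : 3 ≤ n) (w : Perm (Fin 3) → ℕ) :
    ∑ σ : Perm (Fin n), liftw hn w σ = ∑ τ : Perm (Fin 3), w τ := by
  rw [sum_perm_eq hn _ (fun σ h => liftw_of_ne hn w σ h)]
  exact Finset.sum_congr rfl fun τ _ => liftw_EP hn w τ

lemma sum_liftw_ite (hn : 3 ≤ n) (w : Perm (Fin 3) → ℕ) (i j : Fin n) :
    ∑ σ : Perm (Fin n), liftw hn w σ * (if σ j = i then 1 else 0)
      = ∑ τ : Perm (Fin 3), w τ * (if EP hn τ j = i then 1 else 0) := by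
  rw [sum_perm_eq hn _ (fun σ h => by rw [liftw_of_ne hn w σ h, zero_mul])]
  exact Finset.sum_congr rfl fun τ _ => by rw [liftw_EP]

lemma D_liftw (hn : 3 ≤ n) (a b : ℕ) (ha : 1 ≤ a) (hb : 1 ≤ b) (w : Perm (Fin 3) → ℕ)
    (hw : w = w0 a b ∨ w = w1 a b) (i j : Fin n) :
    ∑ σ : Perm (Fin n), liftw hn w σ * (if σ j = i then 1 else 0) = Lmat n a b i j := by
  rw [sum_liftw_ite]
  by_cases hj : (j : ℕ) < 3
  · by_cases hi : (i : ℕ) < 3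
    · have h2 : ∀ τ : Perm (Fin 3), w τ * (if EP hn τ j = i then 1 else 0)
          = if τ ⟨j, hj⟩ = ⟨i, hi⟩ then w τ else 0 := by
        intro τ
        rw [if_congr (ite_cond hn τ j i hj hi) rfl rfl]
        split <;> simp
      rw [Finset.sum_congr rfl fun τ _ => h2 τ, ← Finset.sum_filter]
      rw [show Lmat n a b i j = L3 a b ⟨i, hi⟩ ⟨j, hj⟩ from by
        simp only [Lmat]; rw [dif_pos ⟨hi, hj⟩]]
      exact block_sum_w a b ha hb w hw _ _
    · rw [show Lmat n a b i j = 0 from by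
        simp only [Lmat]
        rw [dif_neg (fun h => hi h.1), if_neg (fun h => by subst h; exact hi hj)]]
      refine Finset.sum_eq_zero fun τ _ => ?_
      rw [if_neg, mul_zero]
      rw [EP_apply_lt hn τ j hj]
      intro h
      have hv := congrArg Fin.val h
      apply hi
      rw [← hv]
      exact (τ ⟨j, hj⟩).isLt
  · have hEP : ∀ τ : Perm (Fin 3), EP hn τ j = j := fun τ => EP_apply_ge hn τ j hj
    by_cases hij : i = j
    · subst hij
      have : ∀ τ : Perm (Fin 3), w τ * (if EP hn τ i = i then 1 else 0) = w τ := by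
        intro τ; rw [hEP τ, if_pos rfl, mul_one]
      rw [Finset.sum_congr rfl fun τ _ => this τ]
      rw [show Lmat n a b i i = a * b + a + b from by
        simp only [Lmat]; rw [dif_neg (fun h => hj h.2)]; simp]
      exact total_w a b ha hb w hw
    · simp only [hEP]
      rw [show Lmat n a b i j = 0 from by
        simp only [Lmat]; rw [dif_neg (fun h => hj h.2), if_neg hij]]
      refine Finset.sum_eq_zero fun τ _ => ?_
      rw [if_neg (fun h => hij h.symm), mul_zero]

/-! ### row and column sums -/

lemma Lmat_block' (a b : ℕ) (i j : Fin n) (hi : (i : ℕ) < 3) (hj : (j : ℕ) < 3) :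
    Lmat n a b i j = L3 a b ⟨i, hi⟩ ⟨j, hj⟩ := by
  simp only [Lmat]; rw [dif_pos ⟨hi, hj⟩]

lemma Lmat_entry (a b : ℕ) (hn : 3 ≤ n) (i : Fin n) (hi : (i : ℕ) < 3) (k : Fin 3) :
    Lmat n a b i ⟨k, by omega⟩ = L3 a b ⟨i, hi⟩ k := by
  rw [Lmat_block' a b i ⟨k, by omega⟩ hi (by simpa using k.isLt)]

lemma L3_row (a b : ℕ) (ha : 1 ≤ a) (hb : 1 ≤ b) (i : Fin 3) :
    L3 a b i 0 + (L3 a b i 1 + L3 a b i 2) = a * b + a + b := by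
  have hab : 1 ≤ a * b := Nat.one_le_iff_ne_zero.2 (by positivity)
  rcases (by decide : ∀ k : Fin 3, k = 0 ∨ k = 1 ∨ k = 2) i with rfl | rfl | rfl <;>
    simp only [L3_00, L3_01, L3_02, L3_10, L3_11, L3_12, L3_20, L3_21, L3_22] <;>
    (try first
    | omega
    | (generalize hP : a * b = P at hab ⊢; omega))

lemma row_sum (hn : 3 ≤ n) (a b : ℕ) (ha : 1 ≤ a) (hb : 1 ≤ b) (i : Fin n) :
    ∑ j, Lmat n a b i j = a * b + a + b := by
  by_cases hi : (i : ℕ) < 3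
  · have hsub : ({⟨(0 : Fin 3), by omega⟩, ⟨(1 : Fin 3), by omega⟩, ⟨(2 : Fin 3), by omega⟩} :
        Finset (Fin n)) ⊆ univ := Finset.subset_univ _
    rw [← Finset.sum_subset hsub (fun j _ hj => ?_)]
    · rw [Finset.sum_insert (by simp [Fin.ext_iff]), Finset.sum_pair (by simp [Fin.ext_iff])]
      rw [Lmat_entry a b hn i hi 0, Lmat_entry a b hn i hi 1, Lmat_entry a b hn i hi 2]
      exact L3_row a b ha hb _
    · have hj3 : ¬ (j : ℕ) < 3 := by
        simp only [Finset.mem_insert, Finset.mem_singleton, Fin.ext_iff,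
          show ((0 : Fin 3) : ℕ) = 0 from rfl, show ((1 : Fin 3) : ℕ) = 1 from rfl,
          show ((2 : Fin 3) : ℕ) = 2 from rfl] at hj
        push_neg at hj
        omega
      simp only [Lmat]
      rw [dif_neg (fun h => hj3 h.2), if_neg (fun h => by subst h; exact hj3 hi)]
  · rw [Finset.sum_eq_single i]
    · simp only [Lmat]
      rw [dif_neg (fun h => hi h.1)]
      simp
    · intro j _ hj
      simp only [Lmat]
      rw [dif_neg (fun h => hi h.1), if_neg (fun h => hj (h.symm))]
    · intro h; exact absurd (mem_univ i) h

lemma L3_symm (a b : ℕ) (i j : Fin 3) : L3 a b i j = L3 a b j i := by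
  rcases (by decide : ∀ k : Fin 3, k = 0 ∨ k = 1 ∨ k = 2) i with rfl | rfl | rfl <;>
    rcases (by decide : ∀ k : Fin 3, k = 0 ∨ k = 1 ∨ k = 2) j with rfl | rfl | rfl <;> rfl

lemma Lmat_symm (a b : ℕ) (i j : Fin n) : Lmat n a b i j = Lmat n a b j i := by
  by_cases h : (i : ℕ) < 3 ∧ (j : ℕ) < 3
  · simp only [Lmat]
    rw [dif_pos h, dif_pos ⟨h.2, h.1⟩]
    exact L3_symm a b _ _
  · simp only [Lmat]
    rw [dif_neg h, dif_neg (fun hh => h ⟨hh.2, hh.1⟩)]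
    by_cases hij : i = j
    · rw [if_pos hij, if_pos hij.symm]
    · rw [if_neg hij, if_neg (fun hh => hij hh.symm)]

/-! ### the monomial attached to a permutation -/

noncomputable def Pmono (σ : Perm (Fin n)) : (Fin n × Fin n) →₀ ℕ :=
  ∑ i : Fin n, Finsupp.single (σ i, i) 1

lemma Pmono_apply (σ : Perm (Fin n)) (p : Fin n × Fin n) :
    Pmono σ p = if σ p.2 = p.1 then 1 else 0 := by
  rw [Pmono, Finset.sum_apply']
  rw [Finset.sum_eq_single p.2]
  · simp [Finsupp.single_apply, Prod.ext_iff]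
  · intro k _ hk
    rw [Finsupp.single_apply, if_neg]
    exact fun h => hk (congrArg Prod.snd h)
  · intro h; exact absurd (mem_univ _) h

lemma prod_X_eq {ι σty : Type*} (s : Finset ι) (g : ι → σty) :
    (∏ i ∈ s, (X (g i) : MvPolynomial σty ℤ)) = monomial (∑ i ∈ s, Finsupp.single (g i) 1) 1 := by
  induction s using Finset.cons_induction with
  | empty => simp
  | cons x s hx ih =>
    rw [Finset.prod_cons, Finset.sum_cons, ih, ← pow_one (X (g x) : MvPolynomial σty ℤ),
      X_pow_eq_monomial, monomial_mul, one_mul]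

lemma prod_monomial {ι σty : Type*} (s : Finset ι) (d : ι → (σty →₀ ℕ)) (r : ι → ℤ) :
    ∏ i ∈ s, (monomial (d i) (r i) : MvPolynomial σty ℤ)
      = monomial (∑ i ∈ s, d i) (∏ i ∈ s, r i) := by
  induction s using Finset.cons_induction with
  | empty => simp
  | cons x s hx ih =>
    rw [Finset.prod_cons, Finset.sum_cons, Finset.prod_cons, ih, monomial_mul]

lemma det_expand (n : ℕ) :
    (Matrix.of fun i j : Fin n => (X (i, j) : MvPolynomial (Fin n × Fin n) ℤ)).det
      = ∑ σ : Perm (Fin n), monomial (Pmono σ) ((Equiv.Perm.sign σ : ℤ)) := by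
  rw [Matrix.det_apply']
  refine Finset.sum_congr rfl fun σ _ => ?_
  have h1 : ∏ i : Fin n,
      (Matrix.of fun i j : Fin n => (X (i, j) : MvPolynomial (Fin n × Fin n) ℤ)) (σ i) i
      = monomial (Pmono σ) 1 := by
    rw [Pmono, ← prod_X_eq univ (fun i => (σ i, i))]
    exact Finset.prod_congr rfl fun i _ => by rw [Matrix.of_apply]
  rw [h1, ← map_intCast (C : ℤ →+* MvPolynomial (Fin n × Fin n) ℤ), C_mul_monomial, mul_one, Int.cast_id]

/-! ### sign products and multinomial coefficients -/

lemma sg0 (hn : 3 ≤ n) (a b : ℕ) :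
    ∏ σ : Perm (Fin n), ((Equiv.Perm.sign σ : ℤ)) ^ (liftw hn (w0 a b) σ)
      = (-1) ^ ((a - 1) + (b - 1)) := by
  rw [prod_perm_eq hn _ (fun σ h => by rw [liftw_of_ne hn _ σ h, pow_zero])]
  rw [prod_perm3]
  simp only [liftw_EP, w0_e, w0_r, w0_r2, w0_s01, w0_s02, w0_s12, EP_sign]
  rw [show Equiv.Perm.sign (1 : Perm (Fin 3)) = 1 from by decide,
    show Equiv.Perm.sign τr = 1 from by decide,
    show Equiv.Perm.sign τr2 = 1 from by decide,
    show Equiv.Perm.sign (Equiv.swap (0 : Fin 3) 1) = -1 from by decide,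
    show Equiv.Perm.sign (Equiv.swap (0 : Fin 3) 2) = -1 from by decide,
    show Equiv.Perm.sign (Equiv.swap (1 : Fin 3) 2) = -1 from by decide]
  simp [pow_add]

lemma sg1 (hn : 3 ≤ n) (a b : ℕ) :
    ∏ σ : Perm (Fin n), ((Equiv.Perm.sign σ : ℤ)) ^ (liftw hn (w1 a b) σ)
      = (-1) ^ (a + 1 + b) := by
  rw [prod_perm_eq hn _ (fun σ h => by rw [liftw_of_ne hn _ σ h, pow_zero])]
  rw [prod_perm3]
  simp only [liftw_EP, w1_e, w1_r, w1_r2, w1_s01, w1_s02, w1_s12, EP_sign]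
  rw [show Equiv.Perm.sign (1 : Perm (Fin 3)) = 1 from by decide,
    show Equiv.Perm.sign τr = 1 from by decide,
    show Equiv.Perm.sign τr2 = 1 from by decide,
    show Equiv.Perm.sign (Equiv.swap (0 : Fin 3) 1) = -1 from by decide,
    show Equiv.Perm.sign (Equiv.swap (0 : Fin 3) 2) = -1 from by decide,
    show Equiv.Perm.sign (Equiv.swap (1 : Fin 3) 2) = -1 from by decide]
  simp [pow_add]
  try ring

lemma mult_eq (hn : 3 ≤ n) (a b : ℕ) (ha : 1 ≤ a) (hb : 1 ≤ b) :
    Nat.multinomial univ (liftw hn (w0 a b)) = Nat.multinomial univ (liftw hn (w1 a b)) := by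
  have h0 := Nat.multinomial_spec univ (liftw hn (w0 a b))
  have h1 := Nat.multinomial_spec univ (liftw hn (w1 a b))
  have hs0 : ∑ σ : Perm (Fin n), liftw hn (w0 a b) σ = a * b + a + b := by
    rw [sum_liftw]; exact total_w a b ha hb _ (Or.inl rfl)
  have hs1 : ∑ σ : Perm (Fin n), liftw hn (w1 a b) σ = a * b + a + b := by
    rw [sum_liftw]; exact total_w a b ha hb _ (Or.inr rfl)
  have hp0 : ∏ σ : Perm (Fin n), (liftw hn (w0 a b) σ)! = (a * b)! * ((a - 1)! * (b - 1)!) := by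
    rw [prod_perm_eq hn _ (fun σ h => by rw [liftw_of_ne hn _ σ h, Nat.factorial_zero])]
    rw [prod_perm3]
    simp only [liftw_EP, w0_e, w0_r, w0_r2, w0_s01, w0_s02, w0_s12,
      Nat.factorial_one, Nat.factorial_zero, one_mul, mul_one]
  have hp1 : ∏ σ : Perm (Fin n), (liftw hn (w1 a b) σ)! = (a * b - 1)! * (a ! * b !) := by
    rw [prod_perm_eq hn _ (fun σ h => by rw [liftw_of_ne hn _ σ h, Nat.factorial_zero])]
    rw [prod_perm3]
    simp only [liftw_EP, w1_e, w1_r, w1_r2, w1_s01, w1_s02, w1_s12,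
      Nat.factorial_one, Nat.factorial_zero, one_mul, mul_one]
  rw [hs0, hp0] at h0
  rw [hs1, hp1] at h1
  have hfe : (a * b)! * ((a - 1)! * (b - 1)!) = (a * b - 1)! * (a ! * b !) := by
    obtain ⟨a', rfl⟩ : ∃ a', a = a' + 1 := ⟨a - 1, by omega⟩
    obtain ⟨b', rfl⟩ : ∃ b', b = b' + 1 := ⟨b - 1, by omega⟩
    obtain ⟨k, hk⟩ : ∃ k, (a' + 1) * (b' + 1) = k + 1 :=
      ⟨(a' + 1) * (b' + 1) - 1, by
        have : 1 ≤ (a' + 1) * (b' + 1) := Nat.one_le_iff_ne_zero.2 (by positivity)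
        omega⟩
    rw [hk]
    simp only [Nat.add_sub_cancel, Nat.factorial_succ]
    rw [← hk]
    ring
  rw [hfe] at h0
  have hpos : 0 < (a * b - 1)! * (a ! * b !) :=
    Nat.mul_pos (Nat.factorial_pos _) (Nat.mul_pos (Nat.factorial_pos _) (Nat.factorial_pos _))
  exact Nat.eq_of_mul_eq_mul_left hpos (h0.trans h1.symm)

/-! ### degree computations -/

lemma deg_liftw (hn : 3 ≤ n) (a b : ℕ) (ha : 1 ≤ a) (hb : 1 ≤ b) (w : Perm (Fin 3) → ℕ)
    (hw : w = w0 a b ∨ w = w1 a b) :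
    ∑ σ : Perm (Fin n), liftw hn w σ • Pmono σ
      = Finsupp.equivFunOnFinite.symm (fun p : Fin n × Fin n => Lmat n a b p.1 p.2) := by
  ext p
  rw [Finset.sum_apply']
  have h1 : ∀ σ : Perm (Fin n), (liftw hn w σ • Pmono σ) p
      = liftw hn w σ * (if σ p.2 = p.1 then 1 else 0) := by
    intro σ
    rw [Finsupp.smul_apply, Pmono_apply, smul_eq_mul]
  rw [Finset.sum_congr rfl fun σ _ => h1 σ, D_liftw hn a b ha hb w hw p.1 p.2]
  simp

/-! ### the coefficient vanishes -/

lemma coeff_zero_aux (hn : 3 ≤ n) (a b : ℕ) (ha : 1 ≤ a) (hb : 1 ≤ b) :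
    MvPolynomial.coeff
      (Finsupp.equivFunOnFinite.symm fun p : Fin n × Fin n => Lmat n a b p.1 p.2)
      ((Matrix.det (Matrix.of fun i j : Fin n =>
        (MvPolynomial.X (i, j) : MvPolynomial (Fin n × Fin n) ℤ))) ^ (a * b + a + b)) = 0 := by
  rw [det_expand n, Finset.sum_pow_eq_sum_piAntidiag, MvPolynomial.coeff_sum]
  have hterm : ∀ c : Perm (Fin n) → ℕ,
      coeff (Finsupp.equivFunOnFinite.symm fun p : Fin n × Fin n => Lmat n a b p.1 p.2)
        ((Nat.multinomial univ c : MvPolynomial (Fin n × Fin n) ℤ) *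
          ∏ σ : Perm (Fin n), (monomial (Pmono σ) ((Equiv.Perm.sign σ : ℤ))) ^ (c σ))
      = (Nat.multinomial univ c : ℤ) *
        (if (∑ σ : Perm (Fin n), c σ • Pmono σ)
            = Finsupp.equivFunOnFinite.symm fun p : Fin n × Fin n => Lmat n a b p.1 p.2 then
          (∏ σ : Perm (Fin n), ((Equiv.Perm.sign σ : ℤ)) ^ (c σ)) else 0) := by
    intro c
    rw [show (∏ σ : Perm (Fin n),
          ((monomial (Pmono σ) ((Equiv.Perm.sign σ : ℤ)) : MvPolynomial (Fin n × Fin n) ℤ)) ^ (c σ))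
        = monomial (∑ σ : Perm (Fin n), c σ • Pmono σ)
            (∏ σ : Perm (Fin n), ((Equiv.Perm.sign σ : ℤ)) ^ (c σ)) from by
      rw [← prod_monomial]
      exact Finset.prod_congr rfl fun σ _ => monomial_pow]
    rw [show ((Nat.multinomial univ c : ℕ) : MvPolynomial (Fin n × Fin n) ℤ)
        = C ((Nat.multinomial univ c : ℤ)) from by
      rw [map_natCast (C : ℤ →+* MvPolynomial (Fin n × Fin n) ℤ)]]
    rw [coeff_C_mul, coeff_monomial]
  rw [Finset.sum_congr rfl fun c _ => hterm c]
  have hsub : ({liftw hn (w0 a b), liftw hn (w1 a b)} : Finset (Perm (Fin n) → ℕ))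
      ⊆ piAntidiag univ (a * b + a + b) := by
    intro c hc
    rw [Finset.mem_insert, Finset.mem_singleton] at hc
    rw [Finset.mem_piAntidiag]
    rcases hc with rfl | rfl
    · exact ⟨by rw [sum_liftw]; exact total_w a b ha hb _ (Or.inl rfl), fun i _ => mem_univ i⟩
    · exact ⟨by rw [sum_liftw]; exact total_w a b ha hb _ (Or.inr rfl), fun i _ => mem_univ i⟩
  rw [← Finset.sum_subset hsub (fun c _ hcn => ?_)]
  · have hne : liftw hn (w0 a b) ≠ liftw hn (w1 a b) := by
      intro h
      have h2 := congrFun h (EP hn τr)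
      rw [liftw_EP, liftw_EP, w0_r, w1_r] at h2
      exact one_ne_zero h2
    rw [Finset.sum_pair hne]
    rw [if_pos (deg_liftw hn a b ha hb _ (Or.inl rfl)), if_pos (deg_liftw hn a b ha hb _ (Or.inr rfl))]
    rw [sg0 hn a b, sg1 hn a b, mult_eq hn a b ha hb]
    obtain ⟨a', rfl⟩ : ∃ a', a = a' + 1 := ⟨a - 1, by omega⟩
    obtain ⟨b', rfl⟩ : ∃ b', b = b' + 1 := ⟨b - 1, by omega⟩
    simp only [Nat.add_sub_cancel]
    rw [show a' + 1 + 1 + (b' + 1) = (a' + b') + 3 from by ring, pow_add]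
    ring
  · by_cases hdc : (∑ σ : Perm (Fin n), c σ • Pmono σ)
        = Finsupp.equivFunOnFinite.symm fun p : Fin n × Fin n => Lmat n a b p.1 p.2
    · exfalso
      have hDij : ∀ i j : Fin n,
          ∑ σ : Perm (Fin n), c σ * (if σ j = i then 1 else 0) = Lmat n a b i j := by
        intro i j
        have h2 := DFunLike.congr_fun hdc (i, j)
        rw [Finset.sum_apply'] at h2
        have h3 : ∀ σ : Perm (Fin n), (c σ • Pmono σ) (i, j)
            = c σ * (if σ j = i then 1 else 0) := by
          intro σ
          rw [Finsupp.smul_apply, Pmono_apply, smul_eq_mul]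
        rw [Finset.sum_congr rfl fun σ _ => h3 σ] at h2
        simpa using h2
      rcases uniq hn a b ha hb c hDij with rfl | rfl
      · exact hcn (Finset.mem_insert_self _ _)
      · exact hcn (Finset.mem_insert_of_mem (Finset.mem_singleton_self _))
    · rw [if_neg hdc, mul_zero]


theorem Lmat_mem_Psi_and_coeff_zero (n a b : ℕ) (hn : 3 ≤ n) (ha : 1 ≤ a) (hb : 1 ≤ b)
    (m : ℕ) (hm : m = (a + 1) * (b + 1) - 1) :
    (∀ i, ∑ j, Lmat n a b i j = m) ∧ (∀ j, ∑ i, Lmat n a b i j = m) ∧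
      coeffC n m (Lmat n a b) = 0 := by
  have hm' : m = a * b + a + b := by
    have h : (a + 1) * (b + 1) = a * b + a + b + 1 := by ring
    omega
  subst hm'
  refine ⟨fun i => row_sum hn a b ha hb i, fun j => ?_, ?_⟩
  · rw [Finset.sum_congr rfl fun i _ => Lmat_symm a b i j]
    exact row_sum hn a b ha hb j
  · simp only [coeffC]
    exact coeff_zero_aux hn a b ha hb
end
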